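/- arXiv:2507.20501 — 5 statements merged into one kernel-verified Lean document; each statement's English description precedes it below -/
import Mathlib

section
/- Let a > 0, θ > 0, and let R_θ(x) = a²/(2x) − a²θ/(4x²) be the linear-demand pricing surrogate reward. Then for every δ with 0 < δ < θ, R_θ(θ + δ) − R_θ(θ − δ) = a²·δ³/(θ² − δ²)². In particular R_θ(θ − δ) < R_θ(θ + δ): underestimating the price-sensitivity parameter by δ yields a strictly larger revenue loss than overestimating it by δ. -/
open Real

/-- asymmetry of the linear-demand surrogate reward: for 0 < δ < θ,
`R_θ(θ+δ) − R_θ(θ−δ) = a²δ³/(θ²−δ²)²`, so underestimation is worse than overestimation. -/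
theorem stmt_8 (a θ : ℝ) (ha : 0 < a) (hθ : 0 < θ)
    (R : ℝ → ℝ) (hR : ∀ x : ℝ, R x = a ^ 2 / (2 * x) - a ^ 2 * θ / (4 * x ^ 2)) :
    ∀ δ : ℝ, 0 < δ → δ < θ →
      R (θ + δ) - R (θ - δ) = a ^ 2 * δ ^ 3 / (θ ^ 2 - δ ^ 2) ^ 2 ∧
      R (θ - δ) < R (θ + δ) := by
  intro δ hδ hδθ
  have h1 : θ + δ ≠ 0 := by nlinarith
  have h2 : θ - δ ≠ 0 := by nlinarith
  have h3 : θ ^ 2 - δ ^ 2 ≠ 0 := by nlinarith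
  have key : R (θ + δ) - R (θ - δ) = a ^ 2 * δ ^ 3 / (θ ^ 2 - δ ^ 2) ^ 2 := by
    rw [hR, hR]
    field_simp
    ring
  refine ⟨key, ?_⟩
  have hpos : 0 < a ^ 2 * δ ^ 3 / (θ ^ 2 - δ ^ 2) ^ 2 := by
    apply div_pos (by positivity)
    have : θ ^ 2 - δ ^ 2 > 0 := by nlinarith
    positivity
  linarith
end

section
/- (Oracle adjustment, single parameter.) Let θ ≠ 0 and let (θ̂_n) be a sequence of real-valued random variables on a probability space satisfying: (A1.1) lim_{n→∞} n·E[(θ̂_n − θ)²] = σ² for some constant σ² > 0; (A1.2) E[θ̂_n − θ] = o(n⁻¹); (A1.3) E[|θ̂_n − θ|^k] = O(n^{−k/2}) for every integer k ≥ 3. Let R_θ : ℝ → ℝ be five times differentiable and satisfy: (A2.1) R_θ'(θ) = 0 and R_θ''(θ) < 0; (A2.2) R_θ'''(θ)/R_θ''(θ) = C/θ for a constant C; (A2.3) there exists M > 0 with |R_θ^{(5)}(x)| ≤ M for all x ∈ ℝ. Define λ* = −(C + 2)·σ²/(2θ²). Then lim_{n→∞} n²·( E[R_θ(θ̂_n·(1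 + λ*/n))] − E[R_θ(θ̂_n)] ) = −R_θ''(θ)·(C + 2)²·σ⁴/(8θ²), and this limit is nonnegative. -/
open MeasureTheory Filter Asymptotics Real

section helpers
/-- If `h θ = 0` and `|h'| ≤ K|x-θ|^j`, then `|h x| ≤ K/(j+1) |x-θ|^(j+1)`, right of θ. -/
lemma aux_right {h : ℝ → ℝ} {θ K : ℝ} {j : ℕ} (hd : Differentiable ℝ h)
    (h0 : h θ = 0) (hK : 0 ≤ K)
    (hb : ∀ x, |deriv h x| ≤ K * |x - θ| ^ j) :
    ∀ x, θ ≤ x → |h x| ≤ K / (j + 1) * (x - θ) ^ (j + 1) := by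
  intro x hx
  have key : ∀ s : ℝ, s = 1 ∨ s = -1 →
      s * h x ≤ K / (j + 1) * (x - θ) ^ (j + 1) := by
    intro s hs
    set u : ℝ → ℝ := fun t => K / (j + 1) * (t - θ) ^ (j + 1) - s * h t with hu
    have hud : Differentiable ℝ u := by
      apply Differentiable.sub
      · exact (differentiable_id.sub_const θ).pow _ |>.const_mul _
      · exact hd.const_mul s
    have hderiv : ∀ t, deriv u t = K * (t - θ) ^ j - s * deriv h t := by
      intro t
      have h1 : HasDerivAt (fun t : ℝ => K / (j + 1) * (t - θ) ^ (j + 1))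
          (K / (j + 1) * ((j + 1) * (t - θ) ^ j)) t := by
        have := ((hasDerivAt_pow (j + 1) (t - θ)).comp t
          ((hasDerivAt_id t).sub_const θ))
        simpa using this.const_mul (K / (j + 1))
      have h2 : HasDerivAt (fun t => s * h t) (s * deriv h t) t :=
        ((hd t).hasDerivAt).const_mul s
      have := (h1.sub h2).deriv
      rw [show deriv u t = _ from this]
      have hj : ((j : ℝ) + 1) ≠ 0 := by positivity
      field_simp
    have hmono : MonotoneOn u (Set.Icc θ x) := by
      apply monotoneOn_of_deriv_nonneg (convex_Icc θ x) hud.continuous.continuousOn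
        (hud.differentiableOn.mono interior_subset)
      intro t ht
      rw [interior_Icc] at ht
      rw [hderiv]
      have h1 : s * deriv h t ≤ |deriv h t| := by
        rcases hs with rfl | rfl
        · simpa using le_abs_self _
        · simpa using neg_le_abs (deriv h t)
      have h2 : |deriv h t| ≤ K * (t - θ) ^ j := by
        have := hb t
        rwa [abs_of_nonneg (by linarith [ht.1] : (0:ℝ) ≤ t - θ)] at this
      linarith
    have := hmono (Set.left_mem_Icc.2 hx) (Set.right_mem_Icc.2 hx) hx
    simp only [hu, h0, mul_zero, sub_zero, sub_self] at this
    simp only [zero_pow (Nat.succ_ne_zero j), mul_zero] at this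
    linarith
  have k1 := key 1 (Or.inl rfl)
  have k2 := key (-1) (Or.inr rfl)
  rcases abs_cases (h x) with ⟨he, _⟩ | ⟨he, _⟩ <;> rw [he] <;> linarith

lemma aux_bound {h : ℝ → ℝ} {θ K : ℝ} {j : ℕ} (hd : Differentiable ℝ h)
    (h0 : h θ = 0) (hK : 0 ≤ K)
    (hb : ∀ x, |deriv h x| ≤ K * |x - θ| ^ j) :
    ∀ x, |h x| ≤ K / (j + 1) * |x - θ| ^ (j + 1) := by
  intro x
  rcases le_total θ x with hx | hx
  · rw [abs_of_nonneg (by linarith : (0:ℝ) ≤ x - θ)]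
    exact aux_right hd h0 hK hb x hx
  · set g : ℝ → ℝ := fun t => h (2 * θ - t) with hg
    have hgd : Differentiable ℝ g := hd.comp ((differentiable_const _).sub differentiable_id)
    have hg0 : g θ = 0 := by simp [hg, show 2 * θ - θ = θ by ring, h0]
    have hgb : ∀ t, |deriv g t| ≤ K * |t - θ| ^ j := by
      intro t
      have : deriv g t = -deriv h (2 * θ - t) := by
        simpa using deriv_comp_const_sub h (2 * θ) t
      rw [this, abs_neg]
      calc |deriv h (2 * θ - t)| ≤ K * |2 * θ - t - θ| ^ j := hb _
        _ = K * |t - θ| ^ j := by rw [show 2 * θ - t - θ = -(t - θ) by ring, abs_neg]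
    have := aux_right hgd hg0 hK hgb (2 * θ - x) (by linarith)
    have hx1 : g (2 * θ - x) = h x := by simp [hg, show 2 * θ - (2 * θ - x) = x by ring]
    rw [hx1] at this
    calc |h x| ≤ K / (j + 1) * (2 * θ - x - θ) ^ (j + 1) := this
      _ = K / (j + 1) * |x - θ| ^ (j + 1) := by
          rw [abs_of_nonpos (by linarith : x - θ ≤ 0)]; ring_nf

lemma taylor5 {R : ℝ → ℝ} {θ M : ℝ}
    (hdiff : ∀ k < 5, Differentiable ℝ (iteratedDeriv k R))
    (hM : 0 ≤ M) (hA23 : ∀ x : ℝ, |iteratedDeriv 5 R x| ≤ M) :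
    ∀ x : ℝ, |R x - (R θ + deriv R θ * (x - θ) + iteratedDeriv 2 R θ / 2 * (x - θ)^2
      + iteratedDeriv 3 R θ / 6 * (x - θ)^3 + iteratedDeriv 4 R θ / 24 * (x - θ)^4)|
      ≤ M / 120 * |x - θ|^5 := by
  set d1 := deriv R θ
  set d2 := iteratedDeriv 2 R θ
  set d3 := iteratedDeriv 3 R θ
  set d4 := iteratedDeriv 4 R θ
  have hpow : ∀ (m : ℕ) (x : ℝ), HasDerivAt (fun y : ℝ => (y - θ) ^ m)
      (m * (x - θ) ^ (m - 1)) x := by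
    intro m x
    simpa [Function.comp_def] using (hasDerivAt_pow m (x - θ)).comp x ((hasDerivAt_id x).sub_const θ)
  have hIR : ∀ k, k < 5 → ∀ x : ℝ, HasDerivAt (iteratedDeriv k R)
      (iteratedDeriv (k + 1) R x) x := by
    intro k hk x
    have h := ((hdiff k hk) x).hasDerivAt
    rwa [show iteratedDeriv (k + 1) R x = deriv (iteratedDeriv k R) x by
      rw [iteratedDeriv_succ]]
  -- level 4
  set h4 : ℝ → ℝ := fun x => iteratedDeriv 4 R x - d4 with hh4
  have hd4 : Differentiable ℝ h4 := (hdiff 4 (by norm_num)).sub_const _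
  have hD4 : ∀ x, deriv h4 x = iteratedDeriv 5 R x := by
    intro x
    have := ((hIR 4 (by norm_num) x).sub_const d4).deriv
    simpa [hh4] using this
  have b4 : ∀ x, |h4 x| ≤ M * |x - θ| ^ 1 := by
    have := aux_bound (θ := θ) (K := M) (j := 0) hd4 (by simp [hh4, d4]) hM
      (fun x => by rw [hD4]; simpa using hA23 x)
    intro x; have h := this x; norm_num at h ⊢; exact h
  -- level 3
  set h3 : ℝ → ℝ := fun x => iteratedDeriv 3 R x - (d3 + d4 * (x - θ)) with hh3
  have H3 : ∀ x, HasDerivAt h3 (h4 x) x := by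
    intro x
    have hp : HasDerivAt (fun y : ℝ => d3 + d4 * (y - θ)) d4 x := by
      simpa using (((hasDerivAt_id x).sub_const θ).const_mul d4).const_add d3
    exact (hIR 3 (by norm_num) x).sub hp
  have hd3 : Differentiable ℝ h3 := fun x => (H3 x).differentiableAt
  have b3 : ∀ x, |h3 x| ≤ M / 2 * |x - θ| ^ 2 := by
    have := aux_bound (θ := θ) (K := M) (j := 1) hd3 (by simp [hh3, d3]) hM
      (fun x => by rw [(H3 x).deriv]; exact b4 x)
    intro x; have h := this x; norm_num at h ⊢; linarith
  -- level 2
  set h2 : ℝ → ℝ := fun x => iteratedDeriv 2 R x - (d2 + d3 * (x - θ) + d4 / 2 * (x - θ)^2)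
    with hh2
  have H2 : ∀ x, HasDerivAt h2 (h3 x) x := by
    intro x
    have hp : HasDerivAt (fun y : ℝ => d2 + d3 * (y - θ) + d4 / 2 * (y - θ)^2)
        (d3 + d4 * (x - θ)) x := by
      have a := (((hasDerivAt_id x).sub_const θ).const_mul d3).const_add d2
      have b := (hpow 2 x).const_mul (d4 / 2)
      have := a.add b
      refine this.congr_deriv ?_
      simp; ring
    exact (hIR 2 (by norm_num) x).sub hp
  have hd2 : Differentiable ℝ h2 := fun x => (H2 x).differentiableAt
  have b2 : ∀ x, |h2 x| ≤ M / 6 * |x - θ| ^ 3 := by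
    have := aux_bound (θ := θ) (K := M / 2) (j := 2) hd2 (by simp [hh2, d2]) (by linarith)
      (fun x => by rw [(H2 x).deriv]; exact b3 x)
    intro x; have h := this x; norm_num at h ⊢; linarith
  -- level 1
  set h1 : ℝ → ℝ := fun x => deriv R x -
      (d1 + d2 * (x - θ) + d3 / 2 * (x - θ)^2 + d4 / 6 * (x - θ)^3) with hh1
  have H1 : ∀ x, HasDerivAt h1 (h2 x) x := by
    intro x
    have hp : HasDerivAt (fun y : ℝ => d1 + d2 * (y - θ) + d3 / 2 * (y - θ)^2
        + d4 / 6 * (y - θ)^3) (d2 + d3 * (x - θ) + d4 / 2 * (x - θ)^2) x := by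
      have a := (((hasDerivAt_id x).sub_const θ).const_mul d2).const_add d1
      have b := (hpow 2 x).const_mul (d3 / 2)
      have c := (hpow 3 x).const_mul (d4 / 6)
      have := (a.add b).add c
      refine this.congr_deriv ?_
      simp; ring
    have hR1 : HasDerivAt (deriv R) (iteratedDeriv 2 R x) x := by
      have := hIR 1 (by norm_num) x
      rwa [iteratedDeriv_one] at this
    exact hR1.sub hp
  have hd1 : Differentiable ℝ h1 := fun x => (H1 x).differentiableAt
  have b1 : ∀ x, |h1 x| ≤ M / 24 * |x - θ| ^ 4 := by
    have := aux_bound (θ := θ) (K := M / 6) (j := 3) hd1 (by simp [hh1, d1]) (by linarith)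
      (fun x => by rw [(H1 x).deriv]; exact b2 x)
    intro x; have h := this x; norm_num at h ⊢; linarith
  -- level 0
  set h0 : ℝ → ℝ := fun x => R x - (R θ + d1 * (x - θ) + d2 / 2 * (x - θ)^2
      + d3 / 6 * (x - θ)^3 + d4 / 24 * (x - θ)^4) with hh0
  have H0 : ∀ x, HasDerivAt h0 (h1 x) x := by
    intro x
    have hp : HasDerivAt (fun y : ℝ => R θ + d1 * (y - θ) + d2 / 2 * (y - θ)^2
        + d3 / 6 * (y - θ)^3 + d4 / 24 * (y - θ)^4)
        (d1 + d2 * (x - θ) + d3 / 2 * (x - θ)^2 + d4 / 6 * (x - θ)^3) x := by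
      have a := (((hasDerivAt_id x).sub_const θ).const_mul d1).const_add (R θ)
      have b := (hpow 2 x).const_mul (d2 / 2)
      have c := (hpow 3 x).const_mul (d3 / 6)
      have d := (hpow 4 x).const_mul (d4 / 24)
      have := ((a.add b).add c).add d
      refine this.congr_deriv ?_
      simp; ring
    have hR0 : HasDerivAt R (deriv R x) x := by
      have h := hdiff 0 (by norm_num)
      rw [iteratedDeriv_zero] at h
      exact (h x).hasDerivAt
    exact hR0.sub hp
  have hd0 : Differentiable ℝ h0 := fun x => (H0 x).differentiableAt
  have b0 : ∀ x, |h0 x| ≤ M / 120 * |x - θ| ^ 5 := by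
    have := aux_bound (θ := θ) (K := M / 24) (j := 4) hd0 (by simp [hh0]) (by linarith)
      (fun x => by rw [(H0 x).deriv]; exact b1 x)
    intro x; have h := this x; norm_num at h ⊢; linarith
  exact b0

lemma pow5_split (u v : ℝ) (hu : 0 ≤ u) (hv : 0 ≤ v) : (u + v)^5 ≤ 32 * (u^5 + v^5) := by
  have h1 : u + v ≤ 2 * max u v := by
    rcases le_total u v with h | h
    · simp [max_eq_right h]; linarith
    · simp [max_eq_left h]; linarith
  have h2 : (u + v)^5 ≤ (2 * max u v)^5 :=
    pow_le_pow_left₀ (by positivity) h1 5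
  have h3 : (max u v)^5 ≤ u^5 + v^5 := by
    rcases le_total u v with h | h
    · rw [max_eq_right h]; nlinarith [pow_nonneg hu 5]
    · rw [max_eq_left h]; nlinarith [pow_nonneg hv 5]
  calc (u+v)^5 ≤ (2 * max u v)^5 := h2
    _ = 32 * (max u v)^5 := by ring
    _ ≤ 32 * (u^5 + v^5) := by linarith

lemma bigO_helper {f : ℕ → ℝ} {r : ℝ} (h : f =O[atTop] fun n : ℕ => (n:ℝ)^r)
    (s : ℝ) (hs : s + r < 0) :
    Tendsto (fun n : ℕ => (n:ℝ)^s * f n) atTop (nhds 0) := by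
  have h2 : (fun n : ℕ => (n:ℝ)^s * f n) =O[atTop]
      fun n : ℕ => (n:ℝ)^s * (n:ℝ)^r := (isBigO_refl (fun n : ℕ => (n:ℝ)^s) _).mul h
  have h3 : (fun n : ℕ => (n:ℝ)^s * (n:ℝ)^r) =ᶠ[atTop] fun n : ℕ => (n:ℝ)^(s + r) := by
    filter_upwards [eventually_gt_atTop 0] with n hn
    rw [← Real.rpow_add (by positivity : (0:ℝ) < (n:ℝ))]
  have h4 : Tendsto (fun n : ℕ => (n:ℝ)^(s + r)) atTop (nhds 0) := by
    have := (tendsto_rpow_neg_atTop (by linarith : 0 < -(s + r))).comp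
      (tendsto_natCast_atTop_atTop (R := ℝ))
    simpa [Function.comp_def] using this
  exact (h2.trans h3.isBigO).trans_tendsto h4

lemma integrable_affine_pow {Ω : Type*} [MeasurableSpace Ω] {μ : Measure Ω}
    {f : Ω → ℝ} (hf : ∀ k : ℕ, Integrable (fun ω => (f ω)^k) μ) (α β : ℝ) (k : ℕ) :
    Integrable (fun ω => (α * f ω + β)^k) μ := by
  have heq : (fun ω => (α * f ω + β)^k) = fun ω =>
      ∑ j ∈ Finset.range (k+1), (α^j * β^(k-j) * (k.choose j)) * (f ω)^j := by
    funext ω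
    rw [add_pow]
    exact Finset.sum_congr rfl fun j _ => by ring
  rw [heq]
  exact integrable_finset_sum _ fun j _ => (hf j).const_mul _
end helpers

set_option maxHeartbeats 2000000

/-- Oracle adjustment, single parameter: under regularity of the estimator
(A1.1)–(A1.3) and structure of the surrogate reward (A2.1)–(A2.3), the oracle adjustment
`λ* = −(C+2)σ²/(2θ²)` improves the expected reward over PTO at rate `n⁻²`, with asymptotic
improvement `−R''(θ)(C+2)²σ⁴/(8θ²) ≥ 0`. -/
theorem stmt_9
    {Ω : Type*} [MeasurableSpace Ω] (μ : Measure Ω) [IsProbabilityMeasure μ]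
    (θ : ℝ) (hθ : θ ≠ 0)
    (θhat : ℕ → Ω → ℝ) (hmeas : ∀ n, Measurable (θhat n))
    (hmom : ∀ (n k : ℕ), Integrable (fun ω => |θhat n ω - θ| ^ k) μ)
    (σ2 : ℝ) (hσ2 : 0 < σ2)
    -- (A1.1) root-n consistency
    (hA11 : Tendsto (fun n : ℕ => (n : ℝ) * ∫ ω, (θhat n ω - θ) ^ 2 ∂μ) atTop (nhds σ2))
    -- (A1.2) diminishing bias
    (hA12 : (fun n : ℕ => ∫ ω, (θhat n ω - θ) ∂μ) =o[atTop] fun n : ℕ => (n : ℝ)⁻¹)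
    -- (A1.3) higher-order moments
    (hA13 : ∀ k : ℕ, 3 ≤ k →
      (fun n : ℕ => ∫ ω, |θhat n ω - θ| ^ k ∂μ) =O[atTop]
        fun n : ℕ => (n : ℝ) ^ (-(k : ℝ) / 2))
    (R : ℝ → ℝ)
    -- R is five times differentiable
    (hdiff : ∀ k < 5, Differentiable ℝ (iteratedDeriv k R))
    -- (A2.1)
    (hA21a : deriv R θ = 0) (hA21b : iteratedDeriv 2 R θ < 0)
    -- (A2.2) derivative-ratio condition
    (C : ℝ) (hA22 : iteratedDeriv 3 R θ / iteratedDeriv 2 R θ = C / θ)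
    -- (A2.3) bounded fifth derivative
    (M : ℝ) (hM : 0 < M) (hA23 : ∀ x : ℝ, |iteratedDeriv 5 R x| ≤ M)
    -- expectations of the rewards exist
    (hRint : ∀ (n : ℕ) (c : ℝ), Integrable (fun ω => R (θhat n ω * c)) μ) :
    Tendsto
      (fun n : ℕ => (n : ℝ) ^ 2 *
        ((∫ ω, R (θhat n ω * (1 + (-(C + 2) * σ2 / (2 * θ ^ 2)) / (n : ℝ))) ∂μ) -
          ∫ ω, R (θhat n ω) ∂μ))
      atTop (nhds (-(iteratedDeriv 2 R θ) * (C + 2) ^ 2 * σ2 ^ 2 / (8 * θ ^ 2))) ∧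
    0 ≤ -(iteratedDeriv 2 R θ) * (C + 2) ^ 2 * σ2 ^ 2 / (8 * θ ^ 2) := by
  refine ⟨?_, ?_⟩
  swap
  · apply div_nonneg
    · have h1 : 0 ≤ -(iteratedDeriv 2 R θ) := by linarith
      exact mul_nonneg (mul_nonneg h1 (sq_nonneg _)) (sq_nonneg _)
    · positivity
  set d2 := iteratedDeriv 2 R θ with hd2def
  set d3 := iteratedDeriv 3 R θ with hd3def
  set d4 := iteratedDeriv 4 R θ with hd4def
  set L := -(C + 2) * σ2 / (2 * θ ^ 2) with hLdef
  have hd2ne : d2 ≠ 0 := ne_of_lt hA21b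
  have hd3eq : d3 = C * d2 / θ := by
    rw [eq_div_iff hθ]
    rw [div_eq_div_iff hd2ne hθ] at hA22
    linarith
  -- Taylor bound with the vanishing first derivative
  have ht : ∀ x : ℝ, |R x - (R θ + d2 / 2 * (x - θ)^2 + d3 / 6 * (x - θ)^3
      + d4 / 24 * (x - θ)^4)| ≤ M / 120 * |x - θ|^5 := by
    intro x
    have h := taylor5 (θ := θ) hdiff hM.le hA23 x
    rw [hA21a, ← hd2def, ← hd3def, ← hd4def] at h
    simpa using h
  -- integrability of powers
  have hXint : ∀ (n k : ℕ), Integrable (fun ω => (θhat n ω - θ)^k) μ := by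
    intro n k
    refine (hmom n k).mono'
      ((((hmeas n).sub measurable_const).pow_const k).aestronglyMeasurable) ?_
    filter_upwards with ω
    rw [Real.norm_eq_abs, abs_pow]
  have hXint1 : ∀ n, Integrable (fun ω => θhat n ω - θ) μ := fun n => by
    simpa using hXint n 1
  have hYint : ∀ (n : ℕ) (c : ℝ) (k : ℕ), Integrable (fun ω => (θhat n ω * c - θ)^k) μ := by
    intro n c k
    have h := integrable_affine_pow (μ := μ) (f := fun ω => θhat n ω - θ)
      (hXint n) c ((c - 1) * θ) k
    exact h.congr (Eventually.of_forall fun ω => by ring_nf)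
  -- generic fourth-order splitting of the expected reward
  have split : ∀ (w : Ω → ℝ), Integrable (fun ω => R (w ω)) μ →
      (∀ k : ℕ, Integrable (fun ω => (w ω - θ)^k) μ) →
      ∫ ω, R (w ω) ∂μ = R θ + d2/2 * (∫ ω, (w ω - θ)^2 ∂μ)
        + d3/6 * (∫ ω, (w ω - θ)^3 ∂μ) + d4/24 * (∫ ω, (w ω - θ)^4 ∂μ)
        + ∫ ω, (R (w ω) - (R θ + d2/2*(w ω - θ)^2 + d3/6*(w ω - θ)^3
            + d4/24*(w ω - θ)^4)) ∂μ := by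
    intro w hw hwk
    have hP : Integrable (fun ω => R θ + d2/2*(w ω - θ)^2 + d3/6*(w ω - θ)^3
        + d4/24*(w ω - θ)^4) μ :=
      (((integrable_const _).add ((hwk 2).const_mul _)).add
        ((hwk 3).const_mul _)).add ((hwk 4).const_mul _)
    have i2 : Integrable (fun ω => d2/2*(w ω - θ)^2) μ := (hwk 2).const_mul _
    have i3 : Integrable (fun ω => d3/6*(w ω - θ)^3) μ := (hwk 3).const_mul _
    have i4 : Integrable (fun ω => d4/24*(w ω - θ)^4) μ := (hwk 4).const_mul _
    have i02 : Integrable (fun ω => R θ + d2/2*(w ω - θ)^2) μ :=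
      (integrable_const _).add i2
    have i023 : Integrable (fun ω => R θ + d2/2*(w ω - θ)^2 + d3/6*(w ω - θ)^3) μ :=
      i02.add i3
    have e1 : ∫ ω, (R θ + d2/2*(w ω - θ)^2 + d3/6*(w ω - θ)^3
        + d4/24*(w ω - θ)^4) ∂μ
        = R θ + d2/2 * (∫ ω, (w ω - θ)^2 ∂μ) + d3/6 * (∫ ω, (w ω - θ)^3 ∂μ)
          + d4/24 * (∫ ω, (w ω - θ)^4 ∂μ) := by
      rw [integral_add i023 i4, integral_add i02 i3,
          integral_add (integrable_const _) i2,
          integral_const_mul, integral_const_mul, integral_const_mul, integral_const]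
      simp [measure_univ]
    rw [integral_sub hw hP, e1]
    ring
  -- names for the moment sequences
  set t : ℕ → ℝ := fun n => (n:ℝ)⁻¹ with htdef
  set m1 : ℕ → ℝ := fun n => ∫ ω, (θhat n ω - θ) ∂μ with hm1def
  set m2 : ℕ → ℝ := fun n => ∫ ω, (θhat n ω - θ)^2 ∂μ with hm2def
  set m3 : ℕ → ℝ := fun n => ∫ ω, (θhat n ω - θ)^3 ∂μ with hm3def
  set m4 : ℕ → ℝ := fun n => ∫ ω, (θhat n ω - θ)^4 ∂μ with hm4def
  set A5 : ℕ → ℝ := fun n => ∫ ω, |θhat n ω - θ|^5 ∂μ with hA5def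
  -- integral of a quartic polynomial of the error
  have comb : ∀ (n : ℕ) (p4 p3 p2 p1 p0 : ℝ),
      ∫ ω, (p4*(θhat n ω - θ)^4 + p3*(θhat n ω - θ)^3 + p2*(θhat n ω - θ)^2
        + p1*(θhat n ω - θ) + p0) ∂μ
      = p4 * m4 n + p3 * m3 n + p2 * m2 n + p1 * m1 n + p0 := by
    intro n p4 p3 p2 p1 p0
    have i4 : Integrable (fun ω => p4*(θhat n ω - θ)^4) μ := (hXint n 4).const_mul _
    have i3 : Integrable (fun ω => p3*(θhat n ω - θ)^3) μ := (hXint n 3).const_mul _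
    have i2 : Integrable (fun ω => p2*(θhat n ω - θ)^2) μ := (hXint n 2).const_mul _
    have i1 : Integrable (fun ω => p1*(θhat n ω - θ)) μ := (hXint1 n).const_mul _
    have i43 : Integrable (fun ω => p4*(θhat n ω - θ)^4 + p3*(θhat n ω - θ)^3) μ :=
      i4.add i3
    have i432 : Integrable (fun ω => p4*(θhat n ω - θ)^4 + p3*(θhat n ω - θ)^3
        + p2*(θhat n ω - θ)^2) μ := i43.add i2
    have i4321 : Integrable (fun ω => p4*(θhat n ω - θ)^4 + p3*(θhat n ω - θ)^3
        + p2*(θhat n ω - θ)^2 + p1*(θhat n ω - θ)) μ := i432.add i1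
    rw [integral_add i4321 (integrable_const _), integral_add i432 i1,
        integral_add i43 i2, integral_add i4 i3,
        integral_const_mul, integral_const_mul, integral_const_mul, integral_const_mul,
        integral_const]
    simp [measure_univ, hm1def, hm2def, hm3def, hm4def]
  -- expansions of the adjusted moments
  have hY2 : ∀ n : ℕ, ∫ ω, (θhat n ω * (1 + L/(n:ℝ)) - θ)^2 ∂μ
      = (1 + L*t n)^2 * m2 n + 2*(1+L*t n)*(L*t n*θ) * m1 n + (L*t n*θ)^2 := by
    intro n
    rw [show (fun ω => (θhat n ω * (1 + L/(n:ℝ)) - θ)^2)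
        = fun ω => (0:ℝ)*(θhat n ω - θ)^4 + 0*(θhat n ω - θ)^3
          + (1 + L*t n)^2*(θhat n ω - θ)^2
          + (2*(1+L*t n)*(L*t n*θ))*(θhat n ω - θ) + (L*t n*θ)^2 from
      funext fun ω => by simp only [htdef]; ring]
    rw [comb n _ _ _ _ _]; ring
  have hY3 : ∀ n : ℕ, ∫ ω, (θhat n ω * (1 + L/(n:ℝ)) - θ)^3 ∂μ
      = (1 + L*t n)^3 * m3 n + 3*(1+L*t n)^2*(L*t n*θ) * m2 n
        + 3*(1+L*t n)*(L*t n*θ)^2 * m1 n + (L*t n*θ)^3 := by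
    intro n
    rw [show (fun ω => (θhat n ω * (1 + L/(n:ℝ)) - θ)^3)
        = fun ω => (0:ℝ)*(θhat n ω - θ)^4 + (1 + L*t n)^3*(θhat n ω - θ)^3
          + (3*(1+L*t n)^2*(L*t n*θ))*(θhat n ω - θ)^2
          + (3*(1+L*t n)*(L*t n*θ)^2)*(θhat n ω - θ) + (L*t n*θ)^3 from
      funext fun ω => by simp only [htdef]; ring]
    rw [comb n _ _ _ _ _]; ring
  have hY4 : ∀ n : ℕ, ∫ ω, (θhat n ω * (1 + L/(n:ℝ)) - θ)^4 ∂μ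
      = (1 + L*t n)^4 * m4 n + 4*(1+L*t n)^3*(L*t n*θ) * m3 n
        + 6*(1+L*t n)^2*(L*t n*θ)^2 * m2 n
        + 4*(1+L*t n)*(L*t n*θ)^3 * m1 n + (L*t n*θ)^4 := by
    intro n
    rw [show (fun ω => (θhat n ω * (1 + L/(n:ℝ)) - θ)^4)
        = fun ω => (1 + L*t n)^4*(θhat n ω - θ)^4
          + (4*(1+L*t n)^3*(L*t n*θ))*(θhat n ω - θ)^3
          + (6*(1+L*t n)^2*(L*t n*θ)^2)*(θhat n ω - θ)^2
          + (4*(1+L*t n)*(L*t n*θ)^3)*(θhat n ω - θ) + (L*t n*θ)^4 from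
      funext fun ω => by simp only [htdef]; ring]
    rw [comb n _ _ _ _ _]
  -- error terms
  set E : ℕ → ℝ := fun n => ∫ ω, (R (θhat n ω) - (R θ + d2/2*(θhat n ω - θ)^2
    + d3/6*(θhat n ω - θ)^3 + d4/24*(θhat n ω - θ)^4)) ∂μ with hEdef
  set E' : ℕ → ℝ := fun n => ∫ ω, (R (θhat n ω * (1 + L/(n:ℝ)))
    - (R θ + d2/2*(θhat n ω * (1 + L/(n:ℝ)) - θ)^2
      + d3/6*(θhat n ω * (1 + L/(n:ℝ)) - θ)^3
      + d4/24*(θhat n ω * (1 + L/(n:ℝ)) - θ)^4)) ∂μ with hE'def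
  have hRX : ∀ n, Integrable (fun ω => R (θhat n ω)) μ := fun n => by
    simpa using hRint n 1
  have hsplitX : ∀ n, ∫ ω, R (θhat n ω) ∂μ
      = R θ + d2/2 * m2 n + d3/6 * m3 n + d4/24 * m4 n + E n :=
    fun n => split (θhat n) (hRX n) (hXint n)
  have hsplitY : ∀ n, ∫ ω, R (θhat n ω * (1 + L/(n:ℝ))) ∂μ
      = R θ + d2/2 * (∫ ω, (θhat n ω * (1 + L/(n:ℝ)) - θ)^2 ∂μ)
        + d3/6 * (∫ ω, (θhat n ω * (1 + L/(n:ℝ)) - θ)^3 ∂μ)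
        + d4/24 * (∫ ω, (θhat n ω * (1 + L/(n:ℝ)) - θ)^4 ∂μ) + E' n :=
    fun n => split (fun ω => θhat n ω * (1 + L/(n:ℝ))) (hRint n _)
      (fun k => hYint n _ k)
  -- bound on the unadjusted error
  have hEb : ∀ n, |E n| ≤ M/120 * A5 n := by
    intro n
    have hint : Integrable (fun ω => R (θhat n ω) - (R θ + d2/2*(θhat n ω - θ)^2
        + d3/6*(θhat n ω - θ)^3 + d4/24*(θhat n ω - θ)^4)) μ :=
      (hRX n).sub ((((integrable_const _).add ((hXint n 2).const_mul _)).add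
        ((hXint n 3).const_mul _)).add ((hXint n 4).const_mul _))
    calc |E n| ≤ ∫ ω, |R (θhat n ω) - (R θ + d2/2*(θhat n ω - θ)^2
        + d3/6*(θhat n ω - θ)^3 + d4/24*(θhat n ω - θ)^4)| ∂μ := by
          rw [hEdef]
          exact
            norm_integral_le_integral_norm (μ := μ) (f := fun ω => R (θhat n ω)
              - (R θ + d2/2*(θhat n ω - θ)^2 + d3/6*(θhat n ω - θ)^3
                + d4/24*(θhat n ω - θ)^4))
      _ ≤ ∫ ω, M/120 * |θhat n ω - θ|^5 ∂μ :=
          integral_mono hint.abs ((hmom n 5).const_mul _) (fun ω => ht _)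
      _ = M/120 * A5 n := by rw [integral_const_mul, hA5def]
  -- bound on the adjusted error
  have hE'b : ∀ n, |E' n| ≤ M/120 * (32*|1 + L*t n|^5 * A5 n + 32*|L*t n*θ|^5) := by
    intro n
    have hY5abs : Integrable (fun ω => |θhat n ω * (1 + L/(n:ℝ)) - θ|^5) μ :=
      ((hYint n _ 5).abs).congr (Eventually.of_forall fun ω => abs_pow _ _)
    have hintY : Integrable (fun ω => R (θhat n ω * (1 + L/(n:ℝ)))
        - (R θ + d2/2*(θhat n ω * (1 + L/(n:ℝ)) - θ)^2
          + d3/6*(θhat n ω * (1 + L/(n:ℝ)) - θ)^3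
          + d4/24*(θhat n ω * (1 + L/(n:ℝ)) - θ)^4)) μ :=
      (hRint n _).sub ((((integrable_const _).add ((hYint n _ 2).const_mul _)).add
        ((hYint n _ 3).const_mul _)).add ((hYint n _ 4).const_mul _))
    have hpt : ∀ ω, |θhat n ω * (1 + L/(n:ℝ)) - θ|^5
        ≤ 32*|1 + L*t n|^5 * |θhat n ω - θ|^5 + 32*|L*t n*θ|^5 := by
      intro ω
      have h0 : θhat n ω * (1 + L/(n:ℝ)) - θ
          = (1 + L*t n)*(θhat n ω - θ) + L*t n*θ := by simp only [htdef]; ring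
      have h1 : |θhat n ω * (1 + L/(n:ℝ)) - θ|
          ≤ |1 + L*t n| * |θhat n ω - θ| + |L*t n*θ| := by
        rw [h0]
        exact (abs_add_le _ _).trans (by rw [abs_mul])
      calc |θhat n ω * (1 + L/(n:ℝ)) - θ|^5
          ≤ (|1 + L*t n| * |θhat n ω - θ| + |L*t n*θ|)^5 :=
            pow_le_pow_left₀ (abs_nonneg _) h1 5
        _ ≤ 32*((|1 + L*t n| * |θhat n ω - θ|)^5 + |L*t n*θ|^5) :=
            pow5_split _ _ (by positivity) (abs_nonneg _)
        _ = 32*|1 + L*t n|^5 * |θhat n ω - θ|^5 + 32*|L*t n*θ|^5 := by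
            rw [mul_pow]; ring
    calc |E' n| ≤ ∫ ω, |R (θhat n ω * (1 + L/(n:ℝ)))
        - (R θ + d2/2*(θhat n ω * (1 + L/(n:ℝ)) - θ)^2
          + d3/6*(θhat n ω * (1 + L/(n:ℝ)) - θ)^3
          + d4/24*(θhat n ω * (1 + L/(n:ℝ)) - θ)^4)| ∂μ := by
          rw [hE'def]
          exact
            norm_integral_le_integral_norm (μ := μ) (f := fun ω =>
              R (θhat n ω * (1 + L/(n:ℝ)))
              - (R θ + d2/2*(θhat n ω * (1 + L/(n:ℝ)) - θ)^2
                + d3/6*(θhat n ω * (1 + L/(n:ℝ)) - θ)^3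
                + d4/24*(θhat n ω * (1 + L/(n:ℝ)) - θ)^4))
      _ ≤ ∫ ω, M/120 * |θhat n ω * (1 + L/(n:ℝ)) - θ|^5 ∂μ :=
          integral_mono hintY.abs (hY5abs.const_mul _) (fun ω => ht _)
      _ = M/120 * ∫ ω, |θhat n ω * (1 + L/(n:ℝ)) - θ|^5 ∂μ := integral_const_mul _ _
      _ ≤ M/120 * ∫ ω, (32*|1 + L*t n|^5 * |θhat n ω - θ|^5 + 32*|L*t n*θ|^5) ∂μ := by
          apply mul_le_mul_of_nonneg_left _ (by positivity : (0:ℝ) ≤ M/120)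
          exact integral_mono hY5abs
            (((hmom n 5).const_mul _).add (integrable_const _)) (fun ω => hpt ω)
      _ = M/120 * (32*|1 + L*t n|^5 * A5 n + 32*|L*t n*θ|^5) := by
          rw [integral_add ((hmom n 5).const_mul _) (integrable_const _),
            integral_const_mul, integral_const]
          simp [measure_univ, hA5def]
  -- basic limits
  have Tt : Tendsto t atTop (nhds 0) := tendsto_inv_atTop_nhds_zero_nat
  have T2 : Tendsto (fun n : ℕ => (n:ℝ) * m2 n) atTop (nhds σ2) := hA11
  have T1 : Tendsto (fun n : ℕ => (n:ℝ) * m1 n) atTop (nhds 0) := by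
    have h := hA12.tendsto_div_nhds_zero
    exact h.congr fun n => by rw [div_eq_mul_inv, inv_inv, mul_comm]
  have Tm1 : Tendsto m1 atTop (nhds 0) :=
    hA12.isBigO.trans_tendsto tendsto_inv_atTop_nhds_zero_nat
  have Tm2 : Tendsto m2 atTop (nhds 0) := by
    have h := T2.mul Tt
    rw [mul_zero] at h
    apply h.congr'
    filter_upwards [eventually_ge_atTop 1] with n hn
    have hn0 : (n:ℝ) ≠ 0 := Nat.cast_ne_zero.2 (by omega)
    simp only [htdef]
    field_simp
  have T3 : Tendsto (fun n : ℕ => (n:ℝ) * m3 n) atTop (nhds 0) := by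
    have hg : Tendsto (fun n : ℕ => (n:ℝ) * ∫ ω, |θhat n ω - θ|^3 ∂μ)
        atTop (nhds 0) := by
      have := bigO_helper (hA13 3 (by norm_num)) 1 (by norm_num)
      exact this.congr fun n => by rw [Real.rpow_one]
    apply squeeze_zero_norm _ hg
    intro n
    rw [Real.norm_eq_abs, abs_mul, abs_of_nonneg (Nat.cast_nonneg n)]
    refine mul_le_mul_of_nonneg_left ?_ (Nat.cast_nonneg n)
    rw [hm3def]
    have h := norm_integral_le_integral_norm (μ := μ) (f := fun ω => (θhat n ω - θ)^3)
    simp only [Real.norm_eq_abs, abs_pow] at h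
    exact h
  have T4 : Tendsto (fun n : ℕ => (n:ℝ) * m4 n) atTop (nhds 0) := by
    have hg : Tendsto (fun n : ℕ => (n:ℝ) * ∫ ω, |θhat n ω - θ|^4 ∂μ)
        atTop (nhds 0) := by
      have := bigO_helper (hA13 4 (by norm_num)) 1 (by norm_num)
      exact this.congr fun n => by rw [Real.rpow_one]
    apply squeeze_zero_norm _ hg
    intro n
    rw [Real.norm_eq_abs, abs_mul, abs_of_nonneg (Nat.cast_nonneg n)]
    refine mul_le_mul_of_nonneg_left ?_ (Nat.cast_nonneg n)
    rw [hm4def]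
    have h := norm_integral_le_integral_norm (μ := μ) (f := fun ω => (θhat n ω - θ)^4)
    simp only [Real.norm_eq_abs, abs_pow] at h
    exact h
  have T5 : Tendsto (fun n : ℕ => (n:ℝ)^2 * A5 n) atTop (nhds 0) := by
    have := bigO_helper (hA13 5 (by norm_num)) 2 (by norm_num)
    refine this.congr fun n => ?_
    rw [show ((2:ℝ)) = ((2:ℕ):ℝ) by norm_num, Real.rpow_natCast, hA5def]
  -- the rescaled error terms vanish
  have TE : Tendsto (fun n : ℕ => (n:ℝ)^2 * E n) atTop (nhds 0) := by
    have hg : Tendsto (fun n : ℕ => M/120 * ((n:ℝ)^2 * A5 n)) atTop (nhds 0) := by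
      have := T5.const_mul (M/120)
      rwa [mul_zero] at this
    apply squeeze_zero_norm _ hg
    intro n
    rw [Real.norm_eq_abs, abs_mul, abs_of_nonneg (by positivity : (0:ℝ) ≤ (n:ℝ)^2)]
    calc (n:ℝ)^2 * |E n| ≤ (n:ℝ)^2 * (M/120 * A5 n) :=
          mul_le_mul_of_nonneg_left (hEb n) (by positivity)
      _ = M/120 * ((n:ℝ)^2 * A5 n) := by ring
  have TE' : Tendsto (fun n : ℕ => (n:ℝ)^2 * E' n) atTop (nhds 0) := by
    have ha : Tendsto (fun n : ℕ => (n:ℝ)^2 * |L*t n*θ|^5) atTop (nhds 0) := by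
      have h0 : Tendsto (fun n : ℕ => |L*θ|^5 * (t n)^3) atTop (nhds 0) := by
        have := (Tt.pow 3).const_mul (|L*θ|^5)
        simpa using this
      apply h0.congr'
      filter_upwards [eventually_ge_atTop 1] with n hn
      have hn0 : (n:ℝ) ≠ 0 := Nat.cast_ne_zero.2 (by omega)
      simp only [htdef]
      have h5 : |L*(↑n:ℝ)⁻¹*θ|^5 = |L*θ|^5 * ((↑n:ℝ)⁻¹)^5 := by
        rw [show L*(↑n:ℝ)⁻¹*θ = (L*θ)*(↑n:ℝ)⁻¹ by ring, abs_mul, mul_pow, abs_inv,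
          abs_of_nonneg (show (0:ℝ) ≤ (n:ℝ) from Nat.cast_nonneg n)]
      rw [h5]
      field_simp
    have habs : Tendsto (fun n : ℕ => |1 + L*t n|^5) atTop (nhds 1) := by
      have h1 : Tendsto (fun n : ℕ => 1 + L*t n) atTop (nhds 1) := by
        have := (Tt.const_mul L).const_add 1
        simpa using this
      have := (h1.abs).pow 5
      simpa using this
    have hg : Tendsto (fun n : ℕ => M/120 * (32*|1 + L*t n|^5 * ((n:ℝ)^2 * A5 n)
        + 32*((n:ℝ)^2 * |L*t n*θ|^5))) atTop (nhds 0) := by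
      have hg0 := (((habs.const_mul 32).mul T5).add (ha.const_mul 32)).const_mul (M/120)
      rw [show M/120 * ((32*1)*0 + 32*0) = 0 by norm_num] at hg0
      exact hg0
    apply squeeze_zero_norm _ hg
    intro n
    rw [Real.norm_eq_abs, abs_mul, abs_of_nonneg (by positivity : (0:ℝ) ≤ (n:ℝ)^2)]
    calc (n:ℝ)^2 * |E' n|
        ≤ (n:ℝ)^2 * (M/120 * (32*|1 + L*t n|^5 * A5 n + 32*|L*t n*θ|^5)) :=
          mul_le_mul_of_nonneg_left (hE'b n) (by positivity)
      _ = M/120 * (32*|1 + L*t n|^5 * ((n:ℝ)^2 * A5 n)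
          + 32*((n:ℝ)^2 * |L*t n*θ|^5)) := by ring
  -- the main polynomial part and its limit
  set G : ℕ → ℝ := fun n =>
    d2/2 * ((2*L + L^2*t n)*((n:ℝ)*m2 n) + 2*(1+L*t n)*L*θ*((n:ℝ)*m1 n) + L^2*θ^2)
    + d3/6 * ((3*L + 3*L^2*t n + L^3*(t n)^2)*((n:ℝ)*m3 n)
        + 3*(1+L*t n)^2*L*θ*((n:ℝ)*m2 n)
        + 3*(1+L*t n)*L^2*θ^2*(t n)*((n:ℝ)*m1 n) + L^3*θ^3*(t n))
    + d4/24 * ((4*L + 6*L^2*t n + 4*L^3*(t n)^2 + L^4*(t n)^3)*((n:ℝ)*m4 n)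
        + 4*(1+L*t n)^3*L*θ*((n:ℝ)*m3 n) + 6*(1+L*t n)^2*L^2*θ^2*(t n)*((n:ℝ)*m2 n)
        + 4*(1+L*t n)*L^3*θ^3*(t n)^2*((n:ℝ)*m1 n) + L^4*θ^4*(t n)^2) with hGdef
  have hGlim : Tendsto G atTop (nhds (-d2 * (C + 2) ^ 2 * σ2 ^ 2 / (8 * θ ^ 2))) := by
    have hΦ : Continuous (fun p : ℝ×ℝ×ℝ×ℝ×ℝ =>
        d2/2 * ((2*L + L^2*p.1)*p.2.2.1 + 2*(1+L*p.1)*L*θ*p.2.1 + L^2*θ^2)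
        + d3/6 * ((3*L + 3*L^2*p.1 + L^3*p.1^2)*p.2.2.2.1
            + 3*(1+L*p.1)^2*L*θ*p.2.2.1
            + 3*(1+L*p.1)*L^2*θ^2*p.1*p.2.1 + L^3*θ^3*p.1)
        + d4/24 * ((4*L + 6*L^2*p.1 + 4*L^3*p.1^2 + L^4*p.1^3)*p.2.2.2.2
            + 4*(1+L*p.1)^3*L*θ*p.2.2.2.1 + 6*(1+L*p.1)^2*L^2*θ^2*p.1*p.2.2.1
            + 4*(1+L*p.1)*L^3*θ^3*p.1^2*p.2.1 + L^4*θ^4*p.1^2)) := by fun_prop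
    have hpt : Tendsto (fun n : ℕ => (t n, (n:ℝ)*m1 n, (n:ℝ)*m2 n, (n:ℝ)*m3 n,
        (n:ℝ)*m4 n)) atTop (nhds ((0:ℝ), (0:ℝ), σ2, (0:ℝ), (0:ℝ))) :=
      Tt.prodMk_nhds (T1.prodMk_nhds (T2.prodMk_nhds (T3.prodMk_nhds T4)))
    have h := (hΦ.tendsto ((0:ℝ), (0:ℝ), σ2, (0:ℝ), (0:ℝ))).comp hpt
    convert h using 2
    · rfl
    norm_num
    rw [hd3eq, hLdef]
    field_simp
    ring
  -- master identity
  have hmaster : (fun n : ℕ => G n + ((n:ℝ)^2 * E' n - (n:ℝ)^2 * E n)) =ᶠ[atTop]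
      (fun n : ℕ => (n:ℝ)^2 * ((∫ ω, R (θhat n ω * (1 + L/(n:ℝ))) ∂μ)
        - ∫ ω, R (θhat n ω) ∂μ)) := by
    filter_upwards [eventually_ge_atTop 1] with n hn
    have hn0 : (n:ℝ) ≠ 0 := Nat.cast_ne_zero.2 (by omega)
    rw [hsplitX n, hsplitY n, hY2 n, hY3 n, hY4 n, hGdef]
    simp only [htdef]
    field_simp
    ring
  have hfinal := hGlim.add (TE'.sub TE)
  rw [show (-d2 * (C + 2) ^ 2 * σ2 ^ 2 / (8 * θ ^ 2)) + ((0:ℝ) - 0)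
      = -d2 * (C + 2) ^ 2 * σ2 ^ 2 / (8 * θ ^ 2) by ring] at hfinal
  exact (tendsto_congr' hmaster).mp hfinal
end

section
/- (Data-driven plug-in adjustment, single parameter.) Let θ ≠ 0 and let (θ̂_n) and (σ̂_n²) be sequences of real-valued random variables on a common probability space satisfying: (A1.1) lim_{n→∞} n·E[(θ̂_n − θ)²] = σ² for some constant σ² > 0; (A1.2) E[θ̂_n − θ] = o(n⁻¹); (A1.3) E[|θ̂_n − θ|^k] = O(n^{−k/2}) for every integer k ≥ 3; (A3.1) E[σ̂_n² − σ²] = o(n⁻¹); (A3.2) E[(σ̂_n² − σ²)^j] = O(n^{−j}) for every integer j ≥ 2; (A3.3) E[(θ̂_n − θ)(σ̂_n² − σ²)] = o(n⁻¹); (A4) there exists ε > 0 with |θ̂_n| ≥ ε almost surely for all n. Let R_θ : ℝ → ℝ be five times differentiable with R_θ'(θ) = 0, R_θ''(θ) < 0, R_θ'''(θ)/R_θ''(θ) = C/θ for a constant C, and |R_θ^{(5)}(x)| ≤ M for all x ∈ ℝ and some M > 0. Define the random adjustment coefficient λ_n* = (2 − C)·σ̂_n²/(2·θ̂_n²). Then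 lim_{n→∞} n²·( E[R_θ(θ̂_n·(1 + λ_n*/n))] − E[R_θ(θ̂_n)] ) = −R_θ''(θ)·(2 − C)²·σ⁴/(8θ²), and this limit is nonnegative. -/
open MeasureTheory Filter Asymptotics Real Set

set_option maxHeartbeats 1600000

private lemma seg_step {f g : ℝ → ℝ} {θ K : ℝ} {m : ℕ}
    (hf : ∀ x, HasDerivAt f (g x) x) (h0 : f θ = 0) (hK : 0 ≤ K)
    (hg : ∀ x, |g x| ≤ K * |x - θ| ^ m) (x : ℝ) :
    |f x| ≤ K * |x - θ| ^ (m + 1) := by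
  have hmain : ‖f x - f θ‖ ≤ (K * |x - θ| ^ m) * ‖x - θ‖ := by
    refine (convex_uIcc θ x).norm_image_sub_le_of_norm_deriv_le
      (fun y _ => (hf y).differentiableAt) (fun y hy => ?_) Set.left_mem_uIcc
      Set.right_mem_uIcc
    rw [(hf y).deriv]
    refine (hg y).trans ?_
    have h1 : |y - θ| ≤ |x - θ| := by
      rcases le_total θ x with h | h
      · rw [Set.uIcc_of_le h] at hy
        rw [abs_of_nonneg (by linarith [hy.1]), abs_of_nonneg (by linarith)]
        linarith [hy.2]
      · rw [Set.uIcc_of_ge h] at hy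
        rw [abs_of_nonpos (by linarith [hy.2]), abs_of_nonpos (by linarith)]
        linarith [hy.1]
    exact mul_le_mul_of_nonneg_left (pow_le_pow_left₀ (abs_nonneg _) h1 m) hK
  rw [h0, sub_zero, Real.norm_eq_abs] at hmain
  calc |f x| ≤ K * |x - θ| ^ m * |x - θ| := hmain
    _ = K * |x - θ| ^ (m + 1) := by rw [pow_succ]; ring

private theorem taylor_bound {R : ℝ → ℝ} {θ M : ℝ}
    (hdiff : ∀ k < 5, Differentiable ℝ (iteratedDeriv k R)) (hM : 0 ≤ M)
    (hbd : ∀ x, |iteratedDeriv 5 R x| ≤ M) (x : ℝ) :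
    |R x - (R θ + iteratedDeriv 1 R θ * (x - θ) + iteratedDeriv 2 R θ / 2 * (x - θ) ^ 2
      + iteratedDeriv 3 R θ / 6 * (x - θ) ^ 3 + iteratedDeriv 4 R θ / 24 * (x - θ) ^ 4)|
      ≤ M * |x - θ| ^ 5 := by
  set c1 := iteratedDeriv 1 R θ with hc1
  set c2 := iteratedDeriv 2 R θ with hc2
  set c3 := iteratedDeriv 3 R θ with hc3
  set c4 := iteratedDeriv 4 R θ with hc4
  have hD : ∀ k, k < 5 → ∀ y : ℝ,
      HasDerivAt (iteratedDeriv k R) (iteratedDeriv (k + 1) R y) y := by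
    intro k hk y
    have h := ((hdiff k hk) y).hasDerivAt
    rwa [show iteratedDeriv (k + 1) R = deriv (iteratedDeriv k R) from iteratedDeriv_succ]
  -- g4
  have b4 : ∀ y : ℝ, |iteratedDeriv 4 R y - c4| ≤ M * |y - θ| ^ (0 + 1) := by
    refine seg_step (g := iteratedDeriv 5 R) (θ := θ)
      (fun y => (hD 4 (by norm_num) y).sub_const c4) (by simp [hc1, hc2, hc3, hc4, iteratedDeriv_one]) hM (fun y => ?_)
    simpa using hbd y
  -- g3
  have b3 : ∀ y : ℝ, |iteratedDeriv 3 R y - (c3 + c4 * (y - θ))| ≤ M * |y - θ| ^ (1 + 1) := by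
    refine seg_step (g := fun y => iteratedDeriv 4 R y - c4) (θ := θ)
      (fun y => ?_) (by simp [hc1, hc2, hc3, hc4, iteratedDeriv_one]) hM b4
    have hp : HasDerivAt (fun z : ℝ => c3 + c4 * (z - θ)) c4 y := by
      simpa using (((hasDerivAt_id y).sub_const θ).const_mul c4).const_add c3
    exact (hD 3 (by norm_num) y).sub hp
  -- g2
  have b2 : ∀ y : ℝ, |iteratedDeriv 2 R y - (c2 + c3 * (y - θ) + c4 / 2 * (y - θ) ^ 2)|
      ≤ M * |y - θ| ^ (2 + 1) := by
    refine seg_step (g := fun y => iteratedDeriv 3 R y - (c3 + c4 * (y - θ))) (θ := θ)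
      (fun y => ?_) (by simp [hc1, hc2, hc3, hc4, iteratedDeriv_one]) hM b3
    have hp : HasDerivAt (fun z : ℝ => c2 + c3 * (z - θ) + c4 / 2 * (z - θ) ^ 2)
        (c3 + c4 * (y - θ)) y := by
      have h1 := (((hasDerivAt_id y).sub_const θ).const_mul c3).const_add c2
      have h2 := (((hasDerivAt_id y).sub_const θ).pow 2).const_mul (c4 / 2)
      refine ((h1.add h2).congr_deriv ?_).congr_of_eventuallyEq (Eventually.of_forall fun z => ?_)
      · simp only [id_eq]; ring
      · simp only [Pi.add_apply, Pi.pow_apply, id_eq]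
    exact (hD 2 (by norm_num) y).sub hp
  -- g1
  have b1 : ∀ y : ℝ, |iteratedDeriv 1 R y
      - (c1 + c2 * (y - θ) + c3 / 2 * (y - θ) ^ 2 + c4 / 6 * (y - θ) ^ 3)|
      ≤ M * |y - θ| ^ (3 + 1) := by
    refine seg_step
      (g := fun y => iteratedDeriv 2 R y - (c2 + c3 * (y - θ) + c4 / 2 * (y - θ) ^ 2)) (θ := θ)
      (fun y => ?_) (by simp [hc1, hc2, hc3, hc4, iteratedDeriv_one]) hM b2
    have hp : HasDerivAt (fun z : ℝ => c1 + c2 * (z - θ) + c3 / 2 * (z - θ) ^ 2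
        + c4 / 6 * (z - θ) ^ 3) (c2 + c3 * (y - θ) + c4 / 2 * (y - θ) ^ 2) y := by
      have h1 := (((hasDerivAt_id y).sub_const θ).const_mul c2).const_add c1
      have h2 := (((hasDerivAt_id y).sub_const θ).pow 2).const_mul (c3 / 2)
      have h3 := (((hasDerivAt_id y).sub_const θ).pow 3).const_mul (c4 / 6)
      refine (((h1.add h2).add h3).congr_deriv ?_).congr_of_eventuallyEq (Eventually.of_forall fun z => ?_)
      · simp only [id_eq]; ring
      · simp only [Pi.add_apply, Pi.pow_apply, id_eq]
    exact (hD 1 (by norm_num) y).sub hp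
  -- g0
  have b0 : ∀ y : ℝ, |R y - (R θ + c1 * (y - θ) + c2 / 2 * (y - θ) ^ 2 + c3 / 6 * (y - θ) ^ 3
      + c4 / 24 * (y - θ) ^ 4)| ≤ M * |y - θ| ^ (4 + 1) := by
    refine seg_step
      (g := fun y => iteratedDeriv 1 R y
        - (c1 + c2 * (y - θ) + c3 / 2 * (y - θ) ^ 2 + c4 / 6 * (y - θ) ^ 3)) (θ := θ)
      (fun y => ?_) (by simp [hc1, hc2, hc3, hc4, iteratedDeriv_one]) hM b1
    have hp : HasDerivAt (fun z : ℝ => R θ + c1 * (z - θ) + c2 / 2 * (z - θ) ^ 2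
        + c3 / 6 * (z - θ) ^ 3 + c4 / 24 * (z - θ) ^ 4)
        (c1 + c2 * (y - θ) + c3 / 2 * (y - θ) ^ 2 + c4 / 6 * (y - θ) ^ 3) y := by
      have h1 := (((hasDerivAt_id y).sub_const θ).const_mul c1).const_add (R θ)
      have h2 := (((hasDerivAt_id y).sub_const θ).pow 2).const_mul (c2 / 2)
      have h3 := (((hasDerivAt_id y).sub_const θ).pow 3).const_mul (c3 / 6)
      have h4 := (((hasDerivAt_id y).sub_const θ).pow 4).const_mul (c4 / 24)
      refine ((((h1.add h2).add h3).add h4).congr_deriv ?_).congr_of_eventuallyEq (Eventually.of_forall fun z => ?_)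
      · simp only [id_eq]; ring
      · simp only [Pi.add_apply, Pi.pow_apply, id_eq]
    have hR : HasDerivAt R (iteratedDeriv 1 R y) y := by
      have := hD 0 (by norm_num) y
      simpa [iteratedDeriv_zero] using this
    exact hR.sub hp
  simpa using b0 x

private lemma tendsto_pow_mul_of_isBigO {f : ℕ → ℝ} {p : ℕ} {q : ℝ}
    (h : f =O[atTop] fun n : ℕ => (n : ℝ) ^ q) (hpq : (p : ℝ) + q < 0) :
    Tendsto (fun n : ℕ => (n : ℝ) ^ p * f n) atTop (nhds 0) := by
  have h1 : (fun n : ℕ => (n : ℝ) ^ p * f n) =O[atTop]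
      fun n : ℕ => (n : ℝ) ^ p * (n : ℝ) ^ q :=
    (isBigO_refl (fun n : ℕ => (n : ℝ) ^ p) atTop).mul h
  refine h1.trans_tendsto ?_
  have h2 : Tendsto (fun n : ℕ => (n : ℝ) ^ ((p : ℝ) + q)) atTop (nhds 0) := by
    have h3 := tendsto_rpow_neg_atTop (y := -((p : ℝ) + q)) (by linarith)
    simpa [Function.comp_def] using h3.comp tendsto_natCast_atTop_atTop
  refine h2.congr' ?_
  filter_upwards [eventually_ge_atTop 1] with n hn
  have hn0 : (0 : ℝ) < n := by exact_mod_cast hn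
  rw [Real.rpow_add hn0, Real.rpow_natCast]

private lemma isBigO_inv_pow_rpow {f : ℕ → ℝ} {j : ℕ}
    (h : f =O[atTop] fun n : ℕ => ((n : ℝ) ^ j)⁻¹) :
    f =O[atTop] fun n : ℕ => (n : ℝ) ^ (-(j : ℝ)) := by
  refine h.congr' (EventuallyEq.refl _ _) ?_
  filter_upwards [eventually_ge_atTop 1] with n hn
  have hn0 : (0 : ℝ) ≤ n := by positivity
  rw [Real.rpow_neg hn0, Real.rpow_natCast]

private lemma tendsto_mul_of_isLittleO {f : ℕ → ℝ}
    (h : f =o[atTop] fun n : ℕ => (n : ℝ)⁻¹) :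
    Tendsto (fun n : ℕ => (n : ℝ) * f n) atTop (nhds 0) := by
  refine h.tendsto_div_nhds_zero.congr' ?_
  filter_upwards [eventually_ge_atTop 1] with n hn
  field_simp

private lemma tendsto_integral_abs {Ω : Type*} [MeasurableSpace Ω] (μ : Measure Ω)
    [IsProbabilityMeasure μ] {f : ℕ → Ω → ℝ}
    (hi1 : ∀ n, Integrable (fun ω => |f n ω|) μ)
    (hi2 : ∀ n, Integrable (fun ω => (f n ω) ^ 2) μ)
    (h : Tendsto (fun n => ∫ ω, (f n ω) ^ 2 ∂μ) atTop (nhds 0)) :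
    Tendsto (fun n => ∫ ω, |f n ω| ∂μ) atTop (nhds 0) := by
  rw [Metric.tendsto_atTop] at h ⊢
  intro δ hδ
  obtain ⟨N, hN⟩ := h (δ ^ 2 / 8) (by positivity)
  refine ⟨N, fun n hn => ?_⟩
  have h2 := hN n hn
  rw [Real.dist_eq, sub_zero] at h2 ⊢
  have hnonneg : 0 ≤ ∫ ω, |f n ω| ∂μ := integral_nonneg fun ω => abs_nonneg _
  rw [abs_of_nonneg hnonneg]
  have hint2 : ∫ ω, (f n ω) ^ 2 ∂μ < δ ^ 2 / 8 := (le_abs_self _).trans_lt h2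
  have hint2' : 0 ≤ ∫ ω, (f n ω) ^ 2 ∂μ := integral_nonneg fun ω => sq_nonneg _
  have key : ∫ ω, |f n ω| ∂μ ≤ δ / 4 + (∫ ω, (f n ω) ^ 2 ∂μ) / (δ / 4) := by
    have hle : ∀ ω, |f n ω| ≤ δ / 4 + (f n ω) ^ 2 / (δ / 4) := by
      intro ω
      rcases le_total |f n ω| (δ / 4) with hc | hc
      · have : (0:ℝ) ≤ (f n ω) ^ 2 / (δ / 4) := by positivity
        linarith
      · have h4 : (0:ℝ) < δ / 4 := by positivity
        have : |f n ω| ≤ (f n ω) ^ 2 / (δ / 4) := by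
          rw [le_div_iff₀ h4]
          nlinarith [sq_abs (f n ω)]
        linarith
    calc ∫ ω, |f n ω| ∂μ ≤ ∫ ω, (δ / 4 + (f n ω) ^ 2 / (δ / 4)) ∂μ :=
        integral_mono (hi1 n) ((integrable_const _).add ((hi2 n).div_const _)) hle
      _ = δ / 4 + (∫ ω, (f n ω) ^ 2 ∂μ) / (δ / 4) := by
        rw [integral_add (integrable_const _) ((hi2 n).div_const _), integral_const,
          integral_div]
        simp
  have hd : (∫ ω, (f n ω) ^ 2 ∂μ) / (δ / 4) < δ / 2 := by
    rw [div_lt_iff₀ (by positivity)]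
    nlinarith
  linarith

private lemma two_pow_bound' (m : ℕ) (a b : ℝ) (ha : 0 ≤ a) (hb : 0 ≤ b) :
    (a + b) ^ m ≤ 2 ^ m * (a ^ m + b ^ m) := by
  have h4 : (0:ℝ) ≤ (2:ℝ) ^ m := by positivity
  rcases le_total a b with h | h
  · have h1 : (a + b) ^ m ≤ (2 * b) ^ m := pow_le_pow_left₀ (by linarith) (by linarith) m
    have h2 : (2 * b) ^ m = 2 ^ m * b ^ m := mul_pow 2 b m
    have h3 : (0:ℝ) ≤ a ^ m := pow_nonneg ha m
    have h5 : (0:ℝ) ≤ 2 ^ m * a ^ m := mul_nonneg h4 h3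
    nlinarith
  · have h1 : (a + b) ^ m ≤ (2 * a) ^ m := pow_le_pow_left₀ (by linarith) (by linarith) m
    have h2 : (2 * a) ^ m = 2 ^ m * a ^ m := mul_pow 2 a m
    have h3 : (0:ℝ) ≤ b ^ m := pow_nonneg hb m
    have h5 : (0:ℝ) ≤ 2 ^ m * b ^ m := mul_nonneg h4 h3
    nlinarith

private lemma q_dom (nr d t : ℝ) (hn1 : 1 ≤ nr) (hd0 : 0 ≤ d) (ht0 : 0 ≤ t) :
    nr * d ^ 3 ≤ nr⁻¹ + d + d ^ 2 + nr * d ^ 3 + nr * d ^ 4 + nr ^ 2 * d ^ 5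
        + nr * d ^ 6 + t + nr * t ^ 2 + t ^ 4 + t ^ 6 ∧
    nr * d ^ 2 * t ≤ nr⁻¹ + d + d ^ 2 + nr * d ^ 3 + nr * d ^ 4 + nr ^ 2 * d ^ 5
        + nr * d ^ 6 + t + nr * t ^ 2 + t ^ 4 + t ^ 6 ∧
    t + t ^ 2 ≤ nr⁻¹ + d + d ^ 2 + nr * d ^ 3 + nr * d ^ 4 + nr ^ 2 * d ^ 5
        + nr * d ^ 6 + t + nr * t ^ 2 + t ^ 4 + t ^ 6 ∧
    d + d ^ 2 ≤ nr⁻¹ + d + d ^ 2 + nr * d ^ 3 + nr * d ^ 4 + nr ^ 2 * d ^ 5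
        + nr * d ^ 6 + t + nr * t ^ 2 + t ^ 4 + t ^ 6 ∧
    d + d * t ^ 2 ≤ nr⁻¹ + d + d ^ 2 + nr * d ^ 3 + nr * d ^ 4 + nr ^ 2 * d ^ 5
        + nr * d ^ 6 + t + nr * t ^ 2 + t ^ 4 + t ^ 6 ∧
    nr⁻¹ + nr⁻¹ * t ^ 3 ≤ nr⁻¹ + d + d ^ 2 + nr * d ^ 3 + nr * d ^ 4 + nr ^ 2 * d ^ 5
        + nr * d ^ 6 + t + nr * t ^ 2 + t ^ 4 + t ^ 6 ∧
    nr * d ^ 3 + nr * d ^ 3 * t ≤ nr⁻¹ + d + d ^ 2 + nr * d ^ 3 + nr * d ^ 4 + nr ^ 2 * d ^ 5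
        + nr * d ^ 6 + t + nr * t ^ 2 + t ^ 4 + t ^ 6 ∧
    d ^ 2 + d ^ 2 * t ^ 2 ≤ nr⁻¹ + d + d ^ 2 + nr * d ^ 3 + nr * d ^ 4 + nr ^ 2 * d ^ 5
        + nr * d ^ 6 + t + nr * t ^ 2 + t ^ 4 + t ^ 6 ∧
    nr⁻¹ * d + nr⁻¹ * d * t ^ 3 ≤ nr⁻¹ + d + d ^ 2 + nr * d ^ 3 + nr * d ^ 4 + nr ^ 2 * d ^ 5
        + nr * d ^ 6 + t + nr * t ^ 2 + t ^ 4 + t ^ 6 ∧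
    (nr⁻¹) ^ 2 + (nr⁻¹) ^ 2 * t ^ 4 ≤ nr⁻¹ + d + d ^ 2 + nr * d ^ 3 + nr * d ^ 4
        + nr ^ 2 * d ^ 5 + nr * d ^ 6 + t + nr * t ^ 2 + t ^ 4 + t ^ 6 ∧
    nr ^ 2 * d ^ 5 ≤ nr⁻¹ + d + d ^ 2 + nr * d ^ 3 + nr * d ^ 4 + nr ^ 2 * d ^ 5
        + nr * d ^ 6 + t + nr * t ^ 2 + t ^ 4 + t ^ 6 ∧
    nr⁻¹ ≤ nr⁻¹ + d + d ^ 2 + nr * d ^ 3 + nr * d ^ 4 + nr ^ 2 * d ^ 5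
        + nr * d ^ 6 + t + nr * t ^ 2 + t ^ 4 + t ^ 6 ∧
    t ^ 4 ≤ nr⁻¹ + d + d ^ 2 + nr * d ^ 3 + nr * d ^ 4 + nr ^ 2 * d ^ 5
        + nr * d ^ 6 + t + nr * t ^ 2 + t ^ 4 + t ^ 6 ∧
    t ^ 6 ≤ nr⁻¹ + d + d ^ 2 + nr * d ^ 3 + nr * d ^ 4 + nr ^ 2 * d ^ 5
        + nr * d ^ 6 + t + nr * t ^ 2 + t ^ 4 + t ^ 6 ∧
    0 ≤ nr⁻¹ + d + d ^ 2 + nr * d ^ 3 + nr * d ^ 4 + nr ^ 2 * d ^ 5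
        + nr * d ^ 6 + t + nr * t ^ 2 + t ^ 4 + t ^ 6 := by
  have hnr0 : (0:ℝ) < nr := by linarith
  have hv0 : (0:ℝ) < nr⁻¹ := by positivity
  have hv1 : nr⁻¹ ≤ 1 := by rw [inv_le_one_iff₀]; right; exact hn1
  have p2 : (0:ℝ) ≤ d ^ 2 := by positivity
  have p3 : (0:ℝ) ≤ nr * d ^ 3 := by positivity
  have p4 : (0:ℝ) ≤ nr * d ^ 4 := by positivity
  have p5 : (0:ℝ) ≤ nr ^ 2 * d ^ 5 := by positivity
  have p6 : (0:ℝ) ≤ nr * d ^ 6 := by positivity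
  have p7 : (0:ℝ) ≤ nr * t ^ 2 := by positivity
  have p8 : (0:ℝ) ≤ t ^ 4 := by positivity
  have p9 : (0:ℝ) ≤ t ^ 6 := by positivity
  have ht2n : t ^ 2 ≤ nr * t ^ 2 := by nlinarith [mul_nonneg (sub_nonneg.2 hn1) (sq_nonneg t)]
  refine ⟨by linarith, ?_, by linarith, by linarith, ?_, ?_, ?_, ?_, ?_, ?_,
    by linarith, by linarith, by linarith, by linarith, by linarith⟩
  · nlinarith [mul_nonneg hnr0.le (sq_nonneg (d ^ 2 - t))]
  · nlinarith [sq_nonneg (d - t ^ 2)]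
  · have h1 : nr⁻¹ * t ^ 3 ≤ t ^ 3 := by
      nlinarith [mul_nonneg (pow_nonneg ht0 3) (sub_nonneg.2 hv1)]
    have h2 : 2 * t ^ 3 ≤ t ^ 2 + t ^ 4 := by nlinarith [sq_nonneg (t - t ^ 2)]
    linarith
  · nlinarith [mul_nonneg hnr0.le (sq_nonneg (d ^ 3 - t))]
  · nlinarith [sq_nonneg (d ^ 2 - t ^ 2)]
  · have h1 : nr⁻¹ * d ≤ d := by nlinarith [mul_nonneg hd0 (sub_nonneg.2 hv1)]
    have h2 : nr⁻¹ * d * t ^ 3 ≤ d * t ^ 3 := by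
      nlinarith [mul_nonneg (mul_nonneg hd0 (pow_nonneg ht0 3)) (sub_nonneg.2 hv1)]
    have h3 : 2 * (d * t ^ 3) ≤ d ^ 2 + t ^ 6 := by nlinarith [sq_nonneg (d - t ^ 3)]
    linarith
  · have h1 : (nr⁻¹) ^ 2 ≤ nr⁻¹ := by nlinarith [mul_nonneg hv0.le (sub_nonneg.2 hv1)]
    have h2 : (nr⁻¹) ^ 2 * t ^ 4 ≤ t ^ 4 := by
      nlinarith [mul_nonneg p8 (sub_nonneg.2 (by nlinarith [mul_nonneg hv0.le (sub_nonneg.2 hv1)] : (nr⁻¹) ^ 2 ≤ 1))]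
    linarith

private lemma midA (D σ2 t e : ℝ) (hD : 0 ≤ D) (hσ : 0 ≤ σ2) (ht : 0 ≤ t) (he : 0 ≤ e) :
    (D * (σ2 + t) ^ 2) * e ^ 2 ≤ (e ^ 2 * 4 * (σ2 ^ 2 + 1)) * (D + D * t ^ 2) := by
  nlinarith [mul_nonneg (mul_nonneg (sq_nonneg e) hD) (sq_nonneg (σ2 - t)),
    mul_nonneg (mul_nonneg (sq_nonneg e) hD) (sq_nonneg (σ2 * t)),
    mul_nonneg (sq_nonneg e) hD,
    mul_nonneg (mul_nonneg (sq_nonneg e) hD) (sq_nonneg t),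
    mul_nonneg (mul_nonneg (sq_nonneg e) hD) (sq_nonneg σ2)]

private lemma midB (D σ2 t e : ℝ) (hD : 0 ≤ D) (hσ : 0 ≤ σ2) (ht : 0 ≤ t) (he : 0 ≤ e) :
    (D * (σ2 + t) ^ 3) * e ^ 3 ≤ (e ^ 3 * 8 * (σ2 ^ 3 + 1)) * (D + D * t ^ 3) := by
  have he3 : (0:ℝ) ≤ e ^ 3 := by positivity
  have hP : (σ2 + t) ^ 3 ≤ 8 * (σ2 ^ 3 + t ^ 3) := by
    have := two_pow_bound' 3 σ2 t hσ ht
    norm_num at this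
    linarith
  nlinarith [mul_le_mul_of_nonneg_left hP (mul_nonneg hD he3),
    mul_nonneg (mul_nonneg hD he3) (mul_nonneg (pow_nonneg hσ 3) (pow_nonneg ht 3)),
    mul_nonneg hD he3]

private lemma midC (D σ2 t e : ℝ) (hD : 0 ≤ D) (hσ : 0 ≤ σ2) (ht : 0 ≤ t) (he : 0 ≤ e) :
    (D * (σ2 + t) ^ 4) * e ^ 4 ≤ (e ^ 4 * 16 * (σ2 ^ 4 + 1)) * (D + D * t ^ 4) := by
  have he4 : (0:ℝ) ≤ e ^ 4 := by positivity
  have hP : (σ2 + t) ^ 4 ≤ 16 * (σ2 ^ 4 + t ^ 4) := by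
    have := two_pow_bound' 4 σ2 t hσ ht
    norm_num at this
    linarith
  nlinarith [mul_le_mul_of_nonneg_left hP (mul_nonneg hD he4),
    mul_nonneg (mul_nonneg hD he4) (mul_nonneg (pow_nonneg hσ 4) (pow_nonneg ht 4)),
    mul_nonneg hD he4]

private lemma mid9 (D σ2 t e : ℝ) (hD : 0 ≤ D) (hσ : 0 ≤ σ2) (ht : 0 ≤ t) (he : 0 ≤ e) :
    (D * (σ2 + t)) * e ≤ (e * (σ2 + 1)) * (D + D * t) := by
  nlinarith [mul_nonneg (mul_nonneg he hD) (mul_nonneg hσ ht), mul_nonneg he hD]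

private lemma mid4 (σ2 t e : ℝ) (hσ : 0 ≤ σ2) (ht : 0 ≤ t) (he : 0 ≤ e) :
    (2 * σ2 * t + t ^ 2) * e ^ 2 ≤ (e ^ 2 * (2 * σ2 + 1)) * (t + t ^ 2) := by
  nlinarith [mul_nonneg (sq_nonneg e) (mul_nonneg (mul_nonneg hσ ht) ht),
    mul_nonneg (sq_nonneg e) ht]

private lemma mid3 (T e d : ℝ) (hT : 0 < T) (he : 0 ≤ e) (hd0 : 0 ≤ d) :
    (d * (d + 2 * T)) * (e ^ 2 / T ^ 2) ≤ (e ^ 2 * (2 * T + 1) / T ^ 2) * (d + d ^ 2) := by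
  have hE : (0:ℝ) ≤ e ^ 2 / T ^ 2 := by positivity
  have key : (e ^ 2 * (2 * T + 1) / T ^ 2) * (d + d ^ 2)
      = (e ^ 2 / T ^ 2) * ((2 * T + 1) * (d + d ^ 2)) := by ring
  rw [key]
  have h2 : d * (d + 2 * T) ≤ (2 * T + 1) * (d + d ^ 2) := by nlinarith [mul_nonneg hT.le hd0]
  calc (d * (d + 2 * T)) * (e ^ 2 / T ^ 2) = (e ^ 2 / T ^ 2) * (d * (d + 2 * T)) := by ring
    _ ≤ (e ^ 2 / T ^ 2) * ((2 * T + 1) * (d + d ^ 2)) := mul_le_mul_of_nonneg_left h2 hE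

private lemma rem_bound (nr v d t e cc σ2 M Q dy : ℝ)
    (hnr : 1 ≤ nr) (hv : v = nr⁻¹) (hd0 : 0 ≤ d) (ht0 : 0 ≤ t) (he : 0 ≤ e)
    (hc : 0 ≤ cc) (hσ : 0 ≤ σ2) (hM : 0 ≤ M)
    (hdy0 : 0 ≤ dy) (hdy : dy ≤ d + cc * e * ((σ2 + t) * v))
    (hq17 : nr ^ 2 * d ^ 5 ≤ Q) (hq7 : v ≤ Q) (hqt4 : t ^ 4 ≤ Q) (hqt6 : t ^ 6 ≤ Q) :
    nr ^ 2 * (M * dy ^ 5 + M * d ^ 5)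
      ≤ (33 * M + 1024 * M * (cc * e) ^ 5 * (σ2 ^ 5 + 2)) * Q := by
  have hnr0 : (0:ℝ) < nr := by linarith
  have hv0 : (0:ℝ) < v := by rw [hv]; positivity
  have hv1 : v ≤ 1 := by rw [hv, inv_le_one_iff₀]; right; exact hnr
  have hg0 : (0:ℝ) ≤ cc * e * ((σ2 + t) * v) := by positivity
  have h5 : dy ^ 5 ≤ (d + cc * e * ((σ2 + t) * v)) ^ 5 := pow_le_pow_left₀ hdy0 hdy 5
  have h6 : (d + cc * e * ((σ2 + t) * v)) ^ 5
      ≤ 32 * (d ^ 5 + (cc * e) ^ 5 * ((σ2 + t) ^ 5 * v ^ 5)) := by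
    have := two_pow_bound' 5 d (cc * e * ((σ2 + t) * v)) hd0 hg0
    norm_num at this
    nlinarith [this]
  have h8 : (σ2 + t) ^ 5 ≤ 32 * (σ2 ^ 5 + t ^ 5) := by
    have := two_pow_bound' 5 σ2 t hσ ht0
    norm_num at this
    linarith
  have h9 : nr ^ 2 * v ^ 5 = v ^ 3 := by
    rw [hv]; field_simp
  have hv31 : v ^ 3 ≤ 1 := pow_le_one₀ hv0.le hv1
  have hv3v : v ^ 3 ≤ v := by
    nlinarith [mul_nonneg hv0.le (sub_nonneg.2 (pow_le_one₀ hv0.le hv1 : v ^ 2 ≤ 1))]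
  have ht5 : t ^ 5 ≤ t ^ 4 + t ^ 6 := by
    nlinarith [mul_nonneg (pow_nonneg ht0 4) (sq_nonneg (t - 1)), pow_nonneg ht0 4,
      pow_nonneg ht0 6]
  -- combine
  have hstep : dy ^ 5 ≤ 32 * d ^ 5 + 1024 * (cc * e) ^ 5 * (σ2 ^ 5 * v ^ 5 + v ^ 5 * t ^ 5) := by
    have hce5 : (0:ℝ) ≤ (cc * e) ^ 5 * v ^ 5 := by positivity
    nlinarith [h5, h6, mul_le_mul_of_nonneg_left h8 hce5]
  have hmain : nr ^ 2 * dy ^ 5 ≤ 32 * (nr ^ 2 * d ^ 5)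
      + 1024 * (cc * e) ^ 5 * (σ2 ^ 5 * v ^ 3 + v ^ 3 * t ^ 5) := by
    calc nr ^ 2 * dy ^ 5
        ≤ nr ^ 2 * (32 * d ^ 5 + 1024 * (cc * e) ^ 5 * (σ2 ^ 5 * v ^ 5 + v ^ 5 * t ^ 5)) :=
          mul_le_mul_of_nonneg_left hstep (by positivity)
      _ = 32 * (nr ^ 2 * d ^ 5)
          + 1024 * (cc * e) ^ 5 * (σ2 ^ 5 * (nr ^ 2 * v ^ 5) + (nr ^ 2 * v ^ 5) * t ^ 5) := by
          ring
      _ = 32 * (nr ^ 2 * d ^ 5) + 1024 * (cc * e) ^ 5 * (σ2 ^ 5 * v ^ 3 + v ^ 3 * t ^ 5) := by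
          rw [h9]
  have hlast : σ2 ^ 5 * v ^ 3 + v ^ 3 * t ^ 5 ≤ (σ2 ^ 5 + 2) * Q := by
    have h1 : σ2 ^ 5 * v ^ 3 ≤ σ2 ^ 5 * Q :=
      mul_le_mul_of_nonneg_left (hv3v.trans hq7) (by positivity)
    have h2 : v ^ 3 * t ^ 5 ≤ t ^ 5 := by
      nlinarith [mul_nonneg (pow_nonneg ht0 5) (sub_nonneg.2 hv31)]
    have h3 : t ^ 5 ≤ 2 * Q := by linarith [ht5, hqt4, hqt6]
    nlinarith [h1, h2, h3]
  have hQ0 : 0 ≤ Q := le_trans hv0.le hq7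
  nlinarith [hmain, hlast, mul_le_mul_of_nonneg_left hq17 hM,
    mul_le_mul_of_nonneg_left hlast (by positivity : (0:ℝ) ≤ 1024 * M * (cc * e) ^ 5),
    mul_le_mul_of_nonneg_left hmain hM, mul_nonneg hM (pow_nonneg hd0 5)]

private lemma atom_identity (x s nn θ σ2 a2 a3 a4 c : ℝ)
    (hx : x ≠ 0) (hn : nn ≠ 0) (hθ : θ ≠ 0) :
    nn ^ 2 * (a2 * ((x + c * s * x⁻¹ * nn⁻¹ - θ) ^ 2 - (x - θ) ^ 2)
        + a3 * ((x + c * s * x⁻¹ * nn⁻¹ - θ) ^ 3 - (x - θ) ^ 3)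
        + a4 * ((x + c * s * x⁻¹ * nn⁻¹ - θ) ^ 4 - (x - θ) ^ 4))
      - ((2 * a2 * c * σ2 / θ) * (nn * (x - θ))
        + (-(2 * a2 * c * σ2 / θ ^ 2) + 3 * a3 * c * σ2 / θ) * (nn * (x - θ) ^ 2)
        + (2 * a2 * c / θ) * (nn * ((x - θ) * (s - σ2)))
        + a2 * c ^ 2 * σ2 ^ 2 / θ ^ 2)
      = (2 * a2 * c * σ2 / θ ^ 2) * (nn * (x - θ) ^ 3 * x⁻¹)
        + (-(2 * a2 * c / θ)) * (nn * (x - θ) ^ 2 * (s - σ2) * x⁻¹)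
        + (a2 * c ^ 2 * σ2 ^ 2) * ((x⁻¹) ^ 2 - 1 / θ ^ 2)
        + (a2 * c ^ 2) * ((2 * σ2 * (s - σ2) + (s - σ2) ^ 2) * (x⁻¹) ^ 2)
        + (-(3 * a3 * c * σ2 / θ)) * (nn * (x - θ) ^ 3 * x⁻¹)
        + (3 * a3 * c) * (nn * (x - θ) ^ 2 * (s - σ2) * x⁻¹)
        + (3 * a3 * c ^ 2) * ((x - θ) * s ^ 2 * (x⁻¹) ^ 2)
        + (a3 * c ^ 3) * (nn⁻¹ * s ^ 3 * (x⁻¹) ^ 3)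
        + (4 * a4 * c) * (nn * (x - θ) ^ 3 * s * x⁻¹)
        + (6 * a4 * c ^ 2) * ((x - θ) ^ 2 * s ^ 2 * (x⁻¹) ^ 2)
        + (4 * a4 * c ^ 3) * (nn⁻¹ * (x - θ) * s ^ 3 * (x⁻¹) ^ 3)
        + (a4 * c ^ 4) * ((nn⁻¹) ^ 2 * s ^ 4 * (x⁻¹) ^ 4) := by
  field_simp
  ring

private lemma err_pointwise
    {θ σ2 ε C M c2 c3 c4 : ℝ} {R : ℝ → ℝ}
    (hθ : θ ≠ 0) (hσ2 : 0 < σ2) (hε : 0 < ε) (hM0 : 0 ≤ M)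
    (htay : ∀ y : ℝ, |R y - (R θ + c2 / 2 * (y - θ) ^ 2 + c3 / 6 * (y - θ) ^ 3
      + c4 / 24 * (y - θ) ^ 4)| ≤ M * |y - θ| ^ 5)
    {B1 B2 B3 B0 : ℝ}
    (hB1 : B1 = 2 * (c2 / 2) * ((2 - C) / 2) * σ2 / θ)
    (hB2 : B2 = -(2 * (c2 / 2) * ((2 - C) / 2) * σ2 / θ ^ 2)
      + 3 * (c3 / 6) * ((2 - C) / 2) * σ2 / θ)
    (hB3 : B3 = 2 * (c2 / 2) * ((2 - C) / 2) / θ)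
    (hB0 : B0 = (c2 / 2) * ((2 - C) / 2) ^ 2 * σ2 ^ 2 / θ ^ 2) :
    ∃ K, 0 < K ∧ ∀ (n : ℕ), 1 ≤ n → ∀ x s : ℝ, ε ≤ |x| →
      |(n : ℝ) ^ 2 * (R (x * (1 + ((2 - C) * s / (2 * x ^ 2)) / (n : ℝ))) - R x)
        - (B1 * ((n : ℝ) * (x - θ)) + B2 * ((n : ℝ) * (x - θ) ^ 2)
          + B3 * ((n : ℝ) * ((x - θ) * (s - σ2))) + B0)|
      ≤ K * ((n : ℝ)⁻¹ + |x - θ| + |x - θ| ^ 2 + (n : ℝ) * |x - θ| ^ 3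
          + (n : ℝ) * |x - θ| ^ 4 + (n : ℝ) ^ 2 * |x - θ| ^ 5 + (n : ℝ) * |x - θ| ^ 6
          + |s - σ2| + (n : ℝ) * |s - σ2| ^ 2 + |s - σ2| ^ 4 + |s - σ2| ^ 6) := by
  have he0 : (0:ℝ) < ε⁻¹ := by positivity
  set e := ε⁻¹ with he
  set a2 := c2 / 2 with ha2
  set a3 := c3 / 6 with ha3
  set a4 := c4 / 24 with ha4
  set c := (2 - C) / 2 with hc
  set K1 := |2 * a2 * c * σ2 / θ ^ 2| * e with hK1
  set K2 := |(-(2 * a2 * c / θ))| * e with hK2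
  set K3 := |a2 * c ^ 2 * σ2 ^ 2| * (e ^ 2 * (2 * |θ| + 1) / |θ| ^ 2) with hK3
  set K4 := |a2 * c ^ 2| * (e ^ 2 * (2 * σ2 + 1)) with hK4
  set K5 := |(-(3 * a3 * c * σ2 / θ))| * e with hK5
  set K6 := |3 * a3 * c| * e with hK6
  set K7 := |3 * a3 * c ^ 2| * (e ^ 2 * 4 * (σ2 ^ 2 + 1)) with hK7
  set K8 := |a3 * c ^ 3| * (e ^ 3 * 8 * (σ2 ^ 3 + 1)) with hK8
  set K9 := |4 * a4 * c| * (e * (σ2 + 1)) with hK9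
  set K10 := |6 * a4 * c ^ 2| * (e ^ 2 * 4 * (σ2 ^ 2 + 1)) with hK10
  set K11 := |4 * a4 * c ^ 3| * (e ^ 3 * 8 * (σ2 ^ 3 + 1)) with hK11
  set K12 := |a4 * c ^ 4| * (e ^ 4 * 16 * (σ2 ^ 4 + 1)) with hK12
  set K13 := 33 * M + 1024 * M * (|c| * e) ^ 5 * (σ2 ^ 5 + 2) with hK13
  have hσ3 : (0:ℝ) ≤ σ2 ^ 3 + 1 := by positivity
  have hKn1 : 0 ≤ K1 := mul_nonneg (abs_nonneg _) he0.le
  have hKn2 : 0 ≤ K2 := mul_nonneg (abs_nonneg _) he0.le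
  have hKn3 : 0 ≤ K3 := mul_nonneg (abs_nonneg _) (by positivity)
  have hKn4 : 0 ≤ K4 :=
    mul_nonneg (abs_nonneg _) (mul_nonneg (sq_nonneg e) (by linarith))
  have hKn5 : 0 ≤ K5 := mul_nonneg (abs_nonneg _) he0.le
  have hKn6 : 0 ≤ K6 := mul_nonneg (abs_nonneg _) he0.le
  have hKn7 : 0 ≤ K7 := mul_nonneg (abs_nonneg _) (by positivity)
  have hKn8 : 0 ≤ K8 := mul_nonneg (abs_nonneg _)
    (mul_nonneg (mul_nonneg (pow_nonneg he0.le 3) (by norm_num)) hσ3)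
  have hKn9 : 0 ≤ K9 := mul_nonneg (abs_nonneg _) (mul_nonneg he0.le (by linarith))
  have hKn10 : 0 ≤ K10 := mul_nonneg (abs_nonneg _) (by positivity)
  have hKn11 : 0 ≤ K11 := mul_nonneg (abs_nonneg _)
    (mul_nonneg (mul_nonneg (pow_nonneg he0.le 3) (by norm_num)) hσ3)
  have hKn12 : 0 ≤ K12 := mul_nonneg (abs_nonneg _) (by positivity)
  have hKn13 : 0 ≤ K13 := by
    rw [hK13]
    linarith only [hM0,
      mul_nonneg hM0 (by positivity : (0:ℝ) ≤ 1024 * (|c| * e) ^ 5 * (σ2 ^ 5 + 2))]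
  refine ⟨K1 + K2 + K3 + K4 + K5 + K6 + K7 + K8 + K9 + K10 + K11 + K12 + K13 + 1,
    by linarith, ?_⟩
  intro n hn x s hx
  have hn1 : (1:ℝ) ≤ (n:ℝ) := by exact_mod_cast hn
  have hnpos : (0:ℝ) < (n:ℝ) := by linarith
  have hn0 : (n:ℝ) ≠ 0 := ne_of_gt hnpos
  have hx0 : x ≠ 0 := by
    intro h; rw [h, abs_zero] at hx; linarith
  have hu : |x⁻¹| ≤ e := by
    rw [abs_inv, he]
    exact inv_anti₀ hε hx
  have hu0 : 0 ≤ |x⁻¹| := abs_nonneg _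
  set d := |x - θ| with hd
  set t := |s - σ2| with ht
  have hd0 : 0 ≤ d := abs_nonneg _
  have ht0 : 0 ≤ t := abs_nonneg _
  have hv0 : (0:ℝ) < (n:ℝ)⁻¹ := by positivity
  have hvabs : |((n:ℝ))⁻¹| = (n:ℝ)⁻¹ := abs_of_pos hv0
  have hnabs : |(n:ℝ)| = (n:ℝ) := abs_of_pos hnpos
  have hw : |s| ≤ σ2 + t := by
    have hseq : s = σ2 + (s - σ2) := by ring
    calc |s| = |σ2 + (s - σ2)| := by rw [← hseq]
      _ ≤ |σ2| + |s - σ2| := abs_add_le _ _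
      _ = σ2 + t := by rw [abs_of_pos hσ2, ht]
  -- evaluation point
  set y := x + c * s * x⁻¹ * (n:ℝ)⁻¹ with hy
  have hx'y : x * (1 + ((2 - C) * s / (2 * x ^ 2)) / (n : ℝ)) = y := by
    rw [hy, hc]; field_simp
  -- Taylor remainder
  set W := R y - R x - (a2 * ((y - θ) ^ 2 - (x - θ) ^ 2) + a3 * ((y - θ) ^ 3 - (x - θ) ^ 3)
    + a4 * ((y - θ) ^ 4 - (x - θ) ^ 4)) with hW
  have hWbd : |W| ≤ M * |y - θ| ^ 5 + M * d ^ 5 := by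
    have h1 := htay y
    have h2 := htay x
    have hWeq : W = (R y - (R θ + a2 * (y - θ) ^ 2 + a3 * (y - θ) ^ 3 + a4 * (y - θ) ^ 4))
        - (R x - (R θ + a2 * (x - θ) ^ 2 + a3 * (x - θ) ^ 3 + a4 * (x - θ) ^ 4)) := by
      rw [hW]; ring
    rw [hWeq, hd]
    exact (abs_sub _ _).trans (add_le_add h1 h2)
  have hpoly : R y - R x = (a2 * ((y - θ) ^ 2 - (x - θ) ^ 2)
      + a3 * ((y - θ) ^ 3 - (x - θ) ^ 3) + a4 * ((y - θ) ^ 4 - (x - θ) ^ 4)) + W := by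
    rw [hW]; ring
  -- base quantity
  set Q := (n : ℝ)⁻¹ + d + d ^ 2 + (n : ℝ) * d ^ 3 + (n : ℝ) * d ^ 4 + (n : ℝ) ^ 2 * d ^ 5
    + (n : ℝ) * d ^ 6 + t + (n : ℝ) * t ^ 2 + t ^ 4 + t ^ 6 with hQ
  have Hq := q_dom (n:ℝ) d t hn1 hd0 ht0
  rw [← hQ] at Hq
  obtain ⟨hq1, hq2, hq16, hq15, hq11, hq8, hq9, hq12, hq13, hq14, hq17, hq7, hqt4,
    hqt6, hQ0⟩ := Hq
  -- generic helpers
  have hsplitu1 : ∀ A Abd : ℝ, |A| ≤ Abd → |A * x⁻¹| ≤ Abd * e := by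
    intro A Abd hA
    rw [abs_mul]
    exact mul_le_mul hA hu hu0 ((abs_nonneg A).trans hA)
  have hsplitu : ∀ (A Abd : ℝ) (k : ℕ), |A| ≤ Abd → |A * (x⁻¹) ^ k| ≤ Abd * e ^ k := by
    intro A Abd k hA
    rw [abs_mul, abs_pow]
    exact mul_le_mul hA (pow_le_pow_left₀ hu0 hu k) (by positivity) ((abs_nonneg A).trans hA)
  have hfin1 : ∀ co Z Wc Y : ℝ, |Z| ≤ Y * Wc → 0 ≤ Wc → Y ≤ Q → |co * Z| ≤ |co| * Wc * Q := by
    intro co Z Wc Y h1 h2 h4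
    rw [abs_mul]
    calc |co| * |Z| ≤ |co| * (Y * Wc) := mul_le_mul_of_nonneg_left h1 (abs_nonneg _)
      _ = |co| * Wc * Y := by ring
      _ ≤ |co| * Wc * Q := mul_le_mul_of_nonneg_left h4 (mul_nonneg (abs_nonneg _) h2)
  have hfin2 : ∀ co Z Wc Y : ℝ, |Z| ≤ Wc * Y → 0 ≤ Wc → Y ≤ Q → |co * Z| ≤ |co| * Wc * Q := by
    intro co Z Wc Y h1 h2 h4
    rw [abs_mul]
    calc |co| * |Z| ≤ |co| * (Wc * Y) := mul_le_mul_of_nonneg_left h1 (abs_nonneg _)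
      _ = |co| * Wc * Y := by ring
      _ ≤ |co| * Wc * Q := mul_le_mul_of_nonneg_left h4 (mul_nonneg (abs_nonneg _) h2)
  -- A1, A5
  have em1 : |(n:ℝ) * (x - θ) ^ 3| = (n:ℝ) * d ^ 3 := by
    rw [abs_mul, abs_pow, hnabs, ← hd]
  have hZ1 : |((n:ℝ) * (x - θ) ^ 3) * x⁻¹| ≤ ((n:ℝ) * d ^ 3) * e :=
    hsplitu1 _ _ (le_of_eq em1)
  have hb1 : |(2 * a2 * c * σ2 / θ ^ 2) * (((n:ℝ) * (x - θ) ^ 3) * x⁻¹)| ≤ K1 * Q := by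
    rw [hK1]; exact hfin1 _ _ _ _ hZ1 he0.le hq1
  have hb5 : |(-(3 * a3 * c * σ2 / θ)) * (((n:ℝ) * (x - θ) ^ 3) * x⁻¹)| ≤ K5 * Q := by
    rw [hK5]; exact hfin1 _ _ _ _ hZ1 he0.le hq1
  -- A2, A6
  have em2 : |(n:ℝ) * (x - θ) ^ 2 * (s - σ2)| = (n:ℝ) * d ^ 2 * t := by
    rw [abs_mul, abs_mul, abs_pow, hnabs, ← hd, ← ht]
  have hZ2 : |((n:ℝ) * (x - θ) ^ 2 * (s - σ2)) * x⁻¹| ≤ ((n:ℝ) * d ^ 2 * t) * e :=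
    hsplitu1 _ _ (le_of_eq em2)
  have hb2 : |(-(2 * a2 * c / θ)) * (((n:ℝ) * (x - θ) ^ 2 * (s - σ2)) * x⁻¹)| ≤ K2 * Q := by
    rw [hK2]; exact hfin1 _ _ _ _ hZ2 he0.le hq2
  have hb6 : |(3 * a3 * c) * (((n:ℝ) * (x - θ) ^ 2 * (s - σ2)) * x⁻¹)| ≤ K6 * Q := by
    rw [hK6]; exact hfin1 _ _ _ _ hZ2 he0.le hq2
  -- A3
  have hzeq : (x⁻¹) ^ 2 - 1 / θ ^ 2 = -(((x - θ) * (x + θ)) * (x⁻¹) ^ 2) / θ ^ 2 := by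
    field_simp; ring
  have hxθ2 : |x + θ| ≤ d + 2 * |θ| := by
    have hxx : x + θ = (x - θ) + 2 * θ := by ring
    rw [hxx]
    refine (abs_add_le _ _).trans (le_of_eq ?_)
    rw [abs_mul, abs_two, ← hd]
  have hZ3 : |(x⁻¹) ^ 2 - 1 / θ ^ 2|
      ≤ (e ^ 2 * (2 * |θ| + 1) / |θ| ^ 2) * (d + d ^ 2) := by
    rw [hzeq, abs_div, abs_neg, abs_mul, abs_mul, abs_pow, abs_pow, ← hd]
    rw [div_le_iff₀ (pow_pos (abs_pos.mpr hθ) 2)]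
    have hstep : d * |x + θ| * |x⁻¹| ^ 2 ≤ d * (d + 2 * |θ|) * e ^ 2 :=
      mul_le_mul (mul_le_mul_of_nonneg_left hxθ2 hd0) (pow_le_pow_left₀ hu0 hu 2)
        (by positivity) (by positivity)
    refine hstep.trans ?_
    have heq2 : (e ^ 2 * (2 * |θ| + 1) / |θ| ^ 2) * (d + d ^ 2) * |θ| ^ 2
        = e ^ 2 * (2 * |θ| + 1) * (d + d ^ 2) := by
      field_simp
    rw [heq2]
    linarith only [mul_nonneg (sq_nonneg e) (by positivity : (0:ℝ) ≤ 2 * |θ| * d ^ 2 + d)]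
  have hb3 : |(a2 * c ^ 2 * σ2 ^ 2) * ((x⁻¹) ^ 2 - 1 / θ ^ 2)| ≤ K3 * Q := by
    rw [hK3]; exact hfin2 _ _ _ _ hZ3 (by positivity) hq15
  -- A4
  have em4 : |2 * σ2 * (s - σ2) + (s - σ2) ^ 2| ≤ 2 * σ2 * t + t ^ 2 := by
    refine (abs_add_le _ _).trans (le_of_eq ?_)
    rw [abs_mul, abs_mul, abs_two, abs_of_pos hσ2, abs_pow, ← ht]
  have hZ4 : |(2 * σ2 * (s - σ2) + (s - σ2) ^ 2) * (x⁻¹) ^ 2|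
      ≤ (e ^ 2 * (2 * σ2 + 1)) * (t + t ^ 2) :=
    (hsplitu _ _ 2 em4).trans (mid4 σ2 t e hσ2.le ht0 he0.le)
  have hb4 : |(a2 * c ^ 2) * ((2 * σ2 * (s - σ2) + (s - σ2) ^ 2) * (x⁻¹) ^ 2)| ≤ K4 * Q := by
    rw [hK4]
    exact hfin2 _ _ _ _ hZ4 (mul_nonneg (sq_nonneg e) (by linarith)) hq16
  -- A7
  have em7 : |(x - θ) * s ^ 2| ≤ d * (σ2 + t) ^ 2 := by
    rw [abs_mul, abs_pow, ← hd]
    exact mul_le_mul_of_nonneg_left (pow_le_pow_left₀ (abs_nonneg s) hw 2) hd0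
  have hZ7 : |((x - θ) * s ^ 2) * (x⁻¹) ^ 2|
      ≤ (e ^ 2 * 4 * (σ2 ^ 2 + 1)) * (d + d * t ^ 2) :=
    (hsplitu _ _ 2 em7).trans (midA d σ2 t e hd0 hσ2.le ht0 he0.le)
  have hb7 : |(3 * a3 * c ^ 2) * (((x - θ) * s ^ 2) * (x⁻¹) ^ 2)| ≤ K7 * Q := by
    rw [hK7]; exact hfin2 _ _ _ _ hZ7 (by positivity) hq11
  -- A8
  have em8 : |(n:ℝ)⁻¹ * s ^ 3| ≤ (n:ℝ)⁻¹ * (σ2 + t) ^ 3 := by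
    rw [abs_mul, hvabs, abs_pow]
    exact mul_le_mul_of_nonneg_left (pow_le_pow_left₀ (abs_nonneg s) hw 3) hv0.le
  have hZ8 : |((n:ℝ)⁻¹ * s ^ 3) * (x⁻¹) ^ 3|
      ≤ (e ^ 3 * 8 * (σ2 ^ 3 + 1)) * ((n:ℝ)⁻¹ + (n:ℝ)⁻¹ * t ^ 3) :=
    (hsplitu _ _ 3 em8).trans (midB ((n:ℝ)⁻¹) σ2 t e hv0.le hσ2.le ht0 he0.le)
  have hb8 : |(a3 * c ^ 3) * (((n:ℝ)⁻¹ * s ^ 3) * (x⁻¹) ^ 3)| ≤ K8 * Q := by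
    rw [hK8]
    exact hfin2 _ _ _ _ hZ8
      (mul_nonneg (mul_nonneg (pow_nonneg he0.le 3) (by norm_num)) hσ3) hq8
  -- A9
  have em9 : |(n:ℝ) * (x - θ) ^ 3 * s| ≤ ((n:ℝ) * d ^ 3) * (σ2 + t) := by
    rw [abs_mul, abs_mul, abs_pow, hnabs, ← hd]
    exact mul_le_mul_of_nonneg_left hw (by positivity)
  have hZ9 : |((n:ℝ) * (x - θ) ^ 3 * s) * x⁻¹|
      ≤ (e * (σ2 + 1)) * ((n:ℝ) * d ^ 3 + (n:ℝ) * d ^ 3 * t) :=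
    (hsplitu1 _ _ em9).trans (mid9 ((n:ℝ) * d ^ 3) σ2 t e (by positivity) hσ2.le ht0 he0.le)
  have hb9 : |(4 * a4 * c) * (((n:ℝ) * (x - θ) ^ 3 * s) * x⁻¹)| ≤ K9 * Q := by
    rw [hK9]
    exact hfin2 _ _ _ _ hZ9 (mul_nonneg he0.le (by linarith)) hq9
  -- A10
  have em10 : |(x - θ) ^ 2 * s ^ 2| ≤ d ^ 2 * (σ2 + t) ^ 2 := by
    rw [abs_mul, abs_pow, abs_pow, ← hd]
    exact mul_le_mul_of_nonneg_left (pow_le_pow_left₀ (abs_nonneg s) hw 2) (by positivity)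
  have hZ10 : |((x - θ) ^ 2 * s ^ 2) * (x⁻¹) ^ 2|
      ≤ (e ^ 2 * 4 * (σ2 ^ 2 + 1)) * (d ^ 2 + d ^ 2 * t ^ 2) :=
    (hsplitu _ _ 2 em10).trans (midA (d ^ 2) σ2 t e (by positivity) hσ2.le ht0 he0.le)
  have hb10 : |(6 * a4 * c ^ 2) * (((x - θ) ^ 2 * s ^ 2) * (x⁻¹) ^ 2)| ≤ K10 * Q := by
    rw [hK10]; exact hfin2 _ _ _ _ hZ10 (by positivity) hq12
  -- A11
  have em11 : |(n:ℝ)⁻¹ * (x - θ) * s ^ 3| ≤ ((n:ℝ)⁻¹ * d) * (σ2 + t) ^ 3 := by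
    rw [abs_mul, abs_mul, hvabs, ← hd, abs_pow]
    exact mul_le_mul_of_nonneg_left (pow_le_pow_left₀ (abs_nonneg s) hw 3) (by positivity)
  have hZ11 : |((n:ℝ)⁻¹ * (x - θ) * s ^ 3) * (x⁻¹) ^ 3|
      ≤ (e ^ 3 * 8 * (σ2 ^ 3 + 1)) * ((n:ℝ)⁻¹ * d + (n:ℝ)⁻¹ * d * t ^ 3) :=
    (hsplitu _ _ 3 em11).trans
      (midB ((n:ℝ)⁻¹ * d) σ2 t e (by positivity) hσ2.le ht0 he0.le)
  have hb11 : |(4 * a4 * c ^ 3) * (((n:ℝ)⁻¹ * (x - θ) * s ^ 3) * (x⁻¹) ^ 3)| ≤ K11 * Q := by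
    rw [hK11]
    exact hfin2 _ _ _ _ hZ11
      (mul_nonneg (mul_nonneg (pow_nonneg he0.le 3) (by norm_num)) hσ3) hq13
  -- A12
  have em12 : |((n:ℝ)⁻¹) ^ 2 * s ^ 4| ≤ ((n:ℝ)⁻¹) ^ 2 * (σ2 + t) ^ 4 := by
    rw [abs_mul, abs_pow, hvabs, abs_pow]
    exact mul_le_mul_of_nonneg_left (pow_le_pow_left₀ (abs_nonneg s) hw 4) (by positivity)
  have hZ12 : |(((n:ℝ)⁻¹) ^ 2 * s ^ 4) * (x⁻¹) ^ 4|
      ≤ (e ^ 4 * 16 * (σ2 ^ 4 + 1)) * (((n:ℝ)⁻¹) ^ 2 + ((n:ℝ)⁻¹) ^ 2 * t ^ 4) :=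
    (hsplitu _ _ 4 em12).trans
      (midC (((n:ℝ)⁻¹) ^ 2) σ2 t e (by positivity) hσ2.le ht0 he0.le)
  have hb12 : |(a4 * c ^ 4) * ((((n:ℝ)⁻¹) ^ 2 * s ^ 4) * (x⁻¹) ^ 4)| ≤ K12 * Q := by
    rw [hK12]; exact hfin2 _ _ _ _ hZ12 (by positivity) hq14
  -- remainder
  have hdy : |y - θ| ≤ d + |c| * e * ((σ2 + t) * (n:ℝ)⁻¹) := by
    have hyθ : y - θ = (x - θ) + c * s * x⁻¹ * (n:ℝ)⁻¹ := by rw [hy]; ring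
    rw [hyθ]
    refine (abs_add_le _ _).trans ?_
    rw [← hd]
    refine add_le_add le_rfl ?_
    calc |c * s * x⁻¹ * (n:ℝ)⁻¹| = |c| * |s| * |x⁻¹| * (n:ℝ)⁻¹ := by
          rw [abs_mul, abs_mul, abs_mul, hvabs]
      _ ≤ |c| * (σ2 + t) * e * (n:ℝ)⁻¹ := by
          refine mul_le_mul_of_nonneg_right ?_ hv0.le
          exact mul_le_mul (mul_le_mul_of_nonneg_left hw (abs_nonneg c)) hu hu0
            (by positivity)
      _ = |c| * e * ((σ2 + t) * (n:ℝ)⁻¹) := by ring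
  have hrem : |(n:ℝ) ^ 2 * W| ≤ K13 * Q := by
    rw [abs_mul, abs_pow, hnabs, hK13]
    calc (n:ℝ) ^ 2 * |W| ≤ (n:ℝ) ^ 2 * (M * |y - θ| ^ 5 + M * d ^ 5) :=
        mul_le_mul_of_nonneg_left hWbd (by positivity)
      _ ≤ (33 * M + 1024 * M * (|c| * e) ^ 5 * (σ2 ^ 5 + 2)) * Q :=
        rem_bound (n:ℝ) ((n:ℝ)⁻¹) d t e (|c|) σ2 M Q (|y - θ|) hn1 rfl hd0 ht0 he0.le
          (abs_nonneg c) hσ2.le hM0 (abs_nonneg _) hdy hq17 hq7 hqt4 hqt6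
  -- the identity
  have hid : (n : ℝ) ^ 2 * (R (x * (1 + ((2 - C) * s / (2 * x ^ 2)) / (n : ℝ))) - R x)
      - (B1 * ((n : ℝ) * (x - θ)) + B2 * ((n : ℝ) * (x - θ) ^ 2)
        + B3 * ((n : ℝ) * ((x - θ) * (s - σ2))) + B0)
      = (2 * a2 * c * σ2 / θ ^ 2) * (((n:ℝ) * (x - θ) ^ 3) * x⁻¹)
        + (-(2 * a2 * c / θ)) * (((n:ℝ) * (x - θ) ^ 2 * (s - σ2)) * x⁻¹)
        + (a2 * c ^ 2 * σ2 ^ 2) * ((x⁻¹) ^ 2 - 1 / θ ^ 2)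
        + (a2 * c ^ 2) * ((2 * σ2 * (s - σ2) + (s - σ2) ^ 2) * (x⁻¹) ^ 2)
        + (-(3 * a3 * c * σ2 / θ)) * (((n:ℝ) * (x - θ) ^ 3) * x⁻¹)
        + (3 * a3 * c) * (((n:ℝ) * (x - θ) ^ 2 * (s - σ2)) * x⁻¹)
        + (3 * a3 * c ^ 2) * (((x - θ) * s ^ 2) * (x⁻¹) ^ 2)
        + (a3 * c ^ 3) * (((n:ℝ)⁻¹ * s ^ 3) * (x⁻¹) ^ 3)
        + (4 * a4 * c) * (((n:ℝ) * (x - θ) ^ 3 * s) * x⁻¹)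
        + (6 * a4 * c ^ 2) * (((x - θ) ^ 2 * s ^ 2) * (x⁻¹) ^ 2)
        + (4 * a4 * c ^ 3) * (((n:ℝ)⁻¹ * (x - θ) * s ^ 3) * (x⁻¹) ^ 3)
        + (a4 * c ^ 4) * ((((n:ℝ)⁻¹) ^ 2 * s ^ 4) * (x⁻¹) ^ 4)
        + (n : ℝ) ^ 2 * W := by
    rw [hx'y, hpoly, hB1, hB2, hB3, hB0, hy]
    linear_combination atom_identity x s (n:ℝ) θ σ2 a2 a3 a4 c hx0 hn0 hθ
  rw [hid]
  have htri : |(2 * a2 * c * σ2 / θ ^ 2) * (((n:ℝ) * (x - θ) ^ 3) * x⁻¹)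
        + (-(2 * a2 * c / θ)) * (((n:ℝ) * (x - θ) ^ 2 * (s - σ2)) * x⁻¹)
        + (a2 * c ^ 2 * σ2 ^ 2) * ((x⁻¹) ^ 2 - 1 / θ ^ 2)
        + (a2 * c ^ 2) * ((2 * σ2 * (s - σ2) + (s - σ2) ^ 2) * (x⁻¹) ^ 2)
        + (-(3 * a3 * c * σ2 / θ)) * (((n:ℝ) * (x - θ) ^ 3) * x⁻¹)
        + (3 * a3 * c) * (((n:ℝ) * (x - θ) ^ 2 * (s - σ2)) * x⁻¹)
        + (3 * a3 * c ^ 2) * (((x - θ) * s ^ 2) * (x⁻¹) ^ 2)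
        + (a3 * c ^ 3) * (((n:ℝ)⁻¹ * s ^ 3) * (x⁻¹) ^ 3)
        + (4 * a4 * c) * (((n:ℝ) * (x - θ) ^ 3 * s) * x⁻¹)
        + (6 * a4 * c ^ 2) * (((x - θ) ^ 2 * s ^ 2) * (x⁻¹) ^ 2)
        + (4 * a4 * c ^ 3) * (((n:ℝ)⁻¹ * (x - θ) * s ^ 3) * (x⁻¹) ^ 3)
        + (a4 * c ^ 4) * ((((n:ℝ)⁻¹) ^ 2 * s ^ 4) * (x⁻¹) ^ 4)
        + (n : ℝ) ^ 2 * W|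
      ≤ K1 * Q + K2 * Q + K3 * Q + K4 * Q + K5 * Q + K6 * Q + K7 * Q + K8 * Q + K9 * Q
        + K10 * Q + K11 * Q + K12 * Q + K13 * Q := by
    refine (abs_add_le _ _).trans (add_le_add ?_ hrem)
    refine (abs_add_le _ _).trans (add_le_add ?_ hb12)
    refine (abs_add_le _ _).trans (add_le_add ?_ hb11)
    refine (abs_add_le _ _).trans (add_le_add ?_ hb10)
    refine (abs_add_le _ _).trans (add_le_add ?_ hb9)
    refine (abs_add_le _ _).trans (add_le_add ?_ hb8)
    refine (abs_add_le _ _).trans (add_le_add ?_ hb7)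
    refine (abs_add_le _ _).trans (add_le_add ?_ hb6)
    refine (abs_add_le _ _).trans (add_le_add ?_ hb5)
    refine (abs_add_le _ _).trans (add_le_add ?_ hb4)
    refine (abs_add_le _ _).trans (add_le_add ?_ hb3)
    exact (abs_add_le _ _).trans (add_le_add hb1 hb2)
  refine htri.trans ?_
  have hdist : (K1 + K2 + K3 + K4 + K5 + K6 + K7 + K8 + K9 + K10 + K11 + K12 + K13 + 1) * Q
      = K1 * Q + K2 * Q + K3 * Q + K4 * Q + K5 * Q + K6 * Q + K7 * Q + K8 * Q + K9 * Q
        + K10 * Q + K11 * Q + K12 * Q + K13 * Q + Q := by ring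
  rw [hdist]
  linarith only [hQ0]

/-- Data-driven plug-in adjustment, single parameter: the random
adjustment coefficient `λ_n* = (2−C)σ̂_n²/(2θ̂_n²)` improves the expected reward over PTO
at rate `n⁻²`, with asymptotic improvement `−R''(θ)(2−C)²σ⁴/(8θ²) ≥ 0`. -/
theorem stmt_12
    {Ω : Type*} [MeasurableSpace Ω] (μ : Measure Ω) [IsProbabilityMeasure μ]
    (θ : ℝ) (hθ : θ ≠ 0)
    (θhat : ℕ → Ω → ℝ) (hmeasθ : ∀ n, Measurable (θhat n))
    (σhat2 : ℕ → Ω → ℝ) (hmeasσ : ∀ n, Measurable (σhat2 n))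
    (hmomθ : ∀ (n k : ℕ), Integrable (fun ω => |θhat n ω - θ| ^ k) μ)
    (σ2 : ℝ) (hσ2 : 0 < σ2)
    (hmomσ : ∀ (n j : ℕ), Integrable (fun ω => (σhat2 n ω - σ2) ^ j) μ)
    (hmomcr : ∀ n : ℕ, Integrable (fun ω => (θhat n ω - θ) * (σhat2 n ω - σ2)) μ)
    -- (A1.1) root-n consistency
    (hA11 : Tendsto (fun n : ℕ => (n : ℝ) * ∫ ω, (θhat n ω - θ) ^ 2 ∂μ) atTop (nhds σ2))
    -- (A1.2) diminishing bias
    (hA12 : (fun n : ℕ => ∫ ω, (θhat n ω - θ) ∂μ) =o[atTop] fun n : ℕ => (n : ℝ)⁻¹)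
    -- (A1.3) higher-order moments
    (hA13 : ∀ k : ℕ, 3 ≤ k →
      (fun n : ℕ => ∫ ω, |θhat n ω - θ| ^ k ∂μ) =O[atTop]
        fun n : ℕ => (n : ℝ) ^ (-(k : ℝ) / 2))
    -- (A3.1) variance estimator nearly unbiased
    (hA31 : (fun n : ℕ => ∫ ω, (σhat2 n ω - σ2) ∂μ) =o[atTop] fun n : ℕ => (n : ℝ)⁻¹)
    -- (A3.2) higher moments of the variance estimator
    (hA32 : ∀ j : ℕ, 2 ≤ j →
      (fun n : ℕ => ∫ ω, (σhat2 n ω - σ2) ^ j ∂μ) =O[atTop]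
        fun n : ℕ => ((n : ℝ) ^ j)⁻¹)
    -- (A3.3) asymptotically uncorrelated with the estimation error
    (hA33 : (fun n : ℕ => ∫ ω, (θhat n ω - θ) * (σhat2 n ω - σ2) ∂μ) =o[atTop]
      fun n : ℕ => (n : ℝ)⁻¹)
    -- (A4) estimator bounded away from zero
    (ε : ℝ) (hε : 0 < ε) (hA4 : ∀ n, ∀ᵐ ω ∂μ, ε ≤ |θhat n ω|)
    (R : ℝ → ℝ)
    -- R is five times differentiable
    (hdiff : ∀ k < 5, Differentiable ℝ (iteratedDeriv k R))
    (hfoc : deriv R θ = 0) (hconc : iteratedDeriv 2 R θ < 0)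
    -- derivative-ratio condition
    (C : ℝ) (hratio : iteratedDeriv 3 R θ / iteratedDeriv 2 R θ = C / θ)
    -- bounded fifth derivative
    (M : ℝ) (hM : 0 < M) (hbd : ∀ x : ℝ, |iteratedDeriv 5 R x| ≤ M)
    -- expectations of the rewards exist
    (hRint0 : ∀ n : ℕ, Integrable (fun ω => R (θhat n ω)) μ)
    (hRint1 : ∀ n : ℕ, Integrable
      (fun ω => R (θhat n ω *
        (1 + ((2 - C) * σhat2 n ω / (2 * θhat n ω ^ 2)) / (n : ℝ)))) μ) :
    Tendsto
      (fun n : ℕ => (n : ℝ) ^ 2 *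
        ((∫ ω, R (θhat n ω *
            (1 + ((2 - C) * σhat2 n ω / (2 * θhat n ω ^ 2)) / (n : ℝ))) ∂μ) -
          ∫ ω, R (θhat n ω) ∂μ))
      atTop (nhds (-(iteratedDeriv 2 R θ) * (2 - C) ^ 2 * σ2 ^ 2 / (8 * θ ^ 2))) ∧
    0 ≤ -(iteratedDeriv 2 R θ) * (2 - C) ^ 2 * σ2 ^ 2 / (8 * θ ^ 2) := by

  have hc2ne : iteratedDeriv 2 R θ ≠ 0 := ne_of_lt hconc
  have hc3' : iteratedDeriv 3 R θ = C * iteratedDeriv 2 R θ / θ := by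
    rw [eq_div_iff hθ]
    exact (div_eq_div_iff hc2ne hθ).mp hratio
  -- positivity of the limit
  have hpos : 0 ≤ -(iteratedDeriv 2 R θ) * (2 - C) ^ 2 * σ2 ^ 2 / (8 * θ ^ 2) := by
    apply div_nonneg _ (by positivity)
    have h1 : (0:ℝ) ≤ -(iteratedDeriv 2 R θ) := by linarith
    exact mul_nonneg (mul_nonneg h1 (sq_nonneg _)) (sq_nonneg _)
  refine ⟨?_, hpos⟩
  -- Taylor estimate
  have htay : ∀ x : ℝ, |R x - (R θ + iteratedDeriv 2 R θ / 2 * (x - θ) ^ 2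
      + iteratedDeriv 3 R θ / 6 * (x - θ) ^ 3
      + iteratedDeriv 4 R θ / 24 * (x - θ) ^ 4)| ≤ M * |x - θ| ^ 5 := by
    intro x
    have h := taylor_bound (θ := θ) hdiff hM.le hbd x
    rw [iteratedDeriv_one, hfoc] at h
    have heq : R θ + 0 * (x - θ) + iteratedDeriv 2 R θ / 2 * (x - θ) ^ 2
        + iteratedDeriv 3 R θ / 6 * (x - θ) ^ 3 + iteratedDeriv 4 R θ / 24 * (x - θ) ^ 4
        = R θ + iteratedDeriv 2 R θ / 2 * (x - θ) ^ 2
        + iteratedDeriv 3 R θ / 6 * (x - θ) ^ 3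
        + iteratedDeriv 4 R θ / 24 * (x - θ) ^ 4 := by ring
    rwa [heq] at h
  obtain ⟨K, hK0, hKbd⟩ := err_pointwise hθ hσ2 hε hM.le htay rfl rfl rfl rfl
  set B1 := 2 * (iteratedDeriv 2 R θ / 2) * ((2 - C) / 2) * σ2 / θ with hB1
  set B2 := -(2 * (iteratedDeriv 2 R θ / 2) * ((2 - C) / 2) * σ2 / θ ^ 2)
      + 3 * (iteratedDeriv 3 R θ / 6) * ((2 - C) / 2) * σ2 / θ with hB2
  set B3 := 2 * (iteratedDeriv 2 R θ / 2) * ((2 - C) / 2) / θ with hB3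
  set B0 := (iteratedDeriv 2 R θ / 2) * ((2 - C) / 2) ^ 2 * σ2 ^ 2 / θ ^ 2 with hB0
  -- integrability of basic quantities
  have iD1 : ∀ n, Integrable (fun ω => θhat n ω - θ) μ := by
    intro n
    refine Integrable.mono' (by simpa using hmomθ n 1)
      ((hmeasθ n).sub_const θ).aestronglyMeasurable
      (Eventually.of_forall fun ω => ?_)
    rw [Real.norm_eq_abs]
  have iDabs : ∀ n k, Integrable (fun ω => |θhat n ω - θ| ^ k) μ := hmomθ
  have iD2 : ∀ n, Integrable (fun ω => (θhat n ω - θ) ^ 2) μ := by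
    intro n
    exact (hmomθ n 2).congr (Eventually.of_forall fun ω => sq_abs _)
  have habs_bound : ∀ (a : ℝ) (k : ℕ), |a| ^ k ≤ 1 + (a ^ 2) ^ k := by
    intro a k
    have h2 : (0:ℝ) ≤ (a ^ 2) ^ k := by positivity
    rcases le_total (|a|) 1 with h | h
    · have h1 : |a| ^ k ≤ 1 := pow_le_one₀ (abs_nonneg a) h
      linarith
    · have h1 : |a| ^ k ≤ |a| ^ (2 * k) := pow_le_pow_right₀ h (by omega)
      have h3 : |a| ^ (2 * k) = (a ^ 2) ^ k := by
        rw [pow_mul, sq_abs]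
      linarith [h1, h3 ▸ h1]
  have iSabs : ∀ n k, Integrable (fun ω => |σhat2 n ω - σ2| ^ k) μ := by
    intro n k
    have hg : Integrable (fun ω => 1 + ((σhat2 n ω - σ2) ^ 2) ^ k) μ :=
      (integrable_const 1).add ((hmomσ n (2 * k)).congr
        (Eventually.of_forall fun ω => pow_mul _ 2 k))
    refine Integrable.mono' hg
      ((((hmeasσ n).sub_const σ2).abs.pow_const _).aestronglyMeasurable)
      (Eventually.of_forall fun ω => ?_)
    rw [Real.norm_eq_abs, abs_of_nonneg (by positivity)]
    exact habs_bound _ _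
  -- basic limits
  have hinv : Tendsto (fun n : ℕ => ((n : ℝ))⁻¹) atTop (nhds 0) :=
    tendsto_inv_atTop_zero.comp tendsto_natCast_atTop_atTop
  have t1 : Tendsto (fun n : ℕ => (n : ℝ) * ∫ ω, (θhat n ω - θ) ∂μ) atTop (nhds 0) :=
    tendsto_mul_of_isLittleO hA12
  have t3 : Tendsto (fun n : ℕ => (n : ℝ) * ∫ ω, (θhat n ω - θ) * (σhat2 n ω - σ2) ∂μ)
      atTop (nhds 0) := tendsto_mul_of_isLittleO hA33
  have tD2zero : Tendsto (fun n : ℕ => ∫ ω, (θhat n ω - θ) ^ 2 ∂μ) atTop (nhds 0) := by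
    have h := hinv.mul hA11
    rw [zero_mul] at h
    refine h.congr' ?_
    filter_upwards [eventually_ge_atTop 1] with n hn
    have hn0 : (n:ℝ) ≠ 0 := by positivity
    field_simp
  have tDabs : Tendsto (fun n : ℕ => ∫ ω, |θhat n ω - θ| ∂μ) atTop (nhds 0) :=
    tendsto_integral_abs μ (fun n => by simpa using hmomθ n 1) iD2 tD2zero
  have tDabs2 : Tendsto (fun n : ℕ => ∫ ω, |θhat n ω - θ| ^ 2 ∂μ) atTop (nhds 0) :=
    tD2zero.congr fun n => by
      congr 1; funext ω; rw [sq_abs]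
  have tD3 : Tendsto (fun n : ℕ => (n : ℝ) * ∫ ω, |θhat n ω - θ| ^ 3 ∂μ) atTop (nhds 0) := by
    have h := tendsto_pow_mul_of_isBigO (p := 1) (hA13 3 (by norm_num))
      (by push_cast; norm_num)
    exact h.congr fun n => by rw [pow_one]
  have tD4 : Tendsto (fun n : ℕ => (n : ℝ) * ∫ ω, |θhat n ω - θ| ^ 4 ∂μ) atTop (nhds 0) := by
    have h := tendsto_pow_mul_of_isBigO (p := 1) (hA13 4 (by norm_num))
      (by push_cast; norm_num)
    exact h.congr fun n => by rw [pow_one]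
  have tD5 : Tendsto (fun n : ℕ => (n : ℝ) ^ 2 * ∫ ω, |θhat n ω - θ| ^ 5 ∂μ)
      atTop (nhds 0) :=
    tendsto_pow_mul_of_isBigO (p := 2) (hA13 5 (by norm_num)) (by push_cast; norm_num)
  have tD6 : Tendsto (fun n : ℕ => (n : ℝ) * ∫ ω, |θhat n ω - θ| ^ 6 ∂μ) atTop (nhds 0) := by
    have h := tendsto_pow_mul_of_isBigO (p := 1) (hA13 6 (by norm_num))
      (by push_cast; norm_num)
    exact h.congr fun n => by rw [pow_one]
  have tS2zero : Tendsto (fun n : ℕ => ∫ ω, (σhat2 n ω - σ2) ^ 2 ∂μ) atTop (nhds 0) := by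
    have h := tendsto_pow_mul_of_isBigO (p := 0) (isBigO_inv_pow_rpow (hA32 2 le_rfl))
      (by push_cast; norm_num)
    exact h.congr fun n => by rw [pow_zero, one_mul]
  have tSabs : Tendsto (fun n : ℕ => ∫ ω, |σhat2 n ω - σ2| ∂μ) atTop (nhds 0) :=
    tendsto_integral_abs μ (fun n => by simpa using iSabs n 1) (fun n => hmomσ n 2) tS2zero
  have tS2n : Tendsto (fun n : ℕ => (n : ℝ) * ∫ ω, |σhat2 n ω - σ2| ^ 2 ∂μ)
      atTop (nhds 0) := by
    have h := tendsto_pow_mul_of_isBigO (p := 1) (isBigO_inv_pow_rpow (hA32 2 le_rfl))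
      (by push_cast; norm_num)
    refine (h.congr fun n => ?_)
    rw [pow_one]
    congr 1
    congr 1; funext ω; rw [sq_abs]
  have tS4 : Tendsto (fun n : ℕ => ∫ ω, |σhat2 n ω - σ2| ^ 4 ∂μ) atTop (nhds 0) := by
    have h := tendsto_pow_mul_of_isBigO (p := 0) (isBigO_inv_pow_rpow (hA32 4 (by norm_num)))
      (by push_cast; norm_num)
    refine (h.congr fun n => ?_)
    rw [pow_zero, one_mul]
    congr 1; funext ω; rw [Even.pow_abs (by decide)]
  have tS6 : Tendsto (fun n : ℕ => ∫ ω, |σhat2 n ω - σ2| ^ 6 ∂μ) atTop (nhds 0) := by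
    have h := tendsto_pow_mul_of_isBigO (p := 0) (isBigO_inv_pow_rpow (hA32 6 (by norm_num)))
      (by push_cast; norm_num)
    refine (h.congr fun n => ?_)
    rw [pow_zero, one_mul]
    congr 1; funext ω; rw [Even.pow_abs (by decide)]
  -- the main part
  have iDS : ∀ n, Integrable (fun ω => (θhat n ω - θ) * (σhat2 n ω - σ2)) μ := hmomcr
  have iMain : ∀ n : ℕ, Integrable (fun ω =>
      B1 * ((n : ℝ) * (θhat n ω - θ)) + B2 * ((n : ℝ) * (θhat n ω - θ) ^ 2)
      + B3 * ((n : ℝ) * ((θhat n ω - θ) * (σhat2 n ω - σ2))) + B0) μ := fun n =>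
    ((((((iD1 n).const_mul _).const_mul _).add
      (((iD2 n).const_mul _).const_mul _)).add
      (((iDS n).const_mul _).const_mul _)).add (integrable_const B0))
  have hMainVal : ∀ n : ℕ, (∫ ω, (B1 * ((n : ℝ) * (θhat n ω - θ))
      + B2 * ((n : ℝ) * (θhat n ω - θ) ^ 2)
      + B3 * ((n : ℝ) * ((θhat n ω - θ) * (σhat2 n ω - σ2))) + B0) ∂μ)
      = B1 * ((n : ℝ) * ∫ ω, (θhat n ω - θ) ∂μ)
        + B2 * ((n : ℝ) * ∫ ω, (θhat n ω - θ) ^ 2 ∂μ)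
        + B3 * ((n : ℝ) * ∫ ω, (θhat n ω - θ) * (σhat2 n ω - σ2) ∂μ) + B0 := by
    intro n
    have i1 : Integrable (fun ω => B1 * ((n : ℝ) * (θhat n ω - θ))) μ :=
      ((iD1 n).const_mul _).const_mul _
    have i2 : Integrable (fun ω => B2 * ((n : ℝ) * (θhat n ω - θ) ^ 2)) μ :=
      ((iD2 n).const_mul _).const_mul _
    have i3 : Integrable
        (fun ω => B3 * ((n : ℝ) * ((θhat n ω - θ) * (σhat2 n ω - σ2)))) μ :=
      ((iDS n).const_mul _).const_mul _
    have i12 : Integrable (fun ω => B1 * ((n : ℝ) * (θhat n ω - θ))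
        + B2 * ((n : ℝ) * (θhat n ω - θ) ^ 2)) μ := i1.add i2
    have i123 : Integrable (fun ω => B1 * ((n : ℝ) * (θhat n ω - θ))
        + B2 * ((n : ℝ) * (θhat n ω - θ) ^ 2)
        + B3 * ((n : ℝ) * ((θhat n ω - θ) * (σhat2 n ω - σ2)))) μ := i12.add i3
    rw [integral_add i123 (integrable_const B0), integral_add i12 i3, integral_add i1 i2]
    simp only [integral_const_mul, integral_const, measure_univ, ENNReal.toReal_one, probReal_univ,
      smul_eq_mul, one_mul]
  have hsum : B1 * ((0:ℝ)) + B2 * σ2 + B3 * (0:ℝ) + B0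
      = -(iteratedDeriv 2 R θ) * (2 - C) ^ 2 * σ2 ^ 2 / (8 * θ ^ 2) := by
    rw [hB1, hB2, hB3, hB0, hc3']
    field_simp
    ring
  have hMainLim : Tendsto (fun n : ℕ => ∫ ω, (B1 * ((n : ℝ) * (θhat n ω - θ))
      + B2 * ((n : ℝ) * (θhat n ω - θ) ^ 2)
      + B3 * ((n : ℝ) * ((θhat n ω - θ) * (σhat2 n ω - σ2))) + B0) ∂μ) atTop
      (nhds (-(iteratedDeriv 2 R θ) * (2 - C) ^ 2 * σ2 ^ 2 / (8 * θ ^ 2))) := by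
    have h0 : Tendsto (fun n : ℕ =>
        B1 * ((n : ℝ) * ∫ ω, (θhat n ω - θ) ∂μ)
        + B2 * ((n : ℝ) * ∫ ω, (θhat n ω - θ) ^ 2 ∂μ)
        + B3 * ((n : ℝ) * ∫ ω, (θhat n ω - θ) * (σhat2 n ω - σ2) ∂μ) + B0) atTop
        (nhds (B1 * (0:ℝ) + B2 * σ2 + B3 * (0:ℝ) + B0)) := by
      exact (((t1.const_mul B1).add (hA11.const_mul B2)).add
        (t3.const_mul B3)).add tendsto_const_nhds
    rw [hsum] at h0
    exact h0.congr fun n => (hMainVal n).symm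
  -- the error part
  have iRdiff : ∀ n : ℕ, Integrable (fun ω => (n : ℝ) ^ 2 *
      (R (θhat n ω * (1 + ((2 - C) * σhat2 n ω / (2 * θhat n ω ^ 2)) / (n : ℝ)))
        - R (θhat n ω))) μ := fun n => ((hRint1 n).sub (hRint0 n)).const_mul _
  have iErr : ∀ n : ℕ, Integrable (fun ω => (n : ℝ) ^ 2 *
      (R (θhat n ω * (1 + ((2 - C) * σhat2 n ω / (2 * θhat n ω ^ 2)) / (n : ℝ)))
        - R (θhat n ω))
      - (B1 * ((n : ℝ) * (θhat n ω - θ)) + B2 * ((n : ℝ) * (θhat n ω - θ) ^ 2)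
        + B3 * ((n : ℝ) * ((θhat n ω - θ) * (σhat2 n ω - σ2))) + B0)) μ := fun n =>
    (iRdiff n).sub (iMain n)
  -- the dominating sequence
  have ibase : ∀ n : ℕ, Integrable (fun ω => (n : ℝ)⁻¹ + |θhat n ω - θ|
      + |θhat n ω - θ| ^ 2 + (n : ℝ) * |θhat n ω - θ| ^ 3 + (n : ℝ) * |θhat n ω - θ| ^ 4
      + (n : ℝ) ^ 2 * |θhat n ω - θ| ^ 5 + (n : ℝ) * |θhat n ω - θ| ^ 6
      + |σhat2 n ω - σ2| + (n : ℝ) * |σhat2 n ω - σ2| ^ 2 + |σhat2 n ω - σ2| ^ 4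
      + |σhat2 n ω - σ2| ^ 6) μ := by
    intro n
    exact ((((((((((integrable_const _).add (by simpa using hmomθ n 1)).add
      (hmomθ n 2)).add ((hmomθ n 3).const_mul _)).add ((hmomθ n 4).const_mul _)).add
      ((hmomθ n 5).const_mul _)).add ((hmomθ n 6).const_mul _)).add
      (by simpa using iSabs n 1)).add ((iSabs n 2).const_mul _)).add (iSabs n 4)).add
      (iSabs n 6)
  have hbaseVal : ∀ n : ℕ, (∫ ω, ((n : ℝ)⁻¹ + |θhat n ω - θ|
      + |θhat n ω - θ| ^ 2 + (n : ℝ) * |θhat n ω - θ| ^ 3 + (n : ℝ) * |θhat n ω - θ| ^ 4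
      + (n : ℝ) ^ 2 * |θhat n ω - θ| ^ 5 + (n : ℝ) * |θhat n ω - θ| ^ 6
      + |σhat2 n ω - σ2| + (n : ℝ) * |σhat2 n ω - σ2| ^ 2 + |σhat2 n ω - σ2| ^ 4
      + |σhat2 n ω - σ2| ^ 6) ∂μ)
      = (n : ℝ)⁻¹ + (∫ ω, |θhat n ω - θ| ∂μ) + (∫ ω, |θhat n ω - θ| ^ 2 ∂μ)
        + (n : ℝ) * (∫ ω, |θhat n ω - θ| ^ 3 ∂μ)
        + (n : ℝ) * (∫ ω, |θhat n ω - θ| ^ 4 ∂μ)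
        + (n : ℝ) ^ 2 * (∫ ω, |θhat n ω - θ| ^ 5 ∂μ)
        + (n : ℝ) * (∫ ω, |θhat n ω - θ| ^ 6 ∂μ)
        + (∫ ω, |σhat2 n ω - σ2| ∂μ) + (n : ℝ) * (∫ ω, |σhat2 n ω - σ2| ^ 2 ∂μ)
        + (∫ ω, |σhat2 n ω - σ2| ^ 4 ∂μ) + (∫ ω, |σhat2 n ω - σ2| ^ 6 ∂μ) := by
    intro n
    have j0 : Integrable (fun _ : Ω => ((n:ℝ))⁻¹) μ := integrable_const _
    have j1 : Integrable (fun ω => |θhat n ω - θ|) μ := by simpa using hmomθ n 1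
    have j2 : Integrable (fun ω => |θhat n ω - θ| ^ 2) μ := hmomθ n 2
    have j3 : Integrable (fun ω => (n:ℝ) * |θhat n ω - θ| ^ 3) μ := (hmomθ n 3).const_mul _
    have j4 : Integrable (fun ω => (n:ℝ) * |θhat n ω - θ| ^ 4) μ := (hmomθ n 4).const_mul _
    have j5 : Integrable (fun ω => (n:ℝ) ^ 2 * |θhat n ω - θ| ^ 5) μ :=
      (hmomθ n 5).const_mul _
    have j6 : Integrable (fun ω => (n:ℝ) * |θhat n ω - θ| ^ 6) μ := (hmomθ n 6).const_mul _
    have j7 : Integrable (fun ω => |σhat2 n ω - σ2|) μ := by simpa using iSabs n 1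
    have j8 : Integrable (fun ω => (n:ℝ) * |σhat2 n ω - σ2| ^ 2) μ :=
      (iSabs n 2).const_mul _
    have j9 : Integrable (fun ω => |σhat2 n ω - σ2| ^ 4) μ := iSabs n 4
    have j10 : Integrable (fun ω => |σhat2 n ω - σ2| ^ 6) μ := iSabs n 6
    have s1 : Integrable (fun ω => (n:ℝ)⁻¹ + |θhat n ω - θ|) μ := j0.add j1
    have s2 : Integrable (fun ω => (n:ℝ)⁻¹ + |θhat n ω - θ| + |θhat n ω - θ| ^ 2) μ :=
      s1.add j2
    have s3 : Integrable (fun ω => (n:ℝ)⁻¹ + |θhat n ω - θ| + |θhat n ω - θ| ^ 2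
        + (n:ℝ) * |θhat n ω - θ| ^ 3) μ := s2.add j3
    have s4 : Integrable (fun ω => (n:ℝ)⁻¹ + |θhat n ω - θ| + |θhat n ω - θ| ^ 2
        + (n:ℝ) * |θhat n ω - θ| ^ 3 + (n:ℝ) * |θhat n ω - θ| ^ 4) μ := s3.add j4
    have s5 : Integrable (fun ω => (n:ℝ)⁻¹ + |θhat n ω - θ| + |θhat n ω - θ| ^ 2
        + (n:ℝ) * |θhat n ω - θ| ^ 3 + (n:ℝ) * |θhat n ω - θ| ^ 4
        + (n:ℝ) ^ 2 * |θhat n ω - θ| ^ 5) μ := s4.add j5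
    have s6 : Integrable (fun ω => (n:ℝ)⁻¹ + |θhat n ω - θ| + |θhat n ω - θ| ^ 2
        + (n:ℝ) * |θhat n ω - θ| ^ 3 + (n:ℝ) * |θhat n ω - θ| ^ 4
        + (n:ℝ) ^ 2 * |θhat n ω - θ| ^ 5 + (n:ℝ) * |θhat n ω - θ| ^ 6) μ := s5.add j6
    have s7 : Integrable (fun ω => (n:ℝ)⁻¹ + |θhat n ω - θ| + |θhat n ω - θ| ^ 2
        + (n:ℝ) * |θhat n ω - θ| ^ 3 + (n:ℝ) * |θhat n ω - θ| ^ 4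
        + (n:ℝ) ^ 2 * |θhat n ω - θ| ^ 5 + (n:ℝ) * |θhat n ω - θ| ^ 6
        + |σhat2 n ω - σ2|) μ := s6.add j7
    have s8 : Integrable (fun ω => (n:ℝ)⁻¹ + |θhat n ω - θ| + |θhat n ω - θ| ^ 2
        + (n:ℝ) * |θhat n ω - θ| ^ 3 + (n:ℝ) * |θhat n ω - θ| ^ 4
        + (n:ℝ) ^ 2 * |θhat n ω - θ| ^ 5 + (n:ℝ) * |θhat n ω - θ| ^ 6
        + |σhat2 n ω - σ2| + (n:ℝ) * |σhat2 n ω - σ2| ^ 2) μ := s7.add j8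
    have s9 : Integrable (fun ω => (n:ℝ)⁻¹ + |θhat n ω - θ| + |θhat n ω - θ| ^ 2
        + (n:ℝ) * |θhat n ω - θ| ^ 3 + (n:ℝ) * |θhat n ω - θ| ^ 4
        + (n:ℝ) ^ 2 * |θhat n ω - θ| ^ 5 + (n:ℝ) * |θhat n ω - θ| ^ 6
        + |σhat2 n ω - σ2| + (n:ℝ) * |σhat2 n ω - σ2| ^ 2
        + |σhat2 n ω - σ2| ^ 4) μ := s8.add j9
    rw [integral_add s9 j10, integral_add s8 j9, integral_add s7 j8, integral_add s6 j7,
      integral_add s5 j6, integral_add s4 j5, integral_add s3 j4, integral_add s2 j3,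
      integral_add s1 j2, integral_add j0 j1]
    simp only [integral_const_mul, integral_const, measure_univ, ENNReal.toReal_one, probReal_univ,
      smul_eq_mul, one_mul]
  have hbaseLim : Tendsto (fun n : ℕ => ∫ ω, ((n : ℝ)⁻¹ + |θhat n ω - θ|
      + |θhat n ω - θ| ^ 2 + (n : ℝ) * |θhat n ω - θ| ^ 3 + (n : ℝ) * |θhat n ω - θ| ^ 4
      + (n : ℝ) ^ 2 * |θhat n ω - θ| ^ 5 + (n : ℝ) * |θhat n ω - θ| ^ 6
      + |σhat2 n ω - σ2| + (n : ℝ) * |σhat2 n ω - σ2| ^ 2 + |σhat2 n ω - σ2| ^ 4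
      + |σhat2 n ω - σ2| ^ 6) ∂μ) atTop (nhds 0) := by
    have h0 := (((((((((hinv.add tDabs).add tDabs2).add tD3).add tD4).add tD5).add
      tD6).add tSabs).add tS2n).add tS4).add tS6
    simp only [add_zero] at h0
    exact h0.congr fun n => (hbaseVal n).symm
  -- squeeze
  have hErrLim : Tendsto (fun n : ℕ => ∫ ω, ((n : ℝ) ^ 2 *
      (R (θhat n ω * (1 + ((2 - C) * σhat2 n ω / (2 * θhat n ω ^ 2)) / (n : ℝ)))
        - R (θhat n ω))
      - (B1 * ((n : ℝ) * (θhat n ω - θ)) + B2 * ((n : ℝ) * (θhat n ω - θ) ^ 2)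
        + B3 * ((n : ℝ) * ((θhat n ω - θ) * (σhat2 n ω - σ2))) + B0)) ∂μ) atTop
      (nhds 0) := by
    have hKlim : Tendsto (fun n : ℕ => K * ∫ ω, ((n : ℝ)⁻¹ + |θhat n ω - θ|
        + |θhat n ω - θ| ^ 2 + (n : ℝ) * |θhat n ω - θ| ^ 3
        + (n : ℝ) * |θhat n ω - θ| ^ 4 + (n : ℝ) ^ 2 * |θhat n ω - θ| ^ 5
        + (n : ℝ) * |θhat n ω - θ| ^ 6 + |σhat2 n ω - σ2|
        + (n : ℝ) * |σhat2 n ω - σ2| ^ 2 + |σhat2 n ω - σ2| ^ 4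
        + |σhat2 n ω - σ2| ^ 6) ∂μ) atTop (nhds 0) := by
      have := hbaseLim.const_mul K
      simpa using this
    refine squeeze_zero_norm' ?_ hKlim
    filter_upwards [eventually_ge_atTop 1] with n hn
    have hb : ∀ᵐ ω ∂μ, ‖(n : ℝ) ^ 2 *
        (R (θhat n ω * (1 + ((2 - C) * σhat2 n ω / (2 * θhat n ω ^ 2)) / (n : ℝ)))
          - R (θhat n ω))
        - (B1 * ((n : ℝ) * (θhat n ω - θ)) + B2 * ((n : ℝ) * (θhat n ω - θ) ^ 2)
          + B3 * ((n : ℝ) * ((θhat n ω - θ) * (σhat2 n ω - σ2))) + B0)‖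
        ≤ K * ((n : ℝ)⁻¹ + |θhat n ω - θ| + |θhat n ω - θ| ^ 2
          + (n : ℝ) * |θhat n ω - θ| ^ 3 + (n : ℝ) * |θhat n ω - θ| ^ 4
          + (n : ℝ) ^ 2 * |θhat n ω - θ| ^ 5 + (n : ℝ) * |θhat n ω - θ| ^ 6
          + |σhat2 n ω - σ2| + (n : ℝ) * |σhat2 n ω - σ2| ^ 2 + |σhat2 n ω - σ2| ^ 4
          + |σhat2 n ω - σ2| ^ 6) := by
      filter_upwards [hA4 n] with ω hω
      rw [Real.norm_eq_abs]
      exact hKbd n hn (θhat n ω) (σhat2 n ω) hω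
    calc ‖∫ ω, ((n : ℝ) ^ 2 *
        (R (θhat n ω * (1 + ((2 - C) * σhat2 n ω / (2 * θhat n ω ^ 2)) / (n : ℝ)))
          - R (θhat n ω))
        - (B1 * ((n : ℝ) * (θhat n ω - θ)) + B2 * ((n : ℝ) * (θhat n ω - θ) ^ 2)
          + B3 * ((n : ℝ) * ((θhat n ω - θ) * (σhat2 n ω - σ2))) + B0)) ∂μ‖
        ≤ ∫ ω, ‖(n : ℝ) ^ 2 *
        (R (θhat n ω * (1 + ((2 - C) * σhat2 n ω / (2 * θhat n ω ^ 2)) / (n : ℝ)))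
          - R (θhat n ω))
        - (B1 * ((n : ℝ) * (θhat n ω - θ)) + B2 * ((n : ℝ) * (θhat n ω - θ) ^ 2)
          + B3 * ((n : ℝ) * ((θhat n ω - θ) * (σhat2 n ω - σ2))) + B0)‖ ∂μ :=
        norm_integral_le_integral_norm _
      _ ≤ ∫ ω, K * ((n : ℝ)⁻¹ + |θhat n ω - θ| + |θhat n ω - θ| ^ 2
          + (n : ℝ) * |θhat n ω - θ| ^ 3 + (n : ℝ) * |θhat n ω - θ| ^ 4
          + (n : ℝ) ^ 2 * |θhat n ω - θ| ^ 5 + (n : ℝ) * |θhat n ω - θ| ^ 6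
          + |σhat2 n ω - σ2| + (n : ℝ) * |σhat2 n ω - σ2| ^ 2 + |σhat2 n ω - σ2| ^ 4
          + |σhat2 n ω - σ2| ^ 6) ∂μ :=
        integral_mono_ae (iErr n).norm ((ibase n).const_mul K) hb
      _ = K * ∫ ω, ((n : ℝ)⁻¹ + |θhat n ω - θ| + |θhat n ω - θ| ^ 2
          + (n : ℝ) * |θhat n ω - θ| ^ 3 + (n : ℝ) * |θhat n ω - θ| ^ 4
          + (n : ℝ) ^ 2 * |θhat n ω - θ| ^ 5 + (n : ℝ) * |θhat n ω - θ| ^ 6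
          + |σhat2 n ω - σ2| + (n : ℝ) * |σhat2 n ω - σ2| ^ 2 + |σhat2 n ω - σ2| ^ 4
          + |σhat2 n ω - σ2| ^ 6) ∂μ := integral_const_mul _ _
  -- combine
  have key : ∀ n : ℕ, (n : ℝ) ^ 2 *
      ((∫ ω, R (θhat n ω *
          (1 + ((2 - C) * σhat2 n ω / (2 * θhat n ω ^ 2)) / (n : ℝ))) ∂μ) -
        ∫ ω, R (θhat n ω) ∂μ)
      = (∫ ω, (B1 * ((n : ℝ) * (θhat n ω - θ)) + B2 * ((n : ℝ) * (θhat n ω - θ) ^ 2)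
          + B3 * ((n : ℝ) * ((θhat n ω - θ) * (σhat2 n ω - σ2))) + B0) ∂μ)
        + ∫ ω, ((n : ℝ) ^ 2 *
          (R (θhat n ω * (1 + ((2 - C) * σhat2 n ω / (2 * θhat n ω ^ 2)) / (n : ℝ)))
            - R (θhat n ω))
          - (B1 * ((n : ℝ) * (θhat n ω - θ)) + B2 * ((n : ℝ) * (θhat n ω - θ) ^ 2)
            + B3 * ((n : ℝ) * ((θhat n ω - θ) * (σhat2 n ω - σ2))) + B0)) ∂μ := by
    intro n
    rw [integral_sub (iRdiff n) (iMain n), integral_const_mul,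
      integral_sub (hRint1 n) (hRint0 n)]
    ring
  have hfinal := hMainLim.add hErrLim
  rw [add_zero] at hfinal
  exact hfinal.congr fun n => (key n).symm
end

section
/- Let θ ≠ 0 and let (θ̂_n) and (σ̂_n²) be sequences of real-valued random variables satisfying: lim_{n→∞} n·E[(θ̂_n − θ)²] = σ² with σ² > 0; E[θ̂_n − θ] = o(n⁻¹); E[|θ̂_n − θ|^k] = O(n^{−k/2}) for every integer k ≥ 3; E[σ̂_n² − σ²] = o(n⁻¹); E[(σ̂_n² − σ²)^j] = O(n^{−j}) for every integer j ≥ 2; E[(θ̂_n − θ)(σ̂_n² − σ²)] = o(n⁻¹); and |θ̂_n| ≥ ε almost surely for some ε > 0 and all n. Then E[ (θ̂_n − θ)·σ̂_n²/θ̂_n ] = −σ⁴/(n·θ²) + o(n⁻¹). -/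
open MeasureTheory Filter Asymptotics Real

lemma rpow_lo {c : ℝ} (hc : 1 < c) :
    (fun n : ℕ => (n : ℝ) ^ (-c)) =o[atTop] fun n : ℕ => (n : ℝ)⁻¹ := by
  rw [isLittleO_iff_tendsto' (by
    filter_upwards [eventually_gt_atTop 0] with n hn h
    exact absurd h (by positivity))]
  have h : Tendsto (fun n : ℕ => (n : ℝ) ^ (-(c - 1))) atTop (nhds 0) :=
    (tendsto_rpow_neg_atTop (by linarith)).comp tendsto_natCast_atTop_atTop
  refine h.congr' ?_
  filter_upwards [eventually_gt_atTop 0] with n hn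
  have hn' : (0:ℝ) < n := by exact_mod_cast hn
  rw [div_eq_mul_inv, inv_inv, show -(c-1) = -c + 1 by ring, Real.rpow_add hn', Real.rpow_one]

lemma pow2_lo : (fun n : ℕ => ((n : ℝ) ^ 2)⁻¹) =o[atTop] fun n : ℕ => (n : ℝ)⁻¹ := by
  refine (rpow_lo (show (1:ℝ) < 2 by norm_num)).congr' ?_ EventuallyEq.rfl
  filter_upwards [eventually_gt_atTop 0] with n hn
  have hn' : (0:ℝ) < n := by exact_mod_cast hn
  rw [Real.rpow_neg hn'.le, Real.rpow_two]

/-- under the regularity conditions on `(θ̂_n, σ̂_n²)`,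
`E[(θ̂_n − θ)·σ̂_n²/θ̂_n] = −σ⁴/(nθ²) + o(n⁻¹)`. -/
theorem stmt_13
    {Ω : Type*} [MeasurableSpace Ω] (μ : Measure Ω) [IsProbabilityMeasure μ]
    (θ : ℝ) (hθ : θ ≠ 0)
    (θhat : ℕ → Ω → ℝ) (hmeasθ : ∀ n, Measurable (θhat n))
    (σhat2 : ℕ → Ω → ℝ) (hmeasσ : ∀ n, Measurable (σhat2 n))
    (hmomθ : ∀ (n k : ℕ), Integrable (fun ω => |θhat n ω - θ| ^ k) μ)
    (σ2 : ℝ) (hσ2 : 0 < σ2)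
    (hmomσ : ∀ (n j : ℕ), Integrable (fun ω => (σhat2 n ω - σ2) ^ j) μ)
    (hmomcr : ∀ n : ℕ, Integrable (fun ω => (θhat n ω - θ) * (σhat2 n ω - σ2)) μ)
    (hintgoal : ∀ n : ℕ, Integrable (fun ω => (θhat n ω - θ) * σhat2 n ω / θhat n ω) μ)
    (hA11 : Tendsto (fun n : ℕ => (n : ℝ) * ∫ ω, (θhat n ω - θ) ^ 2 ∂μ) atTop (nhds σ2))
    (hA12 : (fun n : ℕ => ∫ ω, (θhat n ω - θ) ∂μ) =o[atTop] fun n : ℕ => (n : ℝ)⁻¹)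
    (hA13 : ∀ k : ℕ, 3 ≤ k →
      (fun n : ℕ => ∫ ω, |θhat n ω - θ| ^ k ∂μ) =O[atTop]
        fun n : ℕ => (n : ℝ) ^ (-(k : ℝ) / 2))
    (hA31 : (fun n : ℕ => ∫ ω, (σhat2 n ω - σ2) ∂μ) =o[atTop] fun n : ℕ => (n : ℝ)⁻¹)
    (hA32 : ∀ j : ℕ, 2 ≤ j →
      (fun n : ℕ => ∫ ω, (σhat2 n ω - σ2) ^ j ∂μ) =O[atTop]
        fun n : ℕ => ((n : ℝ) ^ j)⁻¹)
    (hA33 : (fun n : ℕ => ∫ ω, (θhat n ω - θ) * (σhat2 n ω - σ2) ∂μ) =o[atTop]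
      fun n : ℕ => (n : ℝ)⁻¹)
    (ε : ℝ) (hε : 0 < ε) (hA4 : ∀ n, ∀ᵐ ω ∂μ, ε ≤ |θhat n ω|) :
    (fun n : ℕ =>
        (∫ ω, (θhat n ω - θ) * σhat2 n ω / θhat n ω ∂μ) + σ2 ^ 2 / ((n : ℝ) * θ ^ 2))
      =o[atTop] fun n : ℕ => (n : ℝ)⁻¹ := by
  -- abbreviations
  set D : ℕ → Ω → ℝ := fun n ω => θhat n ω - θ with hD
  set S : ℕ → Ω → ℝ := fun n ω => σhat2 n ω - σ2 with hS
  have hmeasD : ∀ n, Measurable (D n) := fun n => (hmeasθ n).sub measurable_const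
  have hmeasS : ∀ n, Measurable (S n) := fun n => (hmeasσ n).sub measurable_const
  -- integrability of powers of D
  have intDk : ∀ n k, Integrable (fun ω => D n ω ^ k) μ := by
    intro n k
    have h := hmomθ n k
    simp only [pow_abs] at h
    simp only [← Real.norm_eq_abs] at h
    exact (integrable_norm_iff (((hmeasD n).pow_const k).aestronglyMeasurable)).mp h
  have intD : ∀ n, Integrable (D n) μ := by
    intro n; simpa using intDk n 1
  have intAbsDk : ∀ n k, Integrable (fun ω => |D n ω| ^ k) μ := hmomθ
  have intS : ∀ n, Integrable (S n) μ := by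
    intro n; simpa using hmomσ n 1
  have intAbsS : ∀ n, Integrable (fun ω => |S n ω|) μ := fun n => (intS n).abs
  -- integrability of D^2 * S via domination
  have intD2S : ∀ n, Integrable (fun ω => D n ω ^ 2 * S n ω) μ := by
    intro n
    refine Integrable.mono' ((intDk n 4).add (hmomσ n 2))
      (((hmeasD n).pow_const 2).mul (hmeasS n)).aestronglyMeasurable ?_
    refine Eventually.of_forall fun ω => ?_
    have h1 : |D n ω ^ 2 * S n ω| = D n ω ^ 2 * |S n ω| := by
      rw [abs_mul, abs_of_nonneg (by positivity)]
    rw [Real.norm_eq_abs, h1]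
    show D n ω ^ 2 * |S n ω| ≤ D n ω ^ 4 + S n ω ^ 2
    nlinarith [sq_nonneg (D n ω ^ 2 - |S n ω|), sq_abs (S n ω), abs_nonneg (S n ω)]
  -- integrability of |D|^3 * |S|
  have intD3S : ∀ n, Integrable (fun ω => |D n ω| ^ 3 * |S n ω|) μ := by
    intro n
    refine Integrable.mono' ((intDk n 6).add (hmomσ n 2))
      ((((hmeasD n).abs.pow_const 3).mul (hmeasS n).abs)).aestronglyMeasurable ?_
    refine Eventually.of_forall fun ω => ?_
    rw [Real.norm_eq_abs, abs_of_nonneg (by positivity)]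
    show |D n ω| ^ 3 * |S n ω| ≤ D n ω ^ 6 + S n ω ^ 2
    have h6 : |D n ω| ^ 6 = D n ω ^ 6 := by
      rw [pow_abs, abs_of_nonneg (by positivity)]
    nlinarith [sq_nonneg (|D n ω| ^ 3 - |S n ω|), sq_abs (S n ω), abs_nonneg (S n ω),
      pow_nonneg (abs_nonneg (D n ω)) 3]
  -- the four-term approximation g and remainder R
  set g : ℕ → Ω → ℝ := fun n ω =>
    σ2 / θ * D n ω + (1 / θ) * (D n ω * S n ω) - σ2 / θ ^ 2 * D n ω ^ 2
      - (1 / θ ^ 2) * (D n ω ^ 2 * S n ω) with hg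
  have intg : ∀ n, Integrable (g n) μ := fun n =>
    ((((intD n).const_mul _).add ((hmomcr n).const_mul _)).sub
      ((intDk n 2).const_mul _)).sub ((intD2S n).const_mul _)
  set R : ℕ → Ω → ℝ := fun n ω => D n ω * σhat2 n ω / θhat n ω - g n ω with hR
  have intR : ∀ n, Integrable (R n) μ := fun n => (hintgoal n).sub (intg n)
  -- integral decomposition
  have hIg : ∀ n, ∫ ω, g n ω ∂μ =
      σ2 / θ * (∫ ω, D n ω ∂μ) + (1 / θ) * (∫ ω, D n ω * S n ω ∂μ)
        - σ2 / θ ^ 2 * (∫ ω, D n ω ^ 2 ∂μ) - (1 / θ ^ 2) * (∫ ω, D n ω ^ 2 * S n ω ∂μ) := by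
    intro n
    have i1 : Integrable (fun ω => σ2 / θ * D n ω) μ := (intD n).const_mul _
    have i2 : Integrable (fun ω => (1 / θ) * (D n ω * S n ω)) μ := (hmomcr n).const_mul _
    have i3 : Integrable (fun ω => σ2 / θ ^ 2 * D n ω ^ 2) μ := (intDk n 2).const_mul _
    have i4 : Integrable (fun ω => (1 / θ ^ 2) * (D n ω ^ 2 * S n ω)) μ :=
      (intD2S n).const_mul _
    have i12 : Integrable (fun ω => σ2 / θ * D n ω + (1 / θ) * (D n ω * S n ω)) μ := i1.add i2
    have i123 : Integrable
        (fun ω => σ2 / θ * D n ω + (1 / θ) * (D n ω * S n ω) - σ2 / θ ^ 2 * D n ω ^ 2) μ :=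
      i12.sub i3
    rw [hg]
    rw [integral_sub i123 i4, integral_sub i12 i3, integral_add i1 i2,
      integral_const_mul, integral_const_mul, integral_const_mul, integral_const_mul]
  have hIf : ∀ n, ∫ ω, D n ω * σhat2 n ω / θhat n ω ∂μ
      = (∫ ω, g n ω ∂μ) + ∫ ω, R n ω ∂μ := by
    intro n
    have h := integral_sub (hintgoal n) (intg n)
    rw [hR] at *
    rw [h]
    ring
  -- a.e. bound for R
  have hRbound : ∀ n, ∀ᵐ ω ∂μ, ‖R n ω‖ ≤
      (θ ^ 2 * ε)⁻¹ * (σ2 * |D n ω| ^ 3 + (D n ω ^ 6 + S n ω ^ 2)) := by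
    intro n
    filter_upwards [hA4 n] with ω hω
    have ht : θhat n ω ≠ 0 := by
      intro h; rw [h] at hω; simp at hω; linarith
    have hform : R n ω = D n ω ^ 3 * σhat2 n ω / (θ ^ 2 * θhat n ω) := by
      rw [hR, hg, hD, hS]
      field_simp
      ring
    rw [Real.norm_eq_abs, hform, abs_div]
    have hσle : |σhat2 n ω| ≤ σ2 + |S n ω| := by
      have h0 : σhat2 n ω = σ2 + S n ω := by rw [hS]; ring
      rw [h0]
      calc |σ2 + S n ω| ≤ |σ2| + |S n ω| := abs_add_le _ _
        _ = σ2 + |S n ω| := by rw [abs_of_pos hσ2]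
    have hθ2 : (0:ℝ) < θ ^ 2 := by positivity
    have hden : θ ^ 2 * ε ≤ |θ ^ 2 * θhat n ω| := by
      rw [abs_mul, abs_of_nonneg hθ2.le]
      exact mul_le_mul_of_nonneg_left hω hθ2.le
    have hθε : (0:ℝ) < θ ^ 2 * ε := by positivity
    have hDS : |D n ω| ^ 3 * |S n ω| ≤ D n ω ^ 6 + S n ω ^ 2 := by
      have h6 : |D n ω| ^ 6 = D n ω ^ 6 := by
        rw [pow_abs, abs_of_nonneg (by positivity)]
      nlinarith [sq_nonneg (|D n ω| ^ 3 - |S n ω|), sq_abs (S n ω), abs_nonneg (S n ω),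
        pow_nonneg (abs_nonneg (D n ω)) 3]
    have hnum : |D n ω ^ 3 * σhat2 n ω| ≤ σ2 * |D n ω| ^ 3 + (D n ω ^ 6 + S n ω ^ 2) := by
      rw [abs_mul, abs_pow]
      have h1 : |D n ω| ^ 3 * |σhat2 n ω| ≤ |D n ω| ^ 3 * (σ2 + |S n ω|) :=
        mul_le_mul_of_nonneg_left hσle (by positivity)
      nlinarith
    calc |D n ω ^ 3 * σhat2 n ω| / |θ ^ 2 * θhat n ω|
        ≤ |D n ω ^ 3 * σhat2 n ω| / (θ ^ 2 * ε) :=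
          div_le_div_of_nonneg_left (abs_nonneg _) hθε hden
      _ = (θ ^ 2 * ε)⁻¹ * |D n ω ^ 3 * σhat2 n ω| := by rw [div_eq_mul_inv, mul_comm]
      _ ≤ (θ ^ 2 * ε)⁻¹ * (σ2 * |D n ω| ^ 3 + (D n ω ^ 6 + S n ω ^ 2)) :=
          mul_le_mul_of_nonneg_left hnum (by positivity)
  -- littleO facts for individual integral sequences
  have eDn : ∀ k : ℕ, (fun n : ℕ => ∫ ω, D n ω ^ (2 * k) ∂μ)
      = fun n => ∫ ω, |D n ω| ^ (2 * k) ∂μ := by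
    intro k
    funext n
    refine integral_congr_ae (Eventually.of_forall fun ω => ?_)
    show D n ω ^ (2 * k) = |D n ω| ^ (2 * k)
    rw [pow_mul, pow_mul, sq_abs]
  have lok : ∀ k : ℕ, 3 ≤ k →
      (fun n : ℕ => ∫ ω, |D n ω| ^ k ∂μ) =o[atTop] fun n : ℕ => (n : ℝ)⁻¹ := by
    intro k hk
    refine (hA13 k hk).trans_isLittleO ?_
    have h : (fun n : ℕ => (n:ℝ) ^ (-(k:ℝ)/2)) = fun n : ℕ => (n:ℝ) ^ (-((k:ℝ)/2)) := by
      funext n; rw [neg_div]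
    rw [h]
    refine rpow_lo ?_
    have : (3:ℝ) ≤ (k:ℝ) := by exact_mod_cast hk
    linarith
  have losq : (fun n : ℕ => ∫ ω, S n ω ^ 2 ∂μ) =o[atTop] fun n : ℕ => (n : ℝ)⁻¹ :=
    (hA32 2 le_rfl).trans_isLittleO pow2_lo
  have lo4 : (fun n : ℕ => ∫ ω, D n ω ^ 4 ∂μ) =o[atTop] fun n : ℕ => (n : ℝ)⁻¹ := by
    have := eDn 2; norm_num at this
    rw [this]; exact lok 4 (by norm_num)
  have lo6 : (fun n : ℕ => ∫ ω, D n ω ^ 6 ∂μ) =o[atTop] fun n : ℕ => (n : ℝ)⁻¹ := by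
    have := eDn 3; norm_num at this
    rw [this]; exact lok 6 (by norm_num)
  -- variance term
  have lo2 : (fun n : ℕ => (∫ ω, D n ω ^ 2 ∂μ) - σ2 * (n:ℝ)⁻¹) =o[atTop]
      fun n : ℕ => (n : ℝ)⁻¹ := by
    rw [isLittleO_iff_tendsto' (by
      filter_upwards [eventually_gt_atTop 0] with n hn h
      exact absurd h (by positivity))]
    have h0 : Tendsto (fun n : ℕ => (n:ℝ) * (∫ ω, D n ω ^ 2 ∂μ) - σ2) atTop (nhds 0) := by
      simpa using hA11.sub_const σ2
    refine h0.congr' ?_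
    filter_upwards [eventually_gt_atTop 0] with n hn
    have hn' : ((n:ℝ)) ≠ 0 := by positivity
    field_simp
  -- fourth term
  have loD2S : (fun n : ℕ => ∫ ω, D n ω ^ 2 * S n ω ∂μ) =o[atTop]
      fun n : ℕ => (n : ℝ)⁻¹ := by
    refine IsBigO.trans_isLittleO (isBigO_iff.mpr ⟨1, Eventually.of_forall fun n => ?_⟩)
      (lo4.add losq)
    rw [one_mul]
    have hint : Integrable (fun ω => D n ω ^ 4 + S n ω ^ 2) μ := (intDk n 4).add (hmomσ n 2)
    have h1 : ‖∫ ω, D n ω ^ 2 * S n ω ∂μ‖ ≤ ∫ ω, D n ω ^ 4 + S n ω ^ 2 ∂μ := by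
      refine norm_integral_le_of_norm_le hint (Eventually.of_forall fun ω => ?_)
      rw [Real.norm_eq_abs]
      have h2 : |D n ω ^ 2 * S n ω| = D n ω ^ 2 * |S n ω| := by
        rw [abs_mul, abs_of_nonneg (by positivity)]
      rw [h2]
      nlinarith [sq_nonneg (D n ω ^ 2 - |S n ω|), sq_abs (S n ω), abs_nonneg (S n ω)]
    calc ‖∫ ω, D n ω ^ 2 * S n ω ∂μ‖
        ≤ ∫ ω, D n ω ^ 4 + S n ω ^ 2 ∂μ := h1
      _ = (∫ ω, D n ω ^ 4 ∂μ) + ∫ ω, S n ω ^ 2 ∂μ := integral_add (intDk n 4) (hmomσ n 2)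
      _ ≤ ‖(∫ ω, D n ω ^ 4 ∂μ) + ∫ ω, S n ω ^ 2 ∂μ‖ := le_abs_self _
  -- remainder term
  have loR : (fun n : ℕ => ∫ ω, R n ω ∂μ) =o[atTop] fun n : ℕ => (n : ℝ)⁻¹ := by
    refine IsBigO.trans_isLittleO (isBigO_iff.mpr ⟨1, Eventually.of_forall fun n => ?_⟩)
      ((((lok 3 le_rfl).const_mul_left σ2).add (lo6.add losq)).const_mul_left ((θ ^ 2 * ε)⁻¹))
    rw [one_mul]
    have ia : Integrable (fun ω => σ2 * |D n ω| ^ 3) μ := (hmomθ n 3).const_mul _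
    have ib : Integrable (fun ω => D n ω ^ 6 + S n ω ^ 2) μ := (intDk n 6).add (hmomσ n 2)
    have iab : Integrable (fun ω => σ2 * |D n ω| ^ 3 + (D n ω ^ 6 + S n ω ^ 2)) μ := ia.add ib
    have hint : Integrable
        (fun ω => (θ ^ 2 * ε)⁻¹ * (σ2 * |D n ω| ^ 3 + (D n ω ^ 6 + S n ω ^ 2))) μ :=
      iab.const_mul _
    have h1 : ‖∫ ω, R n ω ∂μ‖ ≤
        ∫ ω, (θ ^ 2 * ε)⁻¹ * (σ2 * |D n ω| ^ 3 + (D n ω ^ 6 + S n ω ^ 2)) ∂μ :=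
      norm_integral_le_of_norm_le hint (hRbound n)
    calc ‖∫ ω, R n ω ∂μ‖
        ≤ ∫ ω, (θ ^ 2 * ε)⁻¹ * (σ2 * |D n ω| ^ 3 + (D n ω ^ 6 + S n ω ^ 2)) ∂μ := h1
      _ = (θ ^ 2 * ε)⁻¹ * ((σ2 * ∫ ω, |D n ω| ^ 3 ∂μ)
            + ((∫ ω, D n ω ^ 6 ∂μ) + ∫ ω, S n ω ^ 2 ∂μ)) := by
          rw [integral_const_mul, integral_add ia ib, integral_const_mul,
            integral_add (intDk n 6) (hmomσ n 2)]
      _ ≤ ‖(θ ^ 2 * ε)⁻¹ * ((σ2 * ∫ ω, |D n ω| ^ 3 ∂μ)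
            + ((∫ ω, D n ω ^ 6 ∂μ) + ∫ ω, S n ω ^ 2 ∂μ))‖ := le_abs_self _
  -- final assembly
  have hT : ∀ n : ℕ, (∫ ω, D n ω * σhat2 n ω / θhat n ω ∂μ) + σ2 ^ 2 / ((n:ℝ) * θ ^ 2)
      = σ2 / θ * (∫ ω, D n ω ∂μ) + (1 / θ) * (∫ ω, D n ω * S n ω ∂μ)
        + (-(σ2 / θ ^ 2)) * ((∫ ω, D n ω ^ 2 ∂μ) - σ2 * (n:ℝ)⁻¹)
        + (-(1 / θ ^ 2)) * (∫ ω, D n ω ^ 2 * S n ω ∂μ) + ∫ ω, R n ω ∂μ := by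
    intro n
    have h3 : σ2 ^ 2 / ((n:ℝ) * θ ^ 2) = σ2 / θ ^ 2 * (σ2 * (n:ℝ)⁻¹) := by
      rw [div_eq_mul_inv, mul_inv, div_eq_mul_inv]; ring
    rw [hIf n, hIg n, h3]; ring
  have hfun : (fun n : ℕ =>
      (∫ ω, D n ω * σhat2 n ω / θhat n ω ∂μ) + σ2 ^ 2 / ((n:ℝ) * θ ^ 2))
      = fun n : ℕ => σ2 / θ * (∫ ω, D n ω ∂μ) + (1 / θ) * (∫ ω, D n ω * S n ω ∂μ)
        + (-(σ2 / θ ^ 2)) * ((∫ ω, D n ω ^ 2 ∂μ) - σ2 * (n:ℝ)⁻¹)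
        + (-(1 / θ ^ 2)) * (∫ ω, D n ω ^ 2 * S n ω ∂μ) + ∫ ω, R n ω ∂μ := funext hT
  rw [hfun]
  exact ((((hA12.const_mul_left (σ2 / θ)).add (hA33.const_mul_left (1 / θ))).add
    (lo2.const_mul_left (-(σ2 / θ ^ 2)))).add
    (loD2S.const_mul_left (-(1 / θ ^ 2)))).add loR
end

section
/- Let θ ≠ 0, k ∈ ℝ, and let (θ̂_n) and (σ̂_n²) be sequences of real-valued random variables satisfying: lim_{n→∞} n·E[(θ̂_n − θ)²] = σ² with σ² > 0; E[θ̂_n − θ] = o(n⁻¹); E[|θ̂_n − θ|^j] = O(n^{−j/2}) for every integer j ≥ 3; E[σ̂_n² − σ²] = o(n⁻¹); E[(σ̂_n² − σ²)^j] = O(n^{−j}) for every integer j ≥ 2; E[(θ̂_n − θ)(σ̂_n² − σ²)] = o(n⁻¹); and |θ̂_n| ≥ ε almost surely for some ε > 0 and all n. Define the adjusted estimator θ̃_n = θ̂_n + k·σ̂_n²/(n·θ̂_n). Then E[(θ̃_n − θ)²] = E[(θ̂_n − θ)²] + (k² − 2k)·σ⁴/(n²·θ²) + o(n⁻²). -/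
open MeasureTheory Filter Asymptotics Real

lemma aux_cs {Ω : Type*} [MeasurableSpace Ω] (μ : Measure Ω) [IsProbabilityMeasure μ]
    (f : Ω → ℝ) (hm : AEStronglyMeasurable f μ) (h2 : Integrable (fun ω => f ω ^ 2) μ) :
    ∫ ω, |f ω| ∂μ ≤ Real.sqrt (∫ ω, f ω ^ 2 ∂μ) := by
  have hpq : (2:ℝ).HolderConjugate 2 := ⟨by norm_num, by norm_num, by norm_num⟩
  have hmem : MemLp f (ENNReal.ofReal 2) μ := by
    rw [show ENNReal.ofReal 2 = 2 by simp]
    exact (memLp_two_iff_integrable_sq hm).2 h2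
  have h1 : MemLp (fun _ : Ω => (1:ℝ)) (ENNReal.ofReal 2) μ := memLp_const 1
  have := integral_mul_le_Lp_mul_Lq_of_nonneg hpq
    (f := fun ω => |f ω|) (g := fun _ => (1:ℝ))
    (Eventually.of_forall fun ω => abs_nonneg _) (Eventually.of_forall fun _ => zero_le_one)
    hmem.abs h1
  simp only [mul_one] at this
  calc ∫ ω, |f ω| ∂μ ≤ (∫ ω, |f ω| ^ (2:ℝ) ∂μ) ^ (1/(2:ℝ)) * (∫ _ω, (1:ℝ) ^ (2:ℝ) ∂μ) ^ (1/(2:ℝ)) := this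
    _ = Real.sqrt (∫ ω, f ω ^ 2 ∂μ) := by
        simp only [Real.one_rpow, integral_const, probReal_univ, one_smul,
          Real.one_rpow, mul_one]
        rw [Real.sqrt_eq_rpow]
        congr 1
        refine integral_congr_ae (Eventually.of_forall fun ω => ?_)
        have hr : ∀ x:ℝ, x ^ (2:ℝ) = x ^ (2:ℕ) := fun x => by
          rw [← Real.rpow_natCast x 2]; norm_num
        show |f ω| ^ (2:ℝ) = f ω ^ 2
        rw [hr, sq_abs]

set_option maxHeartbeats 2000000 in
/-- second moment of the plug-in adjusted estimator
`θ̃_n = θ̂_n + k·σ̂_n²/(n·θ̂_n)`: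
`E[(θ̃_n − θ)²] = E[(θ̂_n − θ)²] + (k² − 2k)σ⁴/(n²θ²) + o(n⁻²)`. -/
theorem stmt_14
    {Ω : Type*} [MeasurableSpace Ω] (μ : Measure Ω) [IsProbabilityMeasure μ]
    (θ : ℝ) (hθ : θ ≠ 0) (k : ℝ)
    (θhat : ℕ → Ω → ℝ) (hmeasθ : ∀ n, Measurable (θhat n))
    (σhat2 : ℕ → Ω → ℝ) (hmeasσ : ∀ n, Measurable (σhat2 n))
    (hmomθ : ∀ (n j : ℕ), Integrable (fun ω => |θhat n ω - θ| ^ j) μ)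
    (σ2 : ℝ) (hσ2 : 0 < σ2)
    (hmomσ : ∀ (n j : ℕ), Integrable (fun ω => (σhat2 n ω - σ2) ^ j) μ)
    (hmomcr : ∀ n : ℕ, Integrable (fun ω => (θhat n ω - θ) * (σhat2 n ω - σ2)) μ)
    (hintadj : ∀ n : ℕ, Integrable
      (fun ω => (θhat n ω + k * σhat2 n ω / ((n : ℝ) * θhat n ω) - θ) ^ 2) μ)
    (hA11 : Tendsto (fun n : ℕ => (n : ℝ) * ∫ ω, (θhat n ω - θ) ^ 2 ∂μ) atTop (nhds σ2))
    (hA12 : (fun n : ℕ => ∫ ω, (θhat n ω - θ) ∂μ) =o[atTop] fun n : ℕ => (n : ℝ)⁻¹)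
    (hA13 : ∀ j : ℕ, 3 ≤ j →
      (fun n : ℕ => ∫ ω, |θhat n ω - θ| ^ j ∂μ) =O[atTop]
        fun n : ℕ => (n : ℝ) ^ (-(j : ℝ) / 2))
    (hA31 : (fun n : ℕ => ∫ ω, (σhat2 n ω - σ2) ∂μ) =o[atTop] fun n : ℕ => (n : ℝ)⁻¹)
    (hA32 : ∀ j : ℕ, 2 ≤ j →
      (fun n : ℕ => ∫ ω, (σhat2 n ω - σ2) ^ j ∂μ) =O[atTop]
        fun n : ℕ => ((n : ℝ) ^ j)⁻¹)
    (hA33 : (fun n : ℕ => ∫ ω, (θhat n ω - θ) * (σhat2 n ω - σ2) ∂μ) =o[atTop]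
      fun n : ℕ => (n : ℝ)⁻¹)
    (ε : ℝ) (hε : 0 < ε) (hA4 : ∀ n, ∀ᵐ ω ∂μ, ε ≤ |θhat n ω|) :
    (fun n : ℕ =>
        (∫ ω, (θhat n ω + k * σhat2 n ω / ((n : ℝ) * θhat n ω) - θ) ^ 2 ∂μ) -
          (∫ ω, (θhat n ω - θ) ^ 2 ∂μ) -
          (k ^ 2 - 2 * k) * σ2 ^ 2 / ((n : ℝ) ^ 2 * θ ^ 2))
      =o[atTop] fun n : ℕ => ((n : ℝ) ^ 2)⁻¹ := by
  -- basic integrability facts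
  have iΔ : ∀ n, Integrable (fun ω => θhat n ω - θ) μ := fun n => by
    refine (integrable_norm_iff ((hmeasθ n).sub measurable_const).aestronglyMeasurable).1 ?_
    simpa only [Real.norm_eq_abs, pow_one, Pi.sub_apply] using hmomθ n 1
  have iΔ2 : ∀ n, Integrable (fun ω => (θhat n ω - θ)^2) μ := fun n => by
    simpa only [sq_abs] using hmomθ n 2
  have habs : ∀ (x : ℝ) (j : ℕ), Even j → |x| ^ j = x ^ j := by
    intro x j hj
    rw [← abs_pow, abs_of_nonneg (hj.pow_nonneg x)]
  have iΔ4 : ∀ n, Integrable (fun ω => (θhat n ω - θ)^4) μ := fun n =>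
    (hmomθ n 4).congr (Eventually.of_forall fun ω => habs (θhat n ω - θ) 4 (by decide))
  have iΔ6 : ∀ n, Integrable (fun ω => (θhat n ω - θ)^6) μ := fun n =>
    (hmomθ n 6).congr (Eventually.of_forall fun ω => habs (θhat n ω - θ) 6 (by decide))
  have iS : ∀ n, Integrable (fun ω => σhat2 n ω - σ2) μ := fun n => by
    simpa only [pow_one] using hmomσ n 1
  have iS2 : ∀ n, Integrable (fun ω => (σhat2 n ω - σ2)^2) μ := fun n => hmomσ n 2
  have iΔS : ∀ n, Integrable (fun ω => (θhat n ω - θ) * (σhat2 n ω - σ2)) μ := hmomcr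
  have ig : ∀ n, Integrable (fun ω => (θhat n ω - θ) * σhat2 n ω / θhat n ω) μ := fun n => by
    refine Integrable.mono' ((((iΔ n).abs.const_mul σ2).add (iΔS n).abs).div_const ε)
      (((((hmeasθ n).sub measurable_const).mul (hmeasσ n)).div (hmeasθ n)).aestronglyMeasurable)
      ?_
    filter_upwards [hA4 n] with ω hω
    rw [Real.norm_eq_abs, abs_div]
    have hnum : |(θhat n ω - θ) * σhat2 n ω|
        ≤ σ2 * |θhat n ω - θ| + |(θhat n ω - θ) * (σhat2 n ω - σ2)| := by
      have e : (θhat n ω - θ) * σhat2 n ω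
          = σ2 * (θhat n ω - θ) + (θhat n ω - θ) * (σhat2 n ω - σ2) := by ring
      rw [e]
      refine (abs_add_le _ _).trans ?_
      rw [abs_mul, abs_of_pos hσ2]
    simp only [Pi.add_apply]
    exact div_le_div₀ (add_nonneg (mul_nonneg hσ2.le (abs_nonneg _)) (abs_nonneg _)) hnum hε hω
  have ih : ∀ n, Integrable (fun ω => (σhat2 n ω / θhat n ω)^2) μ := fun n => by
    refine Integrable.mono' ((((hmomσ n 2).const_mul 2).add
        (integrable_const (2*σ2^2))).div_const (ε^2))
      ((((hmeasσ n).div (hmeasθ n)).pow_const 2).aestronglyMeasurable) ?_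
    filter_upwards [hA4 n] with ω hω
    have hε2 : ε^2 ≤ (θhat n ω)^2 := by
      calc ε^2 ≤ |θhat n ω|^2 := by nlinarith [abs_nonneg (θhat n ω)]
        _ = (θhat n ω)^2 := sq_abs _
    simp only [Pi.add_apply]
    rw [Real.norm_eq_abs, abs_of_nonneg (by positivity), div_pow]
    refine div_le_div₀ (by positivity) ?_ (by positivity) hε2
    nlinarith [sq_nonneg (σhat2 n ω - 2*σ2)]
  -- elementary limit facts
  have tinv : Tendsto (fun n : ℕ => ((n:ℝ))⁻¹) atTop (nhds 0) :=
    tendsto_inv_atTop_zero.comp tendsto_natCast_atTop_atTop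
  have littleO_mul : ∀ (f : ℕ → ℝ), ((fun n : ℕ => f n) =o[atTop] fun n : ℕ => (n:ℝ)⁻¹) →
      Tendsto (fun n : ℕ => (n:ℝ) * f n) atTop (nhds 0) := by
    intro f hf
    refine hf.tendsto_div_nhds_zero.congr' ?_
    filter_upwards [eventually_ge_atTop 1] with n hn
    rw [div_eq_mul_inv, inv_inv, mul_comm]
  have tΔ1 : Tendsto (fun n : ℕ => (n:ℝ) * ∫ ω, (θhat n ω - θ) ∂μ) atTop (nhds 0) :=
    littleO_mul _ hA12
  have tΔS : Tendsto (fun n : ℕ => (n:ℝ) * ∫ ω, (θhat n ω - θ) * (σhat2 n ω - σ2) ∂μ)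
      atTop (nhds 0) := littleO_mul _ hA33
  have tΔj : ∀ j : ℕ, 3 ≤ j →
      Tendsto (fun n : ℕ => (n:ℝ) * ∫ ω, |θhat n ω - θ| ^ j ∂μ) atTop (nhds 0) := by
    intro j hj
    have hO : (fun n : ℕ => (n:ℝ) * ∫ ω, |θhat n ω - θ| ^ j ∂μ)
        =O[atTop] fun n : ℕ => (n:ℝ) * (n:ℝ) ^ (-(j:ℝ)/2) :=
      (isBigO_refl (fun n : ℕ => (n:ℝ)) atTop).mul (hA13 j hj)
    refine hO.trans_tendsto ?_
    have h2 : Tendsto (fun x : ℝ => x ^ (-((j:ℝ)/2 - 1))) atTop (nhds 0) :=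
      tendsto_rpow_neg_atTop (by
        have : (3:ℝ) ≤ (j:ℝ) := by exact_mod_cast hj
        linarith)
    refine (h2.comp tendsto_natCast_atTop_atTop).congr' ?_
    filter_upwards [eventually_ge_atTop 1] with n hn
    have hn0 : (0:ℝ) < (n:ℝ) := by exact_mod_cast Nat.pos_of_ne_zero (by omega)
    show ((n:ℝ)) ^ (-((j:ℝ)/2 - 1)) = (n:ℝ) * (n:ℝ) ^ (-(j:ℝ)/2)
    rw [show -((j:ℝ)/2 - 1) = 1 + (-(j:ℝ)/2) by ring, Real.rpow_add hn0, Real.rpow_one]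
  have tΔ3 := tΔj 3 (by norm_num)
  have tΔ4' := tΔj 4 (by norm_num)
  have tΔ6' := tΔj 6 (by norm_num)
  have tΔ4 : Tendsto (fun n : ℕ => (n:ℝ) * ∫ ω, (θhat n ω - θ)^4 ∂μ) atTop (nhds 0) := by
    refine tΔ4'.congr fun n => ?_
    congr 1
    exact integral_congr_ae (Eventually.of_forall fun ω => habs (θhat n ω - θ) 4 (by decide))
  have tΔ6 : Tendsto (fun n : ℕ => (n:ℝ) * ∫ ω, (θhat n ω - θ)^6 ∂μ) atTop (nhds 0) := by
    refine tΔ6'.congr fun n => ?_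
    congr 1
    exact integral_congr_ae (Eventually.of_forall fun ω => habs (θhat n ω - θ) 6 (by decide))
  have tS2O : Tendsto (fun n : ℕ => (n:ℝ) * ∫ ω, (σhat2 n ω - σ2)^2 ∂μ) atTop (nhds 0) := by
    have hO : (fun n : ℕ => (n:ℝ) * ∫ ω, (σhat2 n ω - σ2)^2 ∂μ)
        =O[atTop] fun n : ℕ => (n:ℝ) * (((n:ℝ))^(2:ℕ))⁻¹ :=
      (isBigO_refl (fun n : ℕ => (n:ℝ)) atTop).mul (hA32 2 le_rfl)
    refine hO.trans_tendsto (tinv.congr' ?_)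
    filter_upwards [eventually_ge_atTop 1] with n hn
    have hn0 : ((n:ℝ)) ≠ 0 := Nat.cast_ne_zero.2 (by omega)
    field_simp
  have tΔ2' : Tendsto (fun n : ℕ => ∫ ω, (θhat n ω - θ)^2 ∂μ) atTop (nhds 0) := by
    have := hA11.mul tinv
    rw [mul_zero] at this
    refine this.congr' ?_
    filter_upwards [eventually_ge_atTop 1] with n hn
    have hn0 : ((n:ℝ)) ≠ 0 := Nat.cast_ne_zero.2 (by omega)
    field_simp
  have tS2' : Tendsto (fun n : ℕ => ∫ ω, (σhat2 n ω - σ2)^2 ∂μ) atTop (nhds 0) := by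
    have := tS2O.mul tinv
    rw [mul_zero] at this
    refine this.congr' ?_
    filter_upwards [eventually_ge_atTop 1] with n hn
    have hn0 : ((n:ℝ)) ≠ 0 := Nat.cast_ne_zero.2 (by omega)
    field_simp
  -- first absolute moments tend to zero via Cauchy-Schwarz
  have sqrt_zero_t : ∀ (u : ℕ → ℝ), Tendsto u atTop (nhds 0) →
      Tendsto (fun n => Real.sqrt (u n)) atTop (nhds 0) := by
    intro u hu
    have := (Real.continuous_sqrt.tendsto 0).comp hu
    simpa [Function.comp_def] using this
  have tΔa : Tendsto (fun n : ℕ => ∫ ω, |θhat n ω - θ| ∂μ) atTop (nhds 0) := by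
    refine squeeze_zero (fun n => integral_nonneg fun ω => abs_nonneg _)
      (fun n => aux_cs μ _ ((hmeasθ n).sub measurable_const).aestronglyMeasurable (iΔ2 n))
      (sqrt_zero_t _ tΔ2')
  have tSa : Tendsto (fun n : ℕ => ∫ ω, |σhat2 n ω - σ2| ∂μ) atTop (nhds 0) := by
    refine squeeze_zero (fun n => integral_nonneg fun ω => abs_nonneg _)
      (fun n => aux_cs μ _ ((hmeasσ n).sub measurable_const).aestronglyMeasurable (iS2 n))
      (sqrt_zero_t _ tS2')
  -- sub-goal A
  have tg : Tendsto (fun n : ℕ => (n : ℝ) *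
      ∫ ω, (θhat n ω - θ) * σhat2 n ω / θhat n ω ∂μ) atTop (nhds (-(σ2^2/θ^2))) := by
    have iA : ∀ n, Integrable (fun ω => σ2*(θhat n ω - θ)/θ) μ := fun n =>
      ((iΔ n).const_mul σ2).div_const θ
    have iB' : ∀ n, Integrable (fun ω => (θhat n ω - θ)*(σhat2 n ω - σ2)/θ) μ := fun n =>
      (iΔS n).div_const θ
    have iC : ∀ n, Integrable (fun ω => σ2*(θhat n ω - θ)^2/θ^2) μ := fun n =>
      ((iΔ2 n).const_mul σ2).div_const (θ^2)
    have icomb : ∀ n, Integrable (fun ω => σ2*(θhat n ω - θ)/θ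
        + (θhat n ω - θ)*(σhat2 n ω - σ2)/θ - σ2*(θhat n ω - θ)^2/θ^2) μ := fun n =>
      ((iA n).add (iB' n)).sub (iC n)
    have ir : ∀ n, Integrable (fun ω => (θhat n ω - θ) * σhat2 n ω / θhat n ω
        - (σ2*(θhat n ω - θ)/θ + (θhat n ω - θ)*(σhat2 n ω - σ2)/θ
          - σ2*(θhat n ω - θ)^2/θ^2)) μ := fun n => (ig n).sub (icomb n)
    have iBnum : ∀ n, Integrable (fun ω =>
        ((θhat n ω - θ)^4 + (σhat2 n ω - σ2)^2)/2
        + (σ2 * |θhat n ω - θ|^3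
            + ((θhat n ω - θ)^6 + (σhat2 n ω - σ2)^2)/2)/ε) μ := fun n =>
      (((iΔ4 n).add (iS2 n)).div_const 2).add
        ((((hmomθ n 3).const_mul σ2).add (((iΔ6 n).add (iS2 n)).div_const 2)).div_const ε)
    have iBfun : ∀ n, Integrable (fun ω =>
        (((θhat n ω - θ)^4 + (σhat2 n ω - σ2)^2)/2
        + (σ2 * |θhat n ω - θ|^3
            + ((θhat n ω - θ)^6 + (σhat2 n ω - σ2)^2)/2)/ε)/θ^2) μ := fun n =>
      (iBnum n).div_const (θ^2)
    have intB : ∀ n : ℕ, (∫ ω, ((((θhat n ω - θ)^4 + (σhat2 n ω - σ2)^2)/2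
        + (σ2 * |θhat n ω - θ|^3
            + ((θhat n ω - θ)^6 + (σhat2 n ω - σ2)^2)/2)/ε)/θ^2) ∂μ)
        = (((∫ ω, (θhat n ω - θ)^4 ∂μ) + ∫ ω, (σhat2 n ω - σ2)^2 ∂μ)/2
          + (σ2 * (∫ ω, |θhat n ω - θ|^3 ∂μ)
            + ((∫ ω, (θhat n ω - θ)^6 ∂μ) + ∫ ω, (σhat2 n ω - σ2)^2 ∂μ)/2)/ε)/θ^2 := by
      intro n
      have k1 : Integrable (fun ω => ((θhat n ω - θ)^4 + (σhat2 n ω - σ2)^2)/2) μ :=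
        ((iΔ4 n).add (iS2 n)).div_const 2
      have k2 : Integrable (fun ω => (σ2 * |θhat n ω - θ|^3
          + ((θhat n ω - θ)^6 + (σhat2 n ω - σ2)^2)/2)/ε) μ :=
        (((hmomθ n 3).const_mul σ2).add (((iΔ6 n).add (iS2 n)).div_const 2)).div_const ε
      have k3 : Integrable (fun ω => ((θhat n ω - θ)^6 + (σhat2 n ω - σ2)^2)/2) μ :=
        ((iΔ6 n).add (iS2 n)).div_const 2
      rw [integral_div, integral_add k1 k2, integral_div, integral_div,
        integral_add (iΔ4 n) (iS2 n),
        integral_add ((hmomθ n 3).const_mul σ2) k3, integral_div,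
        integral_add (iΔ6 n) (iS2 n), integral_const_mul]
    have tB : Tendsto (fun n : ℕ => (n:ℝ) *
        ∫ ω, ((((θhat n ω - θ)^4 + (σhat2 n ω - σ2)^2)/2
        + (σ2 * |θhat n ω - θ|^3
            + ((θhat n ω - θ)^6 + (σhat2 n ω - σ2)^2)/2)/ε)/θ^2) ∂μ) atTop (nhds 0) := by
      have tnum := ((((tΔ4.add tS2O).div_const 2).add
        (((tΔ3.const_mul σ2).add ((tΔ6.add tS2O).div_const 2)).div_const ε)).div_const (θ^2))
      have hval : (((0:ℝ) + 0)/2 + (σ2*0 + (0+0)/2)/ε)/θ^2 = 0 := by norm_num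
      rw [hval] at tnum
      refine tnum.congr fun n => ?_
      rw [intB n]
      ring
    have tr : Tendsto (fun n : ℕ => (n:ℝ) *
        ∫ ω, ((θhat n ω - θ) * σhat2 n ω / θhat n ω
          - (σ2*(θhat n ω - θ)/θ + (θhat n ω - θ)*(σhat2 n ω - σ2)/θ
            - σ2*(θhat n ω - θ)^2/θ^2)) ∂μ) atTop (nhds 0) := by
      refine squeeze_zero_norm (fun n => ?_) tB
      rw [norm_mul, Real.norm_eq_abs ((n:ℝ)), abs_of_nonneg (Nat.cast_nonneg n)]
      refine mul_le_mul_of_nonneg_left ?_ (Nat.cast_nonneg n)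
      refine (norm_integral_le_integral_norm _).trans ?_
      refine integral_mono_ae (ir n).norm (iBfun n) ?_
      filter_upwards [hA4 n] with ω hω
      have hth : θhat n ω ≠ 0 := by
        intro h; rw [h] at hω; simp at hω; linarith
      have hid : (θhat n ω - θ) * σhat2 n ω / θhat n ω
          - (σ2*(θhat n ω - θ)/θ + (θhat n ω - θ)*(σhat2 n ω - σ2)/θ
            - σ2*(θhat n ω - θ)^2/θ^2)
          = (-((θhat n ω - θ)^2*(σhat2 n ω - σ2))
            + (σ2*(θhat n ω - θ)^3 + (θhat n ω - θ)^3*(σhat2 n ω - σ2))/θhat n ω)/θ^2 := by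
        field_simp
        ring
      rw [Real.norm_eq_abs, hid, abs_div, abs_of_nonneg (sq_nonneg θ)]
      gcongr
      refine (abs_add_le _ _).trans (add_le_add ?_ ?_)
      · rw [abs_neg, abs_mul, abs_of_nonneg (sq_nonneg (θhat n ω - θ))]
        nlinarith [sq_nonneg ((θhat n ω - θ)^2 - |σhat2 n ω - σ2|),
          sq_abs (σhat2 n ω - σ2), abs_nonneg (σhat2 n ω - σ2)]
      · rw [abs_div]
        refine div_le_div₀ (by positivity) ?_ hε hω
        refine (abs_add_le _ _).trans (add_le_add ?_ ?_)
        · rw [abs_mul, abs_of_pos hσ2, abs_pow]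
        · rw [abs_mul, abs_pow]
          have he6 : |θhat n ω - θ|^6 = (θhat n ω - θ)^6 := habs _ 6 (by decide)
          nlinarith [sq_nonneg (|θhat n ω - θ|^3 - |σhat2 n ω - σ2|),
            sq_abs (σhat2 n ω - σ2), abs_nonneg (σhat2 n ω - σ2),
            abs_nonneg (θhat n ω - θ)]
    have splitg : ∀ n : ℕ, (∫ ω, (θhat n ω - θ) * σhat2 n ω / θhat n ω ∂μ)
        = σ2*(∫ ω, (θhat n ω - θ) ∂μ)/θ
          + (∫ ω, (θhat n ω - θ)*(σhat2 n ω - σ2) ∂μ)/θ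
          - σ2*(∫ ω, (θhat n ω - θ)^2 ∂μ)/θ^2
          + ∫ ω, ((θhat n ω - θ) * σhat2 n ω / θhat n ω
            - (σ2*(θhat n ω - θ)/θ + (θhat n ω - θ)*(σhat2 n ω - σ2)/θ
              - σ2*(θhat n ω - θ)^2/θ^2)) ∂μ := by
      intro n
      have e1 : (∫ ω, (θhat n ω - θ) * σhat2 n ω / θhat n ω ∂μ)
          = ∫ ω, ((σ2*(θhat n ω - θ)/θ + (θhat n ω - θ)*(σhat2 n ω - σ2)/θ
              - σ2*(θhat n ω - θ)^2/θ^2)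
            + ((θhat n ω - θ) * σhat2 n ω / θhat n ω
              - (σ2*(θhat n ω - θ)/θ + (θhat n ω - θ)*(σhat2 n ω - σ2)/θ
                - σ2*(θhat n ω - θ)^2/θ^2))) ∂μ := by
        refine integral_congr_ae (Eventually.of_forall fun ω => ?_)
        ring
      have iAB : Integrable (fun ω => σ2*(θhat n ω - θ)/θ
          + (θhat n ω - θ)*(σhat2 n ω - σ2)/θ) μ := (iA n).add (iB' n)
      rw [e1, integral_add (icomb n) (ir n), integral_sub iAB (iC n),
        integral_add (iA n) (iB' n), integral_div, integral_div, integral_div,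
        integral_const_mul, integral_const_mul]
    have tmain := ((((tΔ1.const_mul σ2).div_const θ).add (tΔS.div_const θ)).sub
      ((hA11.const_mul σ2).div_const (θ^2))).add tr
    have hval2 : σ2*0/θ + 0/θ - σ2*σ2/θ^2 + 0 = -(σ2^2/θ^2) := by ring
    rw [hval2] at tmain
    refine tmain.congr fun n => ?_
    rw [splitg n]
    ring
  -- sub-goal B
  have th : Tendsto (fun n : ℕ => ∫ ω, (σhat2 n ω / θhat n ω)^2 ∂μ) atTop
      (nhds (σ2^2/θ^2)) := by
    have hθ2pos : (0:ℝ) < θ^2 := by positivity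
    have iB2 : ∀ n, Integrable (fun ω =>
        (2*σ2* |σhat2 n ω - σ2| + (σhat2 n ω - σ2)^2)/ε^2
        + σ2^2*(2* |θ| * |θhat n ω - θ| + (θhat n ω - θ)^2)/(ε^2*θ^2)) μ := fun n =>
      ((((iS n).abs.const_mul (2*σ2)).add (iS2 n)).div_const _).add
        (((((iΔ n).abs.const_mul (2* |θ|)).add (iΔ2 n)).const_mul (σ2^2)).div_const _)
    have intB2 : ∀ n, (∫ ω, ((2*σ2* |σhat2 n ω - σ2| + (σhat2 n ω - σ2)^2)/ε^2
        + σ2^2*(2* |θ| * |θhat n ω - θ| + (θhat n ω - θ)^2)/(ε^2*θ^2)) ∂μ)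
        = (2*σ2*(∫ ω, |σhat2 n ω - σ2| ∂μ) + ∫ ω, (σhat2 n ω - σ2)^2 ∂μ)/ε^2
          + σ2^2*(2* |θ| *(∫ ω, |θhat n ω - θ| ∂μ) + ∫ ω, (θhat n ω - θ)^2 ∂μ)/(ε^2*θ^2) := by
      intro n
      have j1 : Integrable (fun ω => 2*σ2 * |σhat2 n ω - σ2| + (σhat2 n ω - σ2)^2) μ :=
        ((iS n).abs.const_mul (2*σ2)).add (iS2 n)
      have j2 : Integrable (fun ω => 2 * |θ| * |θhat n ω - θ| + (θhat n ω - θ)^2) μ :=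
        ((iΔ n).abs.const_mul (2 * |θ|)).add (iΔ2 n)
      have i1 : Integrable (fun ω =>
          (2*σ2 * |σhat2 n ω - σ2| + (σhat2 n ω - σ2)^2)/ε^2) μ := j1.div_const _
      have i2 : Integrable (fun ω =>
          σ2^2*(2 * |θ| * |θhat n ω - θ| + (θhat n ω - θ)^2)/(ε^2*θ^2)) μ :=
        (j2.const_mul (σ2^2)).div_const _
      rw [integral_add i1 i2, integral_div, integral_div, integral_const_mul,
        integral_add ((iS n).abs.const_mul (2*σ2)) (iS2 n),
        integral_add ((iΔ n).abs.const_mul (2 * |θ|)) (iΔ2 n),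
        integral_const_mul, integral_const_mul]
    have tB2 : Tendsto (fun n : ℕ =>
        (2*σ2*(∫ ω, |σhat2 n ω - σ2| ∂μ) + ∫ ω, (σhat2 n ω - σ2)^2 ∂μ)/ε^2
          + σ2^2*(2* |θ| *(∫ ω, |θhat n ω - θ| ∂μ) + ∫ ω, (θhat n ω - θ)^2 ∂μ)/(ε^2*θ^2))
        atTop (nhds 0) := by
      have := (((tSa.const_mul (2*σ2)).add tS2').div_const (ε^2)).add
        ((((tΔa.const_mul (2* |θ|)).add tΔ2').const_mul (σ2^2)).div_const (ε^2*θ^2))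
      simpa using this
    have hdiff : Tendsto (fun n : ℕ =>
        ∫ ω, ((σhat2 n ω / θhat n ω)^2 - σ2^2/θ^2) ∂μ) atTop (nhds 0) := by
      refine squeeze_zero_norm (fun n => ?_) (tB2.congr fun n => (intB2 n).symm)
      have ihc : Integrable (fun ω => (σhat2 n ω / θhat n ω)^2 - σ2^2/θ^2) μ :=
        (ih n).sub (integrable_const _)
      refine (norm_integral_le_integral_norm _).trans ?_
      refine integral_mono_ae ihc.norm (iB2 n) ?_
      filter_upwards [hA4 n] with ω hω
      have hth : θhat n ω ≠ 0 := by
        intro h; rw [h] at hω; simp at hω; linarith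
      have hε2 : ε^2 ≤ (θhat n ω)^2 := by
        calc ε^2 ≤ |θhat n ω|^2 := by nlinarith [abs_nonneg (θhat n ω)]
          _ = _ := sq_abs _
      have hid : (σhat2 n ω / θhat n ω)^2 - σ2^2/θ^2
          = (2*σ2*(σhat2 n ω - σ2) + (σhat2 n ω - σ2)^2)/(θhat n ω)^2
            + σ2^2*(θ^2 - (θhat n ω)^2)/((θhat n ω)^2*θ^2) := by
        field_simp
        ring
      rw [Real.norm_eq_abs, hid]
      refine (abs_add_le _ _).trans (add_le_add ?_ ?_)
      · rw [abs_div, abs_of_nonneg (sq_nonneg (θhat n ω))]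
        refine div_le_div₀ (by positivity) ?_ (by positivity) hε2
        refine (abs_add_le _ _).trans ?_
        rw [abs_mul, abs_of_nonneg (by positivity : (0:ℝ) ≤ 2*σ2),
          abs_of_nonneg (sq_nonneg (σhat2 n ω - σ2))]
      · rw [abs_div, abs_mul, abs_of_nonneg (sq_nonneg σ2),
          abs_of_nonneg (mul_nonneg (sq_nonneg (θhat n ω)) (sq_nonneg θ))]
        refine div_le_div₀ (by positivity) ?_ (by positivity)
          (mul_le_mul_of_nonneg_right hε2 (sq_nonneg θ))
        refine mul_le_mul_of_nonneg_left ?_ (sq_nonneg σ2)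
        have e : θ^2 - (θhat n ω)^2
            = -(2*θ*(θhat n ω - θ) + (θhat n ω - θ)^2) := by ring
        rw [e, abs_neg]
        refine (abs_add_le _ _).trans ?_
        rw [abs_mul, abs_mul, abs_two, abs_of_nonneg (sq_nonneg (θhat n ω - θ))]
    have h1 : Tendsto (fun n : ℕ =>
        (∫ ω, (σhat2 n ω / θhat n ω)^2 ∂μ) - σ2^2/θ^2) atTop (nhds 0) := by
      refine hdiff.congr fun n => ?_
      rw [integral_sub (ih n) (integrable_const _), integral_const, probReal_univ,
        one_smul]
    have := h1.add_const (σ2^2/θ^2)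
    simpa using this
  -- integral splitting
  have key : ∀ n : ℕ, 1 ≤ n →
      (∫ ω, (θhat n ω + k * σhat2 n ω / ((n : ℝ) * θhat n ω) - θ) ^ 2 ∂μ)
        = (∫ ω, (θhat n ω - θ) ^ 2 ∂μ)
          + (2*k/(n:ℝ)) * ∫ ω, (θhat n ω - θ) * σhat2 n ω / θhat n ω ∂μ
          + (k^2/(n:ℝ)^2) * ∫ ω, (σhat2 n ω / θhat n ω)^2 ∂μ := by
    intro n hn
    have hn0 : (n:ℝ) ≠ 0 := Nat.cast_ne_zero.2 (by omega)
    have hcongr : ∫ ω, (θhat n ω + k * σhat2 n ω / ((n : ℝ) * θhat n ω) - θ) ^ 2 ∂μ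
        = ∫ ω, ((θhat n ω - θ)^2 + (2*k/(n:ℝ)) * ((θhat n ω - θ) * σhat2 n ω / θhat n ω)
            + (k^2/(n:ℝ)^2) * ((σhat2 n ω / θhat n ω)^2)) ∂μ := by
      refine integral_congr_ae ?_
      filter_upwards [hA4 n] with ω hω
      have hth : θhat n ω ≠ 0 := by
        intro h; rw [h] at hω; simp at hω; linarith
      field_simp
      ring
    have igc : Integrable (fun ω => (2*k/(n:ℝ)) * ((θhat n ω - θ) * σhat2 n ω / θhat n ω)) μ :=
      (ig n).const_mul _
    have ihc : Integrable (fun ω => (k^2/(n:ℝ)^2) * ((σhat2 n ω / θhat n ω)^2)) μ :=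
      (ih n).const_mul _
    have i12 : Integrable (fun ω => (θhat n ω - θ)^2
        + (2*k/(n:ℝ)) * ((θhat n ω - θ) * σhat2 n ω / θhat n ω)) μ := (iΔ2 n).add igc
    rw [hcongr, integral_add i12 ihc, integral_add (iΔ2 n) igc, integral_const_mul,
      integral_const_mul]
  -- assembly
  rw [isLittleO_iff_tendsto']
  · have hlim := ((tg.const_mul (2*k)).add (th.const_mul (k^2))).sub_const
      ((k^2 - 2*k) * σ2^2 / θ^2)
    have hval : 2*k * -(σ2^2/θ^2) + k^2 * (σ2^2/θ^2) - (k^2 - 2*k) * σ2^2 / θ^2 = 0 := by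
      field_simp; ring
    rw [hval] at hlim
    refine hlim.congr' ?_
    filter_upwards [eventually_ge_atTop 1] with n hn
    have hn0 : (n:ℝ) ≠ 0 := Nat.cast_ne_zero.2 (by omega)
    rw [key n hn]
    field_simp
    ring
  · filter_upwards [eventually_ge_atTop 1] with n hn h0
    exact absurd h0 (by positivity)
end
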